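/- arXiv:1105.4122 — 5 statements merged into one kernel-verified Lean document; each statement's English description precedes it below -/
import Mathlib

section
/- Let Y be a Tychonoff space and X ⊆ Y a subspace. The following are equivalent: (i) there exists a continuous (i.e. both lower and upper semicontinuous) compact-valued set-valued map r : Y → βX with r(x) = {η(x)} for all x ∈ X; (ii) there exists an extender u : C*(X) → C*(Y) which is normed, weakly additive, preserves min and weakly preserves max; (iii) there exists an extender u : C*(X) → C*(Y) which is normed, weakly additive, preserves max and weakly preserves min. -/
open Set BoundedContinuousFunction

namespace Statement14Aux

variable {Z : Type*} [TopologicalSpace Z]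

private lemma mem_Icc_of_bcf (f : BoundedContinuousFunction Z ℝ) (z : Z) :
    f z ∈ Icc (-‖f‖) ‖f‖ := by
  have h := f.norm_coe_le_norm z
  rw [Real.norm_eq_abs] at h
  exact ⟨(abs_le.mp h).1, (abs_le.mp h).2⟩

/-- Stone–Čech extension of a bounded continuous real function. -/
noncomputable def extR (f : BoundedContinuousFunction Z ℝ) : StoneCech Z → ℝ :=
  Subtype.val ∘ stoneCechExtend (f.continuous.subtype_mk (mem_Icc_of_bcf f))

lemma extR_continuous (f : BoundedContinuousFunction Z ℝ) : Continuous (extR f) :=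
  continuous_subtype_val.comp (continuous_stoneCechExtend _)

lemma extR_unit (f : BoundedContinuousFunction Z ℝ) (z : Z) :
    extR f (stoneCechUnit z) = f z := by
  have := congrFun (stoneCechExtend_extends (f.continuous.subtype_mk (mem_Icc_of_bcf f))) z
  exact congrArg Subtype.val this

lemma extR_eq (f : BoundedContinuousFunction Z ℝ) (F : StoneCech Z → ℝ)
    (hF : Continuous F) (h : ∀ z, F (stoneCechUnit z) = f z) : F = extR f :=
  stoneCech_hom_ext hF (extR_continuous f)
    (funext fun z => (h z).trans (extR_unit f z).symm)

lemma extR_prop (f : BoundedContinuousFunction Z ℝ) {P : ℝ → Prop}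
    (hP : IsClosed {x | P x}) (h : ∀ z, P (f z)) (p : StoneCech Z) : P (extR f p) := by
  have hS : IsClosed (extR f ⁻¹' {x | P x}) := hP.preimage (extR_continuous f)
  have hsub : range (stoneCechUnit : Z → StoneCech Z) ⊆ extR f ⁻¹' {x | P x} := by
    rintro _ ⟨z, rfl⟩
    simpa [extR_unit] using h z
  have hd : Dense (range (stoneCechUnit : Z → StoneCech Z)) := denseRange_stoneCechUnit
  have : closure (range (stoneCechUnit : Z → StoneCech Z)) ⊆ extR f ⁻¹' {x | P x} :=
    hS.closure_subset_iff.mpr hsub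
  exact this (hd p)

lemma le_extR (f : BoundedContinuousFunction Z ℝ) {c : ℝ} (h : ∀ z, c ≤ f z)
    (p : StoneCech Z) : c ≤ extR f p :=
  extR_prop f (P := fun x => c ≤ x) isClosed_Ici h p

lemma extR_le (f : BoundedContinuousFunction Z ℝ) {c : ℝ} (h : ∀ z, f z ≤ c)
    (p : StoneCech Z) : extR f p ≤ c :=
  extR_prop f (P := fun x => x ≤ c) isClosed_Iic h p

lemma abs_extR_le (f : BoundedContinuousFunction Z ℝ) (p : StoneCech Z) :
    |extR f p| ≤ ‖f‖ :=
  abs_le.mpr ⟨le_extR f (fun z => (mem_Icc_of_bcf f z).1) p,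
    extR_le f (fun z => (mem_Icc_of_bcf f z).2) p⟩

lemma extR_inf (f g : BoundedContinuousFunction Z ℝ) :
    extR (f ⊓ g) = fun p => extR f p ⊓ extR g p := by
  refine (extR_eq _ _ ((extR_continuous f).inf (extR_continuous g)) fun z => ?_).symm
  simp [extR_unit]

lemma extR_add_const (f : BoundedContinuousFunction Z ℝ) (c : ℝ) :
    extR (f + const Z c) = fun p => extR f p + c := by
  refine (extR_eq _ _ ((extR_continuous f).add continuous_const) fun z => ?_).symm
  simp [extR_unit]

lemma extR_sup_const (f : BoundedContinuousFunction Z ℝ) (c : ℝ) :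
    extR (f ⊔ const Z c) = fun p => extR f p ⊔ c := by
  refine (extR_eq _ _ ((extR_continuous f).sup continuous_const) fun z => ?_).symm
  simp [extR_unit]

lemma extR_one : extR (1 : BoundedContinuousFunction Z ℝ) = fun _ => 1 := by
  refine (extR_eq _ _ continuous_const fun z => ?_).symm
  simp


set_option linter.unusedSectionVars false
set_option maxHeartbeats 1000000

variable {W : Type*} [TopologicalSpace W]

noncomputable def minFun (r : W → Set (StoneCech Z)) (f : BoundedContinuousFunction Z ℝ)
    (w : W) : ℝ :=
  sInf (extR f '' r w)

lemma minFun_isLeast {r : W → Set (StoneCech Z)}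
    (h1 : ∀ w, (r w).Nonempty ∧ IsCompact (r w)) (f : BoundedContinuousFunction Z ℝ) (w : W) :
    IsLeast (extR f '' r w) (minFun r f w) := by
  have hc : IsCompact (extR f '' r w) := (h1 w).2.image (extR_continuous f)
  have hn : (extR f '' r w).Nonempty := (h1 w).1.image _
  exact ⟨hc.sInf_mem hn, fun x hx => csInf_le hc.bddBelow hx⟩

lemma abs_minFun_le {r : W → Set (StoneCech Z)}
    (h1 : ∀ w, (r w).Nonempty ∧ IsCompact (r w)) (f : BoundedContinuousFunction Z ℝ) (w : W) :
    |minFun r f w| ≤ ‖f‖ := by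
  obtain ⟨p, -, hp⟩ := (minFun_isLeast h1 f w).1
  rw [← hp]; exact abs_extR_le f p

lemma minFun_continuous {r : W → Set (StoneCech Z)}
    (h1 : ∀ w, (r w).Nonempty ∧ IsCompact (r w))
    (h2 : ∀ U : Set (StoneCech Z), IsOpen U → IsOpen {w | (r w ∩ U).Nonempty})
    (h3 : ∀ U : Set (StoneCech Z), IsOpen U → IsOpen {w | r w ⊆ U})
    (f : BoundedContinuousFunction Z ℝ) : Continuous (minFun r f) := by
  rw [continuous_iff_continuousAt]
  intro w0
  rw [ContinuousAt, Metric.tendsto_nhds]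
  intro ε hε
  set m0 := minFun r f w0 with hm0
  obtain ⟨p0, hp0mem, hp0val⟩ := (minFun_isLeast h1 f w0).1
  have o1 : IsOpen {w | (r w ∩ {p | extR f p < m0 + ε}).Nonempty} :=
    h2 _ (isOpen_lt (extR_continuous f) continuous_const)
  have o2 : IsOpen {w | r w ⊆ {p | m0 - ε < extR f p}} :=
    h3 _ (isOpen_lt continuous_const (extR_continuous f))
  have mem1 : w0 ∈ {w | (r w ∩ {p | extR f p < m0 + ε}).Nonempty} :=
    ⟨p0, hp0mem, by simp only [mem_setOf_eq, hp0val]; linarith⟩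
  have mem2 : w0 ∈ {w | r w ⊆ {p | m0 - ε < extR f p}} := by
    intro p hp
    have := (minFun_isLeast h1 f w0).2 ⟨p, hp, rfl⟩
    simp only [mem_setOf_eq]; linarith
  filter_upwards [(o1.inter o2).mem_nhds ⟨mem1, mem2⟩] with w hw
  obtain ⟨⟨p1, hp1mem, hp1lt⟩, hw2⟩ := hw
  have hub : minFun r f w < m0 + ε :=
    lt_of_le_of_lt ((minFun_isLeast h1 f w).2 ⟨p1, hp1mem, rfl⟩) hp1lt
  have hlb : m0 - ε < minFun r f w := by
    obtain ⟨p2, hp2mem, hp2val⟩ := (minFun_isLeast h1 f w).1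
    rw [← hp2val]; exact hw2 hp2mem
  rw [Real.dist_eq, abs_sub_lt_iff]
  constructor <;> linarith

noncomputable def minBCF {r : W → Set (StoneCech Z)}
    (h1 : ∀ w, (r w).Nonempty ∧ IsCompact (r w))
    (h2 : ∀ U : Set (StoneCech Z), IsOpen U → IsOpen {w | (r w ∩ U).Nonempty})
    (h3 : ∀ U : Set (StoneCech Z), IsOpen U → IsOpen {w | r w ⊆ U})
    (f : BoundedContinuousFunction Z ℝ) : BoundedContinuousFunction W ℝ :=
  ⟨⟨minFun r f, minFun_continuous h1 h2 h3 f⟩, ⟨2 * ‖f‖, fun w w' => by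
    have := abs_minFun_le h1 f w
    have := abs_minFun_le h1 f w'
    rw [Real.dist_eq]
    have : |minFun r f w - minFun r f w'| ≤ |minFun r f w| + |minFun r f w'| :=
      abs_sub _ _
    linarith⟩⟩

lemma minBCF_apply {r : W → Set (StoneCech Z)} (h1) (h2) (h3)
    (f : BoundedContinuousFunction Z ℝ) (w : W) :
    minBCF (r := r) h1 h2 h3 f w = minFun r f w := rfl


section MinFacts
variable {r : W → Set (StoneCech Z)} (h1 : ∀ w, (r w).Nonempty ∧ IsCompact (r w))
include h1

lemma minFun_one (w : W) : minFun r (1 : BoundedContinuousFunction Z ℝ) w = 1 := by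
  obtain ⟨p, -, hp⟩ := (minFun_isLeast h1 1 w).1
  rw [← hp, extR_one]

lemma minFun_add_const (f : BoundedContinuousFunction Z ℝ) (c : ℝ) (w : W) :
    minFun r (f + const Z c) w = minFun r f w + c := by
  have L := minFun_isLeast h1 f w
  have L' := minFun_isLeast h1 (f + const Z c) w
  apply le_antisymm
  · obtain ⟨p, hpm, hp⟩ := L.1
    have := L'.2 ⟨p, hpm, rfl⟩
    rw [extR_add_const] at this
    simp only at this
    linarith [this, hp.le, hp.ge]
  · obtain ⟨p, hpm, hp⟩ := L'.1
    rw [extR_add_const] at hp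
    simp only at hp
    have := L.2 ⟨p, hpm, rfl⟩
    linarith

lemma minFun_inf (f g : BoundedContinuousFunction Z ℝ) (w : W) :
    minFun r (f ⊓ g) w = minFun r f w ⊓ minFun r g w := by
  have Lf := minFun_isLeast h1 f w
  have Lg := minFun_isLeast h1 g w
  have L' := minFun_isLeast h1 (f ⊓ g) w
  apply le_antisymm
  · rcases le_total (minFun r f w) (minFun r g w) with hle | hle
    · rw [inf_eq_left.mpr hle]
      obtain ⟨p, hpm, hp⟩ := Lf.1
      refine le_trans (L'.2 ⟨p, hpm, rfl⟩) ?_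
      rw [extR_inf]; simp only
      rw [hp]; exact inf_le_left
    · rw [inf_eq_right.mpr hle]
      obtain ⟨p, hpm, hp⟩ := Lg.1
      refine le_trans (L'.2 ⟨p, hpm, rfl⟩) ?_
      rw [extR_inf]; simp only
      rw [hp]; exact inf_le_right
  · obtain ⟨p, hpm, hp⟩ := L'.1
    rw [← hp, extR_inf]
    exact inf_le_inf (Lf.2 ⟨p, hpm, rfl⟩) (Lg.2 ⟨p, hpm, rfl⟩)

lemma minFun_sup_const (f : BoundedContinuousFunction Z ℝ) (c : ℝ) (w : W) :
    minFun r (f ⊔ const Z c) w = minFun r f w ⊔ c := by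
  have Lf := minFun_isLeast h1 f w
  have L' := minFun_isLeast h1 (f ⊔ const Z c) w
  apply le_antisymm
  · obtain ⟨p, hpm, hp⟩ := Lf.1
    refine le_trans (L'.2 ⟨p, hpm, rfl⟩) ?_
    rw [extR_sup_const]; simp only
    exact sup_le_sup_right hp.le c
  · obtain ⟨p, hpm, hp⟩ := L'.1
    rw [← hp, extR_sup_const]
    exact sup_le_sup_right (Lf.2 ⟨p, hpm, rfl⟩) c

omit h1 in
lemma minFun_singleton (f : BoundedContinuousFunction Z ℝ) {w : W} {z : Z}
    (hw : r w = {stoneCechUnit z}) : minFun r f w = f z := by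
  rw [minFun, hw, image_singleton, csInf_singleton, extR_unit]


end MinFacts

lemma bcf_le_iff {α : Type*} [TopologicalSpace α] {f g : α →ᵇ ℝ} :
    f ≤ g ↔ ∀ x, f x ≤ g x := Iff.rfl


noncomputable def bcfComp (F : C(StoneCech Z, ℝ)) (hF01 : ∀ p, F p ∈ Icc (0:ℝ) 1) :
    BoundedContinuousFunction Z ℝ :=
  ⟨⟨fun z => F (stoneCechUnit z), F.continuous.comp continuous_stoneCechUnit⟩, ⟨1, fun z z' => by
    rw [Real.dist_eq, abs_sub_le_iff]
    constructor <;>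
      [linarith [(hF01 (stoneCechUnit z)).1, (hF01 (stoneCechUnit z)).2,
        (hF01 (stoneCechUnit z')).1, (hF01 (stoneCechUnit z')).2];
       linarith [(hF01 (stoneCechUnit z)).1, (hF01 (stoneCechUnit z)).2,
        (hF01 (stoneCechUnit z')).1, (hF01 (stoneCechUnit z')).2]]⟩⟩

lemma extR_bcfComp (F : C(StoneCech Z, ℝ)) (hF01 : ∀ p, F p ∈ Icc (0:ℝ) 1) :
    extR (bcfComp F hF01) = F :=
  (extR_eq _ _ F.continuous fun _ => rfl).symm

lemma bcfComp_apply (F : C(StoneCech Z, ℝ)) (hF01 : ∀ p, F p ∈ Icc (0:ℝ) 1) (z : Z) :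
    bcfComp F hF01 z = F (stoneCechUnit z) := rfl


variable {W : Type*} [TopologicalSpace W]

lemma backward [Nonempty Z] (u : BoundedContinuousFunction Z ℝ → BoundedContinuousFunction W ℝ)
    (hnorm : u 1 = 1)
    (hadd : ∀ (f : BoundedContinuousFunction Z ℝ) (c : ℝ),
      u (f + const Z c) = u f + const W c)
    (hinf : ∀ f g : BoundedContinuousFunction Z ℝ, u (f ⊓ g) = u f ⊓ u g)
    (hsup : ∀ (f : BoundedContinuousFunction Z ℝ) (c : ℝ),
      u (f ⊔ const Z c) = u f ⊔ const W c)
    (e : Z → W) (hext : ∀ (f : BoundedContinuousFunction Z ℝ) (z : Z), u f (e z) = f z) :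
    ∃ r : W → Set (StoneCech Z),
      (∀ w, (r w).Nonempty ∧ IsCompact (r w)) ∧
      (∀ U : Set (StoneCech Z), IsOpen U → IsOpen {w | (r w ∩ U).Nonempty}) ∧
      (∀ U : Set (StoneCech Z), IsOpen U → IsOpen {w | r w ⊆ U}) ∧
      (∀ z : Z, r (e z) = {stoneCechUnit z}) := by
  -- basic consequences
  have umono : ∀ f g : BoundedContinuousFunction Z ℝ, f ≤ g → u f ≤ u g := by
    intro f g hle
    have h1 : u (f ⊓ g) = u f ⊓ u g := hinf f g
    rw [inf_eq_left.mpr hle] at h1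
    rw [h1]; exact inf_le_right
  have uzero : u 0 = 0 := by
    have h10 : (1 : BoundedContinuousFunction Z ℝ) + const Z (-1) = 0 := by
      ext z; simp
    calc u 0 = u (1 + const Z (-1)) := by rw [h10]
    _ = u 1 + const W (-1) := hadd 1 (-1)
    _ = 1 + const W (-1) := by rw [hnorm]
    _ = 0 := by ext w; simp
  have uconst : ∀ c : ℝ, u (const Z c) = const W c := by
    intro c
    have h0c : (0 : BoundedContinuousFunction Z ℝ) + const Z c = const Z c := by ext z; simp
    calc u (const Z c) = u (0 + const Z c) := by rw [h0c]
    _ = u 0 + const W c := hadd 0 c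
    _ = const W c := by rw [uzero]; ext w; simp
  -- the key approximation lemma
  have key : ∀ (w : W) (f0 h : BoundedContinuousFunction Z ℝ), u h w = 0 →
      ∃ p, extR f0 p ≤ u f0 w ∧ 0 ≤ extR h p := by
    intro w f0 h hφ
    by_contra hcon
    push_neg at hcon
    -- hcon : ∀ p, extR f0 p ≤ u f0 w → extR h p < 0
    set a := u f0 w with ha
    -- Step A
    have hAclosed : IsClosed {p | 0 ≤ extR h p} :=
      isClosed_le continuous_const (extR_continuous h)
    have hAne : {p | 0 ≤ extR h p}.Nonempty := by
      by_contra hA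
      rw [not_nonempty_iff_eq_empty] at hA
      have hneg : ∀ p, extR h p < 0 := by
        intro p
        by_contra hge
        have hmem : p ∈ {p | 0 ≤ extR h p} := not_lt.mp hge
        rw [hA] at hmem
        exact hmem
      haveI : Nonempty (StoneCech Z) := Nonempty.map stoneCechUnit ‹Nonempty Z›
      obtain ⟨pm, -, hpm⟩ :=
        isCompact_univ.exists_isMaxOn univ_nonempty (extR_continuous h).continuousOn
      have hε : 0 < -(extR h pm) := by linarith [hneg pm]
      have hle : h ≤ const Z (extR h pm) := by
        rw [bcf_le_iff]
        intro z
        have := hpm (mem_univ (stoneCechUnit z))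
        simpa [extR_unit] using this
      have h3 := umono _ _ hle
      rw [uconst] at h3
      have h2 : u h w ≤ const W (extR h pm) w := h3 w
      rw [hφ] at h2
      simp only [const_apply] at h2
      linarith
    have hAcpt : IsCompact {p | 0 ≤ extR h p} := hAclosed.isCompact
    obtain ⟨q, hqA, hqmin⟩ :=
      hAcpt.exists_isMinOn hAne (extR_continuous f0).continuousOn
    have hqgt : a < extR f0 q := by
      by_contra hle
      exact absurd hqA (by simpa using (hcon q (not_lt.mp hle)).not_ge)
    set ε := extR f0 q - a with hεdef
    have hεpos : 0 < ε := by linarith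
    have hA_ge : ∀ p, 0 ≤ extR h p → a + ε ≤ extR f0 p := by
      intro p hp
      have := hqmin hp
      simp only [mem_setOf_eq] at this ⊢
      linarith [this]
    -- Step B
    have hA'closed : IsClosed {p | extR f0 p ≤ a + ε / 2} :=
      isClosed_le (extR_continuous f0) continuous_const
    have hA'ne : {p | extR f0 p ≤ a + ε / 2}.Nonempty := by
      by_contra hA'
      rw [not_nonempty_iff_eq_empty] at hA'
      have hgt : ∀ z : Z, a + ε / 2 ≤ f0 z := by
        intro z
        have : stoneCechUnit z ∉ {p | extR f0 p ≤ a + ε / 2} := by rw [hA']; exact notMem_empty _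
        simp only [mem_setOf_eq, extR_unit, not_le] at this
        linarith
      have hle : const Z (a + ε / 2) ≤ f0 := by rw [bcf_le_iff]; intro z; simpa using hgt z
      have h3 := umono _ _ hle
      rw [uconst] at h3
      have h2 : const W (a + ε / 2) w ≤ u f0 w := h3 w
      simp only [const_apply] at h2
      rw [← ha] at h2
      linarith
    obtain ⟨q', hq'A', hq'max⟩ :=
      hA'closed.isCompact.exists_isMaxOn hA'ne (extR_continuous h).continuousOn
    have hq'neg : extR h q' < 0 := by
      by_contra hge
      have h1 := hA_ge q' (not_lt.mp hge)
      simp only [mem_setOf_eq] at hq'A'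
      linarith
    set δ := -(extR h q') with hδdef
    have hδpos : 0 < δ := by simp only [hδdef]; linarith
    have hA'_le : ∀ p, extR f0 p ≤ a + ε / 2 → extR h p ≤ -δ := by
      intro p hp
      have := hq'max (by simpa using hp)
      simp only [mem_setOf_eq] at this
      simp only [hδdef]; linarith [this]
    -- Step C
    set ε' := min (ε / 2) δ with hε'def
    have hε'pos : 0 < ε' := lt_min (by linarith) hδpos
    have hε'le : ε' ≤ ε / 2 := min_le_left _ _
    have hε'δ : ε' ≤ δ := min_le_right _ _
    set t := ε' / δ with htdef
    have htpos : 0 < t := div_pos hε'pos hδpos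
    have htle : t ≤ 1 := (div_le_one hδpos).mpr hε'δ
    set k := ((f0 + const Z (-a)) ⊓ const Z ε') ⊔ const Z 0 with hkdef
    set h'' := (h ⊔ const Z (-δ)) ⊓ const Z 0 with hh''def
    -- u k w = 0
    have hk0 : u k w = 0 := by
      have e1 : u ((f0 + const Z (-a)) ⊓ const Z ε') w = 0 := by
        rw [hinf, hadd, uconst]
        simp only [BoundedContinuousFunction.coe_inf, Pi.inf_apply,
          BoundedContinuousFunction.add_apply, const_apply]
        rw [← ha]
        simp only [add_neg_cancel]
        exact inf_eq_left.mpr hε'pos.le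
      rw [hkdef, hsup]
      simp only [BoundedContinuousFunction.coe_sup, Pi.sup_apply, const_apply, e1]
      simp
    -- u h'' w = 0
    have hh''0 : u h'' w = 0 := by
      rw [hh''def, hinf, hsup, uconst]
      simp only [BoundedContinuousFunction.coe_inf, Pi.inf_apply,
        BoundedContinuousFunction.coe_sup, Pi.sup_apply, const_apply, hφ]
      rw [sup_eq_left.mpr (by linarith : -δ ≤ (0:ℝ))]
      simp
    -- pointwise bounds for h''
    have hh''le : ∀ z, h'' z ≤ 0 := by
      intro z
      simp only [hh''def, BoundedContinuousFunction.coe_inf, Pi.inf_apply,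
        BoundedContinuousFunction.coe_sup, Pi.sup_apply, const_apply]
      exact inf_le_right
    -- pointwise inequality : t • h'' + const ε' ≤ k
    have hptwise : t • h'' + const Z ε' ≤ k := by
      rw [bcf_le_iff]
      intro z
      simp only [BoundedContinuousFunction.add_apply, BoundedContinuousFunction.smul_apply,
        const_apply, smul_eq_mul]
      rcases le_or_gt (h z) (-δ) with hz | hz
      · have hval : h'' z = -δ := by
          simp only [hh''def, BoundedContinuousFunction.coe_inf, Pi.inf_apply,
            BoundedContinuousFunction.coe_sup, Pi.sup_apply, const_apply]
          rw [sup_eq_right.mpr hz, inf_eq_left.mpr (by linarith : -δ ≤ (0:ℝ))]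
        rw [hval]
        have : t * -δ = -ε' := by
          rw [htdef, mul_neg, div_mul_cancel₀ _ hδpos.ne']
        rw [this]
        have hk_nonneg : 0 ≤ k z := by
          simp only [hkdef, BoundedContinuousFunction.coe_sup, Pi.sup_apply,
            BoundedContinuousFunction.coe_inf, Pi.inf_apply,
            BoundedContinuousFunction.add_apply, const_apply]
          exact le_sup_right
        linarith
      · -- h z > -δ, so extR h (unit z) > -δ, so f0 z > a + ε/2
        have hf0z : a + ε / 2 < f0 z := by
          by_contra hle
          have := hA'_le (stoneCechUnit z) (by simpa [extR_unit] using not_lt.mp hle)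
          rw [extR_unit] at this
          linarith
        have hkval : k z = ε' := by
          simp only [hkdef, BoundedContinuousFunction.coe_sup, Pi.sup_apply,
            BoundedContinuousFunction.coe_inf, Pi.inf_apply,
            BoundedContinuousFunction.add_apply, const_apply]
          rw [inf_eq_right.mpr (by linarith : ε' ≤ f0 z + -a)]
          rw [sup_eq_left.mpr hε'pos.le]
        rw [hkval]
        have : t * h'' z ≤ 0 := mul_nonpos_of_nonneg_of_nonpos htpos.le (hh''le z)
        linarith
    -- h'' ≤ t • h''
    have hsmul : h'' ≤ t • h'' := by
      rw [bcf_le_iff]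
      intro z
      simp only [BoundedContinuousFunction.smul_apply, smul_eq_mul]
      nlinarith [hh''le z, htle, htpos.le]
    -- conclude
    have hc1 : u (t • h'' + const Z ε') w ≤ u k w := (umono _ _ hptwise) w
    rw [hadd, hk0] at hc1
    simp only [BoundedContinuousFunction.add_apply, const_apply,
      BoundedContinuousFunction.coe_zero, Pi.zero_apply] at hc1
    have hc2 : u h'' w ≤ u (t • h'') w := (umono _ _ hsmul) w
    rw [hh''0] at hc2
    linarith
  -- the retraction
  haveI : Nonempty (StoneCech Z) := Nonempty.map stoneCechUnit ‹Nonempty Z›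
  set K : BoundedContinuousFunction Z ℝ → W → Set (StoneCech Z) :=
    fun g w => {p | u g w ≤ extR g p} with hKdef
  have hKclosed : ∀ g w, IsClosed (K g w) := fun g w =>
    isClosed_le continuous_const (extR_continuous g)
  set r : W → Set (StoneCech Z) := fun w => ⋂ g, K g w with hrdef
  have hrclosed : ∀ w, IsClosed (r w) := fun w => isClosed_iInter fun g => hKclosed g w
  have hrmem : ∀ {w p}, p ∈ r w → ∀ g, u g w ≤ extR g p := by
    intro w p hp g
    exact mem_iInter.mp hp g
  -- attainment
  have attain : ∀ (w : W) (f0 : BoundedContinuousFunction Z ℝ),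
      ∃ p, p ∈ r w ∧ extR f0 p ≤ u f0 w := by
    intro w f0
    set D : Set (StoneCech Z) := {p | extR f0 p ≤ u f0 w} with hDdef
    have hDclosed : IsClosed D := isClosed_le (extR_continuous f0) continuous_const
    set t : BoundedContinuousFunction Z ℝ → Set (StoneCech Z) :=
      fun g => K g w ∩ D with htdef
    have htclosed : ∀ g, IsClosed (t g) := fun g => (hKclosed g w).inter hDclosed
    have htne : ∀ g, (t g).Nonempty := by
      intro g
      have hφ : u (g + const Z (-(u g w))) w = 0 := by
        rw [hadd]
        simp only [BoundedContinuousFunction.add_apply, const_apply]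
        ring
      obtain ⟨p, hp1, hp2⟩ := key w f0 (g + const Z (-(u g w))) hφ
      rw [extR_add_const] at hp2
      simp only at hp2
      refine ⟨p, ?_, hp1⟩
      have hKg := hadd g (-(u g w))
      simp only [hKdef, mem_setOf_eq]
      linarith
    have htdir : Directed (· ⊇ ·) t := by
      intro g1 g2
      set hgg := (g1 + const Z (-(u g1 w))) ⊓ (g2 + const Z (-(u g2 w))) with hggdef
      refine ⟨hgg, ?_, ?_⟩
      · intro p hp
        obtain ⟨hpK, hpD⟩ := hp
        refine ⟨?_, hpD⟩
        simp only [hKdef, mem_setOf_eq] at hpK ⊢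
        rw [hggdef] at hpK
        rw [hinf, hadd, hadd] at hpK
        rw [extR_inf, extR_add_const, extR_add_const] at hpK
        simp only [BoundedContinuousFunction.coe_inf, Pi.inf_apply,
          BoundedContinuousFunction.add_apply, const_apply] at hpK
        have h2 : (0:ℝ) ≤ extR g1 p + -(u g1 w) := by
          refine le_trans (le_of_eq ?_) (le_trans hpK inf_le_left)
          simp
        linarith
      · intro p hp
        obtain ⟨hpK, hpD⟩ := hp
        refine ⟨?_, hpD⟩
        simp only [hKdef, mem_setOf_eq] at hpK ⊢
        rw [hggdef] at hpK
        rw [hinf, hadd, hadd] at hpK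
        rw [extR_inf, extR_add_const, extR_add_const] at hpK
        simp only [BoundedContinuousFunction.coe_inf, Pi.inf_apply,
          BoundedContinuousFunction.add_apply, const_apply] at hpK
        have h2 : (0:ℝ) ≤ extR g2 p + -(u g2 w) := by
          refine le_trans (le_of_eq ?_) (le_trans hpK inf_le_right)
          simp
        linarith
    have := IsCompact.nonempty_iInter_of_directed_nonempty_isCompact_isClosed t htdir htne
      (fun g => (htclosed g).isCompact) htclosed
    obtain ⟨p, hp⟩ := this
    rw [mem_iInter] at hp
    refine ⟨p, mem_iInter.mpr fun g => (hp g).1, (hp 0).2⟩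
  refine ⟨r, ?_, ?_, ?_, ?_⟩
  · -- nonempty and compact
    intro w
    obtain ⟨p, hp, -⟩ := attain w 0
    exact ⟨⟨p, hp⟩, (hrclosed w).isCompact⟩
  · -- lower semicontinuity
    intro U hU
    rw [isOpen_iff_mem_nhds]
    intro w0 hw0
    obtain ⟨p0, hp0r, hp0U⟩ := hw0
    have hdisj : Disjoint ({p0} : Set (StoneCech Z)) Uᶜ := by
      rw [disjoint_left]
      rintro q rfl
      simp [hp0U]
    obtain ⟨F, hF0, hF1, hF01⟩ := exists_continuous_zero_one_of_isClosed
      isClosed_singleton hU.isClosed_compl hdisj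
    set f := bcfComp F hF01 with hfdef
    have hf1 : u f w0 < 1 := by
      have h1 : u f w0 ≤ extR f p0 := hrmem hp0r f
      rw [extR_bcfComp] at h1
      have h2 : F p0 = 0 := hF0 rfl
      rw [h2] at h1
      linarith
    have hVopen : IsOpen {w | u f w < 1} := isOpen_lt (u f).continuous continuous_const
    refine Filter.mem_of_superset (hVopen.mem_nhds hf1) ?_
    intro w hw
    obtain ⟨p, hpr, hple⟩ := attain w f
    refine ⟨p, hpr, ?_⟩
    by_contra hpU
    have h2 : F p = 1 := hF1 hpU
    rw [extR_bcfComp, h2] at hple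
    simp only [mem_setOf_eq] at hw
    linarith
  · -- upper semicontinuity
    intro U hU
    rw [isOpen_iff_mem_nhds]
    intro w0 hw0
    have hdisj : Disjoint (Uᶜ) (r w0) := by
      rw [disjoint_left]
      intro q hq hq2
      exact hq (hw0 hq2)
    obtain ⟨F, hF0, hF1, hF01⟩ := exists_continuous_zero_one_of_isClosed
      hU.isClosed_compl (hrclosed w0) hdisj
    set f := bcfComp F hF01 with hfdef
    have hf1 : (1:ℝ)/2 < u f w0 := by
      obtain ⟨p1, hp1r, hp1le⟩ := attain w0 f
      have h2 : F p1 = 1 := hF1 hp1r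
      rw [extR_bcfComp, h2] at hp1le
      linarith
    have hVopen : IsOpen {w | (1:ℝ)/2 < u f w} := isOpen_lt continuous_const (u f).continuous
    refine Filter.mem_of_superset (hVopen.mem_nhds hf1) ?_
    intro w hw p hp
    by_contra hpU
    have h0 : F p = 0 := hF0 hpU
    have h1 : u f w ≤ extR f p := hrmem hp f
    rw [extR_bcfComp, h0] at h1
    simp only [mem_setOf_eq] at hw
    linarith
  · -- values on Z
    intro z
    apply eq_singleton_iff_unique_mem.mpr
    constructor
    · apply mem_iInter.mpr
      intro g
      have : u g (e z) = extR g (stoneCechUnit z) := by rw [extR_unit, hext]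
      exact le_of_eq this
    · intro p hp
      by_contra hne
      have hdisj : Disjoint ({p} : Set (StoneCech Z)) ({stoneCechUnit z} : Set (StoneCech Z)) := by
        rw [disjoint_left]
        rintro q rfl hq
        exact hne hq
      obtain ⟨F, hF0, hF1, hF01⟩ := exists_continuous_zero_one_of_isClosed
        isClosed_singleton isClosed_singleton hdisj
      set f := bcfComp F hF01 with hfdef
      have h1 : u f (e z) ≤ extR f p := hrmem hp f
      have h2 : u f (e z) = f z := hext f z
      have h3 : f z = F (stoneCechUnit z) := rfl
      have h4 : F (stoneCechUnit z) = 1 := hF1 rfl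
      have h5 : F p = 0 := hF0 rfl
      rw [extR_bcfComp, h5] at h1
      rw [h2, h3, h4] at h1
      linarith

lemma negMin {Z W : Type*} [TopologicalSpace Z] [TopologicalSpace W] (e : Z → W)
    (u : BoundedContinuousFunction Z ℝ → BoundedContinuousFunction W ℝ)
    (hext : ∀ (f : BoundedContinuousFunction Z ℝ) (z : Z), u f (e z) = f z)
    (hnorm : u 1 = 1)
    (hadd : ∀ (f : BoundedContinuousFunction Z ℝ) (c : ℝ),
      u (f + const Z c) = u f + const W c)
    (hinf : ∀ f g : BoundedContinuousFunction Z ℝ, u (f ⊓ g) = u f ⊓ u g)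
    (hsup : ∀ (f : BoundedContinuousFunction Z ℝ) (c : ℝ),
      u (f ⊔ const Z c) = u f ⊔ const W c) :
    ∃ v : BoundedContinuousFunction Z ℝ → BoundedContinuousFunction W ℝ,
      (∀ (f : BoundedContinuousFunction Z ℝ) (z : Z), v f (e z) = f z) ∧
      v 1 = 1 ∧
      (∀ (f : BoundedContinuousFunction Z ℝ) (c : ℝ),
        v (f + const Z c) = v f + const W c) ∧
      (∀ f g : BoundedContinuousFunction Z ℝ, v (f ⊔ g) = v f ⊔ v g) ∧
      (∀ (f : BoundedContinuousFunction Z ℝ) (c : ℝ),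
        v (f ⊓ const Z c) = v f ⊓ const W c) := by
  refine ⟨fun f => -(u (-f)), ?_, ?_, ?_, ?_, ?_⟩
  · intro f z
    have := hext (-f) z
    simp only [BoundedContinuousFunction.coe_neg, Pi.neg_apply] at this ⊢
    linarith
  · have hm1 : (-1 : BoundedContinuousFunction Z ℝ) = 1 + const Z (-2) := by
      ext z; simp; norm_num
    have : u (-1) = -1 := by
      rw [hm1, hadd, hnorm]; ext w; simp; norm_num
    simp [this]
  · intro f c
    show -(u (-(f + const Z c))) = -(u (-f)) + const W c
    have hneg : -(f + const Z c) = -f + const Z (-c) := by ext z; simp; ring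
    rw [hneg, hadd]
    ext w; simp; ring
  · intro f g
    show -(u (-(f ⊔ g))) = -(u (-f)) ⊔ -(u (-g))
    have hneg : -(f ⊔ g) = (-f) ⊓ (-g) := by
      ext z; simp [neg_sup]
    rw [hneg, hinf]
    ext w; simp [neg_inf]
  · intro f c
    show -(u (-(f ⊓ const Z c))) = -(u (-f)) ⊓ const W c
    have hneg : -(f ⊓ const Z c) = (-f) ⊔ const Z (-c) := by
      ext z; simp [neg_inf]
    rw [hneg, hsup]
    ext w; simp [neg_sup]

lemma negMax {Z W : Type*} [TopologicalSpace Z] [TopologicalSpace W] (e : Z → W)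
    (u : BoundedContinuousFunction Z ℝ → BoundedContinuousFunction W ℝ)
    (hext : ∀ (f : BoundedContinuousFunction Z ℝ) (z : Z), u f (e z) = f z)
    (hnorm : u 1 = 1)
    (hadd : ∀ (f : BoundedContinuousFunction Z ℝ) (c : ℝ),
      u (f + const Z c) = u f + const W c)
    (hsup : ∀ f g : BoundedContinuousFunction Z ℝ, u (f ⊔ g) = u f ⊔ u g)
    (hinf : ∀ (f : BoundedContinuousFunction Z ℝ) (c : ℝ),
      u (f ⊓ const Z c) = u f ⊓ const W c) :
    ∃ v : BoundedContinuousFunction Z ℝ → BoundedContinuousFunction W ℝ,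
      (∀ (f : BoundedContinuousFunction Z ℝ) (z : Z), v f (e z) = f z) ∧
      v 1 = 1 ∧
      (∀ (f : BoundedContinuousFunction Z ℝ) (c : ℝ),
        v (f + const Z c) = v f + const W c) ∧
      (∀ f g : BoundedContinuousFunction Z ℝ, v (f ⊓ g) = v f ⊓ v g) ∧
      (∀ (f : BoundedContinuousFunction Z ℝ) (c : ℝ),
        v (f ⊔ const Z c) = v f ⊔ const W c) := by
  refine ⟨fun f => -(u (-f)), ?_, ?_, ?_, ?_, ?_⟩
  · intro f z
    have := hext (-f) z
    simp only [BoundedContinuousFunction.coe_neg, Pi.neg_apply] at this ⊢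
    linarith
  · have hm1 : (-1 : BoundedContinuousFunction Z ℝ) = 1 + const Z (-2) := by
      ext z; simp; norm_num
    have : u (-1) = -1 := by
      rw [hm1, hadd, hnorm]; ext w; simp; norm_num
    simp [this]
  · intro f c
    show -(u (-(f + const Z c))) = -(u (-f)) + const W c
    have hneg : -(f + const Z c) = -f + const Z (-c) := by ext z; simp; ring
    rw [hneg, hadd]
    ext w; simp; ring
  · intro f g
    show -(u (-(f ⊓ g))) = -(u (-f)) ⊓ -(u (-g))
    have hneg : -(f ⊓ g) = (-f) ⊔ (-g) := by
      ext z; simp [neg_inf]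
    rw [hneg, hsup]
    ext w; simp [neg_sup]
  · intro f c
    show -(u (-(f ⊔ const Z c))) = -(u (-f)) ⊔ const W c
    have hneg : -(f ⊔ const Z c) = (-f) ⊓ const Z (-c) := by
      ext z; simp [neg_sup]
    rw [hneg, hinf]
    ext w; simp [neg_inf]

end Statement14Aux

open Statement14Aux in
/-- for a subspace `X ⊆ Y`, the following are equivalent: (i) there is a
continuous (lower and upper semicontinuous) compact-valued map `r : Y → βX` with
`r x = {η x}` for `x ∈ X`; (ii) there is a normed, weakly additive extender
`u : C*(X) → C*(Y)` preserving min and weakly preserving max; (iii) there is a normed,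
weakly additive extender `u : C*(X) → C*(Y)` preserving max and weakly preserving min. -/
theorem statement14 {Y : Type*} [TopologicalSpace Y] [T35Space Y] (X : Set Y) :
    ((∃ r : Y → Set (StoneCech X),
        (∀ y, (r y).Nonempty ∧ IsCompact (r y)) ∧
        (∀ U : Set (StoneCech X), IsOpen U → IsOpen {y | (r y ∩ U).Nonempty}) ∧
        (∀ U : Set (StoneCech X), IsOpen U → IsOpen {y | r y ⊆ U}) ∧
        (∀ x : X, r x = {stoneCechUnit x})) ↔
      (∃ u : BoundedContinuousFunction X ℝ → BoundedContinuousFunction Y ℝ,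
        (∀ (f : BoundedContinuousFunction X ℝ) (x : X), u f x = f x) ∧
        u 1 = 1 ∧
        (∀ (f : BoundedContinuousFunction X ℝ) (c : ℝ),
          u (f + BoundedContinuousFunction.const X c) =
            u f + BoundedContinuousFunction.const Y c) ∧
        (∀ f g : BoundedContinuousFunction X ℝ, u (f ⊓ g) = u f ⊓ u g) ∧
        (∀ (f : BoundedContinuousFunction X ℝ) (c : ℝ),
          u (f ⊔ BoundedContinuousFunction.const X c) =
            u f ⊔ BoundedContinuousFunction.const Y c))) ∧
    ((∃ r : Y → Set (StoneCech X),
        (∀ y, (r y).Nonempty ∧ IsCompact (r y)) ∧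
        (∀ U : Set (StoneCech X), IsOpen U → IsOpen {y | (r y ∩ U).Nonempty}) ∧
        (∀ U : Set (StoneCech X), IsOpen U → IsOpen {y | r y ⊆ U}) ∧
        (∀ x : X, r x = {stoneCechUnit x})) ↔
      (∃ u : BoundedContinuousFunction X ℝ → BoundedContinuousFunction Y ℝ,
        (∀ (f : BoundedContinuousFunction X ℝ) (x : X), u f x = f x) ∧
        u 1 = 1 ∧
        (∀ (f : BoundedContinuousFunction X ℝ) (c : ℝ),
          u (f + BoundedContinuousFunction.const X c) =
            u f + BoundedContinuousFunction.const Y c) ∧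
        (∀ f g : BoundedContinuousFunction X ℝ, u (f ⊔ g) = u f ⊔ u g) ∧
        (∀ (f : BoundedContinuousFunction X ℝ) (c : ℝ),
          u (f ⊓ BoundedContinuousFunction.const X c) =
            u f ⊓ BoundedContinuousFunction.const Y c))) := by
  classical
  by_cases hX : Nonempty X
  · haveI := hX
    have fw : (∃ r : Y → Set (StoneCech X),
        (∀ y, (r y).Nonempty ∧ IsCompact (r y)) ∧
        (∀ U : Set (StoneCech X), IsOpen U → IsOpen {y | (r y ∩ U).Nonempty}) ∧
        (∀ U : Set (StoneCech X), IsOpen U → IsOpen {y | r y ⊆ U}) ∧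
        (∀ x : X, r x = {stoneCechUnit x})) →
        (∃ u : BoundedContinuousFunction X ℝ → BoundedContinuousFunction Y ℝ,
        (∀ (f : BoundedContinuousFunction X ℝ) (x : X), u f x = f x) ∧
        u 1 = 1 ∧
        (∀ (f : BoundedContinuousFunction X ℝ) (c : ℝ),
          u (f + BoundedContinuousFunction.const X c) =
            u f + BoundedContinuousFunction.const Y c) ∧
        (∀ f g : BoundedContinuousFunction X ℝ, u (f ⊓ g) = u f ⊓ u g) ∧
        (∀ (f : BoundedContinuousFunction X ℝ) (c : ℝ),
          u (f ⊔ BoundedContinuousFunction.const X c) =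
            u f ⊔ BoundedContinuousFunction.const Y c)) := by
      rintro ⟨r, h1, h2, h3, h4⟩
      refine ⟨minBCF h1 h2 h3, ?_, ?_, ?_, ?_, ?_⟩
      · intro f x
        exact minFun_singleton f (h4 x)
      · ext w
        show minFun r 1 w = (1 : BoundedContinuousFunction Y ℝ) w
        rw [minFun_one h1]
        simp
      · intro f c
        ext w
        show minFun r (f + BoundedContinuousFunction.const X c) w = _
        rw [minFun_add_const h1]
        simp only [BoundedContinuousFunction.add_apply, BoundedContinuousFunction.const_apply]
        rfl
      · intro f g
        ext w
        show minFun r (f ⊓ g) w = _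
        rw [minFun_inf h1]
        simp only [BoundedContinuousFunction.coe_inf, Pi.inf_apply]
        rfl
      · intro f c
        ext w
        show minFun r (f ⊔ BoundedContinuousFunction.const X c) w = _
        rw [minFun_sup_const h1]
        simp only [BoundedContinuousFunction.coe_sup, Pi.sup_apply,
          BoundedContinuousFunction.const_apply]
        rfl
    have bw : (∃ u : BoundedContinuousFunction X ℝ → BoundedContinuousFunction Y ℝ,
        (∀ (f : BoundedContinuousFunction X ℝ) (x : X), u f x = f x) ∧
        u 1 = 1 ∧
        (∀ (f : BoundedContinuousFunction X ℝ) (c : ℝ),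
          u (f + BoundedContinuousFunction.const X c) =
            u f + BoundedContinuousFunction.const Y c) ∧
        (∀ f g : BoundedContinuousFunction X ℝ, u (f ⊓ g) = u f ⊓ u g) ∧
        (∀ (f : BoundedContinuousFunction X ℝ) (c : ℝ),
          u (f ⊔ BoundedContinuousFunction.const X c) =
            u f ⊔ BoundedContinuousFunction.const Y c)) →
        (∃ r : Y → Set (StoneCech X),
        (∀ y, (r y).Nonempty ∧ IsCompact (r y)) ∧
        (∀ U : Set (StoneCech X), IsOpen U → IsOpen {y | (r y ∩ U).Nonempty}) ∧
        (∀ U : Set (StoneCech X), IsOpen U → IsOpen {y | r y ⊆ U}) ∧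
        (∀ x : X, r x = {stoneCechUnit x})) := by
      rintro ⟨u, hext, hnorm, hadd, hinf, hsup⟩
      exact backward u hnorm hadd hinf hsup (fun z : X => (z : Y)) hext
    have mm : ∀ u : BoundedContinuousFunction X ℝ → BoundedContinuousFunction Y ℝ,
        (∀ (f : BoundedContinuousFunction X ℝ) (x : X), u f x = f x) →
        u 1 = 1 →
        (∀ (f : BoundedContinuousFunction X ℝ) (c : ℝ),
          u (f + BoundedContinuousFunction.const X c) =
            u f + BoundedContinuousFunction.const Y c) →
        (∀ f g : BoundedContinuousFunction X ℝ, u (f ⊓ g) = u f ⊓ u g) →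
        (∀ (f : BoundedContinuousFunction X ℝ) (c : ℝ),
          u (f ⊔ BoundedContinuousFunction.const X c) =
            u f ⊔ BoundedContinuousFunction.const Y c) →
        (∃ v : BoundedContinuousFunction X ℝ → BoundedContinuousFunction Y ℝ,
        (∀ (f : BoundedContinuousFunction X ℝ) (x : X), v f x = f x) ∧
        v 1 = 1 ∧
        (∀ (f : BoundedContinuousFunction X ℝ) (c : ℝ),
          v (f + BoundedContinuousFunction.const X c) =
            v f + BoundedContinuousFunction.const Y c) ∧
        (∀ f g : BoundedContinuousFunction X ℝ, v (f ⊔ g) = v f ⊔ v g) ∧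
        (∀ (f : BoundedContinuousFunction X ℝ) (c : ℝ),
          v (f ⊓ BoundedContinuousFunction.const X c) =
            v f ⊓ BoundedContinuousFunction.const Y c)) := by
      intro u hext hnorm hadd hinf hsup
      exact negMin (fun z : X => (z : Y)) u hext hnorm hadd hinf hsup
    have mm' : ∀ u : BoundedContinuousFunction X ℝ → BoundedContinuousFunction Y ℝ,
        (∀ (f : BoundedContinuousFunction X ℝ) (x : X), u f x = f x) →
        u 1 = 1 →
        (∀ (f : BoundedContinuousFunction X ℝ) (c : ℝ),
          u (f + BoundedContinuousFunction.const X c) =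
            u f + BoundedContinuousFunction.const Y c) →
        (∀ f g : BoundedContinuousFunction X ℝ, u (f ⊔ g) = u f ⊔ u g) →
        (∀ (f : BoundedContinuousFunction X ℝ) (c : ℝ),
          u (f ⊓ BoundedContinuousFunction.const X c) =
            u f ⊓ BoundedContinuousFunction.const Y c) →
        (∃ v : BoundedContinuousFunction X ℝ → BoundedContinuousFunction Y ℝ,
        (∀ (f : BoundedContinuousFunction X ℝ) (x : X), v f x = f x) ∧
        v 1 = 1 ∧
        (∀ (f : BoundedContinuousFunction X ℝ) (c : ℝ),
          v (f + BoundedContinuousFunction.const X c) =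
            v f + BoundedContinuousFunction.const Y c) ∧
        (∀ f g : BoundedContinuousFunction X ℝ, v (f ⊓ g) = v f ⊓ v g) ∧
        (∀ (f : BoundedContinuousFunction X ℝ) (c : ℝ),
          v (f ⊔ BoundedContinuousFunction.const X c) =
            v f ⊔ BoundedContinuousFunction.const Y c)) := by
      intro u hext hnorm hadd hsup hinf
      exact negMax (fun z : X => (z : Y)) u hext hnorm hadd hsup hinf
    constructor
    · exact ⟨fw, bw⟩
    · constructor
      · intro h
        obtain ⟨u, hext, hnorm, hadd, hinf, hsup⟩ := fw h
        exact mm u hext hnorm hadd hinf hsup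
      · rintro ⟨u, hext, hnorm, hadd, hsup, hinf⟩
        exact bw (mm' u hext hnorm hadd hsup hinf)
  · rw [not_nonempty_iff] at hX
    by_cases hY : Nonempty Y
    · obtain ⟨y0⟩ := hY
      have hno_i : ¬ (∃ r : Y → Set (StoneCech X),
          (∀ y, (r y).Nonempty ∧ IsCompact (r y)) ∧
          (∀ U : Set (StoneCech X), IsOpen U → IsOpen {y | (r y ∩ U).Nonempty}) ∧
          (∀ U : Set (StoneCech X), IsOpen U → IsOpen {y | r y ⊆ U}) ∧
          (∀ x : X, r x = {stoneCechUnit x})) := by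
        rintro ⟨r, h1, -, -, -⟩
        obtain ⟨p, -⟩ := (h1 y0).1
        have hd := denseRange_stoneCechUnit (α := X) p
        rw [range_eq_empty, closure_empty] at hd
        exact hd
      have hno_u : ∀ u : BoundedContinuousFunction X ℝ → BoundedContinuousFunction Y ℝ,
          u 1 = 1 →
          (∀ (f : BoundedContinuousFunction X ℝ) (c : ℝ),
            u (f + BoundedContinuousFunction.const X c) =
              u f + BoundedContinuousFunction.const Y c) → False := by
        intro u hnorm hadd
        have h11 : (1 : BoundedContinuousFunction X ℝ) +
            BoundedContinuousFunction.const X (-1) = 1 := by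
          ext z; exact isEmptyElim z
        have h2 := hadd 1 (-1)
        rw [h11, hnorm] at h2
        have h3 := congrFun (congrArg DFunLike.coe h2) y0
        simp at h3
      constructor
      · exact iff_of_false hno_i (by rintro ⟨u, -, hnorm, hadd, -, -⟩; exact hno_u u hnorm hadd)
      · exact iff_of_false hno_i (by rintro ⟨u, -, hnorm, hadd, -, -⟩; exact hno_u u hnorm hadd)
    · rw [not_nonempty_iff] at hY
      have hi : (∃ r : Y → Set (StoneCech X),
          (∀ y, (r y).Nonempty ∧ IsCompact (r y)) ∧
          (∀ U : Set (StoneCech X), IsOpen U → IsOpen {y | (r y ∩ U).Nonempty}) ∧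
          (∀ U : Set (StoneCech X), IsOpen U → IsOpen {y | r y ⊆ U}) ∧
          (∀ x : X, r x = {stoneCechUnit x})) := by
        refine ⟨fun y => isEmptyElim y, fun y => isEmptyElim y, ?_, ?_, ?_⟩
        · intro U hU
          rw [Set.eq_empty_of_isEmpty {y : Y | ((fun y => isEmptyElim y : Y → Set (StoneCech X)) y ∩ U).Nonempty}]
          exact isOpen_empty
        · intro U hU
          rw [Set.eq_empty_of_isEmpty {y : Y | (fun y => isEmptyElim y : Y → Set (StoneCech X)) y ⊆ U}]
          exact isOpen_empty
        · intro x
          exact isEmptyElim (x : Y)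
      have hu : ∀ P : (BoundedContinuousFunction X ℝ → BoundedContinuousFunction Y ℝ) → Prop, True := fun _ => trivial
      constructor
      · refine iff_of_true hi ⟨fun _ => 0, fun f x => isEmptyElim (x : Y), ?_, ?_, ?_, ?_⟩
        · ext y; exact isEmptyElim y
        · intro f c; ext y; exact isEmptyElim y
        · intro f g; ext y; exact isEmptyElim y
        · intro f c; ext y; exact isEmptyElim y
      · refine iff_of_true hi ⟨fun _ => 0, fun f x => isEmptyElim (x : Y), ?_, ?_, ?_, ?_⟩
        · ext y; exact isEmptyElim y
        · intro f c; ext y; exact isEmptyElim y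
        · intro f g; ext y; exact isEmptyElim y
        · intro f c; ext y; exact isEmptyElim y
end

section
/- Let Y be a Tychonoff space and X ⊆ Y a subspace. There exists a continuous compact-valued retraction r : Y → X (i.e. a continuous set-valued map whose values are nonempty compact subsets of X with r(x) = {x} for all x ∈ X) if and only if there exists an extender u : C*(X) → C*(Y) with compact supports which is normed, weakly additive, preserves min and weakly preserves max, and also if and only if there exists an extender u : C*(X) → C*(Y) with compact supports which is normed, weakly additive, preserves max and weakly preserves min. -/
open Set

/-- The Čech–Stone extension `βf : βX → ℝ` of a bounded continuous function `f : X → ℝ`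
(obtained by extending `f`, viewed as a map into the compact interval `[-‖f‖, ‖f‖]`,
over the Stone–Čech compactification). -/
noncomputable def betaExt {X : Type*} [TopologicalSpace X] (f : BoundedContinuousFunction X ℝ) :
    StoneCech X → ℝ :=
  Subtype.val ∘ stoneCechExtend
    (Continuous.subtype_mk f.continuous
      (fun x => Set.mem_Icc.mpr (abs_le.mp (Real.norm_eq_abs (f x) ▸ f.norm_coe_le_norm x)))
      : Continuous fun x => (⟨f x, _⟩ : Set.Icc (-‖f‖) ‖f‖))

variable {X : Type*} [TopologicalSpace X]

/-- `μ` is *normed*: `μ 1 = 1`. -/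
def BNormed (μ : BoundedContinuousFunction X ℝ → ℝ) : Prop := μ 1 = 1

/-- `μ` is *weakly additive*: `μ (f + c·1) = μ f + c`. -/
def BWeaklyAdditive (μ : BoundedContinuousFunction X ℝ → ℝ) : Prop :=
  ∀ (f : BoundedContinuousFunction X ℝ) (c : ℝ),
    μ (f + BoundedContinuousFunction.const X c) = μ f + c

/-- `μ` *preserves min*. -/
def BPreservesMin (μ : BoundedContinuousFunction X ℝ → ℝ) : Prop :=
  ∀ f g : BoundedContinuousFunction X ℝ, μ (f ⊓ g) = min (μ f) (μ g)

/-- `μ` *preserves max*. -/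
def BPreservesMax (μ : BoundedContinuousFunction X ℝ → ℝ) : Prop :=
  ∀ f g : BoundedContinuousFunction X ℝ, μ (f ⊔ g) = max (μ f) (μ g)

/-- `μ` *weakly preserves min*: `μ (min{f, c·1}) = min{μ f, c}`. -/
def BWeaklyPreservesMin (μ : BoundedContinuousFunction X ℝ → ℝ) : Prop :=
  ∀ (f : BoundedContinuousFunction X ℝ) (c : ℝ),
    μ (f ⊓ BoundedContinuousFunction.const X c) = min (μ f) c

/-- `μ` *weakly preserves max*: `μ (max{f, c·1}) = max{μ f, c}`. -/
def BWeaklyPreservesMax (μ : BoundedContinuousFunction X ℝ → ℝ) : Prop :=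
  ∀ (f : BoundedContinuousFunction X ℝ) (c : ℝ),
    μ (f ⊔ BoundedContinuousFunction.const X c) = max (μ f) c

/-- The support `S(μ) ⊆ βX` of a functional `μ` on `C*(X)`: points `p ∈ βX` such that every
open neighbourhood `O` of `p` admits `f, g ∈ C*(X)` with `βf = βg` off `O` and `μ f ≠ μ g`. -/
def betaSupport (μ : BoundedContinuousFunction X ℝ → ℝ) : Set (StoneCech X) :=
  {p | ∀ O : Set (StoneCech X), IsOpen O → p ∈ O →
    ∃ f g : BoundedContinuousFunction X ℝ,
      (∀ q ∉ O, betaExt f q = betaExt g q) ∧ μ f ≠ μ g}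

/-- `R_min(X)`: normed, weakly additive functionals preserving min and weakly preserving max. -/
def RMin (X : Type*) [TopologicalSpace X] : Set (BoundedContinuousFunction X ℝ → ℝ) :=
  {μ | BNormed μ ∧ BWeaklyAdditive μ ∧ BPreservesMin μ ∧ BWeaklyPreservesMax μ}

/-- `R_max(X)`: normed, weakly additive functionals preserving max and weakly preserving min. -/
def RMax (X : Type*) [TopologicalSpace X] : Set (BoundedContinuousFunction X ℝ → ℝ) :=
  {μ | BNormed μ ∧ BWeaklyAdditive μ ∧ BPreservesMax μ ∧ BWeaklyPreservesMin μ}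

/-- `R_min(X)_c`: members of `R_min(X)` with compact support, i.e. `∅ ≠ S(μ) ⊆ η(X)`. -/
def RMinC (X : Type*) [TopologicalSpace X] : Set (BoundedContinuousFunction X ℝ → ℝ) :=
  {μ | μ ∈ RMin X ∧ (betaSupport μ).Nonempty ∧
    betaSupport μ ⊆ Set.range (stoneCechUnit : X → StoneCech X)}

/-- `R_max(X)_c`: members of `R_max(X)` with compact support, i.e. `∅ ≠ S(μ) ⊆ η(X)`. -/
def RMaxC (X : Type*) [TopologicalSpace X] : Set (BoundedContinuousFunction X ℝ → ℝ) :=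
  {μ | μ ∈ RMax X ∧ (betaSupport μ).Nonempty ∧
    betaSupport μ ⊆ Set.range (stoneCechUnit : X → StoneCech X)}


lemma betaExt_continuous (f : BoundedContinuousFunction X ℝ) : Continuous (betaExt f) :=
  continuous_subtype_val.comp (continuous_stoneCechExtend _)

lemma betaExt_unit (f : BoundedContinuousFunction X ℝ) (x : X) :
    betaExt f (stoneCechUnit x) = f x := by
  have := stoneCechExtend_extends (α := X)
    (Continuous.subtype_mk f.continuous
      (fun x => Set.mem_Icc.mpr (abs_le.mp (Real.norm_eq_abs (f x) ▸ f.norm_coe_le_norm x)))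
      : Continuous fun x => (⟨f x, _⟩ : Set.Icc (-‖f‖) ‖f‖))
  have h2 := congrFun this x
  simpa [betaExt] using congrArg Subtype.val h2

lemma betaExt_eq {f : BoundedContinuousFunction X ℝ} {h : StoneCech X → ℝ}
    (hc : Continuous h) (he : ∀ x, h (stoneCechUnit x) = f x) : betaExt f = h := by
  apply Continuous.ext_on denseRange_stoneCechUnit (betaExt_continuous f) hc
  rintro _ ⟨x, rfl⟩
  rw [betaExt_unit, he]

/-- pull back a continuous function on `βX` to a bounded continuous function on `X`. -/
noncomputable def bPull (h : C(StoneCech X, ℝ)) : BoundedContinuousFunction X ℝ :=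
  (BoundedContinuousFunction.mkOfCompact h).compContinuous
    ⟨stoneCechUnit, continuous_stoneCechUnit⟩

@[simp] lemma bPull_apply (h : C(StoneCech X, ℝ)) (x : X) :
    bPull h x = h (stoneCechUnit x) := rfl

lemma betaExt_bPull (h : C(StoneCech X, ℝ)) : betaExt (bPull h) = h :=
  betaExt_eq h.continuous (fun _ => rfl)

lemma betaExt_add_const (f : BoundedContinuousFunction X ℝ) (c : ℝ) :
    betaExt (f + BoundedContinuousFunction.const X c) = fun p => betaExt f p + c :=
  betaExt_eq ((betaExt_continuous f).add continuous_const) (fun x => by simp [betaExt_unit])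

lemma betaExt_inf (f g : BoundedContinuousFunction X ℝ) :
    betaExt (f ⊓ g) = fun p => min (betaExt f p) (betaExt g p) :=
  betaExt_eq ((betaExt_continuous f).min (betaExt_continuous g)) (fun x => by
    simp [betaExt_unit])

lemma betaExt_sup (f g : BoundedContinuousFunction X ℝ) :
    betaExt (f ⊔ g) = fun p => max (betaExt f p) (betaExt g p) :=
  betaExt_eq ((betaExt_continuous f).max (betaExt_continuous g)) (fun x => by
    simp [betaExt_unit])

lemma betaExt_neg (f : BoundedContinuousFunction X ℝ) :
    betaExt (-f) = fun p => -(betaExt f p) :=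
  betaExt_eq (betaExt_continuous f).neg (fun x => by simp [betaExt_unit])

lemma betaExt_const (c : ℝ) :
    betaExt (BoundedContinuousFunction.const X c) = fun _ => c :=
  betaExt_eq continuous_const (fun x => rfl)

lemma betaExt_zero : betaExt (0 : BoundedContinuousFunction X ℝ) = fun _ => 0 :=
  betaExt_eq continuous_const (fun x => rfl)

section Mu

variable {μ : BoundedContinuousFunction X ℝ → ℝ}
variable (hN : μ 1 = 1)
variable (hWA : ∀ (f : BoundedContinuousFunction X ℝ) (c : ℝ),
    μ (f + BoundedContinuousFunction.const X c) = μ f + c)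
variable (hMin : ∀ f g : BoundedContinuousFunction X ℝ, μ (f ⊓ g) = min (μ f) (μ g))
variable (hWMax : ∀ (f : BoundedContinuousFunction X ℝ) (c : ℝ),
    μ (f ⊔ BoundedContinuousFunction.const X c) = max (μ f) c)

include hN hWA in
lemma mu_zero : μ 0 = 0 := by
  have h1 : (1 : BoundedContinuousFunction X ℝ) + BoundedContinuousFunction.const X (-1) = 0 := by
    ext x; simp
  have := hWA 1 (-1)
  rw [h1, hN] at this
  linarith

include hN hWA in
lemma mu_const (c : ℝ) : μ (BoundedContinuousFunction.const X c) = c := by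
  have h1 : (0 : BoundedContinuousFunction X ℝ) + BoundedContinuousFunction.const X c =
      BoundedContinuousFunction.const X c := by ext x; simp
  have := hWA 0 c
  rw [h1, mu_zero hN hWA] at this
  linarith

include hMin in
lemma mu_mono {f g : BoundedContinuousFunction X ℝ} (hfg : f ≤ g) : μ f ≤ μ g := by
  have : f ⊓ g = f := inf_eq_left.2 hfg
  have h2 := hMin f g
  rw [this] at h2
  rw [h2]
  exact min_le_right _ _

include hN hWA in
lemma mu_nonempty : Nonempty X := by
  by_contra h
  have : (0 : BoundedContinuousFunction X ℝ) = 1 := by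
    ext x; exact absurd ⟨x⟩ h
  have h0 := mu_zero hN hWA
  rw [this, hN] at h0
  norm_num at h0

include hN hWA hMin hWMax in
/-- The key combinatorial step: one cannot have `βg ≥ 0 → βf > 0` when `μ g = 0 = μ f`. -/
lemma mu_crux_aux {f g : BoundedContinuousFunction X ℝ} (hf : μ f = 0) (hg : μ g = 0)
    (H : ∀ p, 0 ≤ betaExt g p → 0 < betaExt f p) : False := by
  have hXne : Nonempty X := mu_nonempty hN hWA
  have hβne : Nonempty (StoneCech X) := ⟨stoneCechUnit (Classical.arbitrary X)⟩
  set K : Set (StoneCech X) := {p | 0 ≤ betaExt g p} with hK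
  have hKclosed : IsClosed K := isClosed_le continuous_const (betaExt_continuous g)
  rcases eq_empty_or_nonempty K with hKe | hKne
  · -- βg < 0 everywhere; take the max
    obtain ⟨p₀, -, hp₀⟩ := isCompact_univ.exists_isMaxOn univ_nonempty
      (betaExt_continuous g).continuousOn
    have hneg : betaExt g p₀ < 0 := by
      by_contra h
      exact (eq_empty_iff_forall_notMem.1 hKe p₀) (le_of_not_gt h)
    have hle : g ≤ BoundedContinuousFunction.const X (betaExt g p₀) := by
      intro x
      have := hp₀ (mem_univ (stoneCechUnit x))
      simpa [betaExt_unit] using this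
    have := mu_mono hMin hle
    rw [hg, mu_const hN hWA] at this
    linarith
  · have hKcomp : IsCompact K := hKclosed.isCompact
    obtain ⟨pm, hpmK, hpm⟩ := hKcomp.exists_isMinOn hKne (betaExt_continuous f).continuousOn
    set ε : ℝ := betaExt f pm / 2 with hε
    have hε₀pos : 0 < betaExt f pm := H pm hpmK
    have hεpos : 0 < ε := by positivity
    set U : Set (StoneCech X) := {p | ε < betaExt f p} with hU
    have hUopen : IsOpen U := isOpen_lt continuous_const (betaExt_continuous f)
    have hKU : K ⊆ U := by
      intro p hp
      have := hpm hp
      have h2 : betaExt f pm ≤ betaExt f p := this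
      simp only [hU, mem_setOf_eq]
      linarith
    -- find δ = 1/(n+1) with {βg ≥ -δ} ⊆ U
    have hVn : ∃ n : ℕ, {p | -(1 / (n + 1 : ℝ)) ≤ betaExt g p} ⊆ U := by
      have := exists_subset_nhds_of_compactSpace
        (V := fun n : ℕ => {p | -(1 / (n + 1 : ℝ)) ≤ betaExt g p})
        (fun m n => ⟨max m n, fun p hp => by
          simp only [mem_setOf_eq] at hp ⊢
          refine le_trans ?_ hp
          have h1 : (1 : ℝ) / (max m n + 1) ≤ 1 / (m + 1) := by
            apply one_div_le_one_div_of_le <;> [positivity; simp [add_le_add_iff_right]]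
          linarith, fun p hp => by
          simp only [mem_setOf_eq] at hp ⊢
          refine le_trans ?_ hp
          have h1 : (1 : ℝ) / (max m n + 1) ≤ 1 / (n + 1) := by
            apply one_div_le_one_div_of_le <;> [positivity; simp [add_le_add_iff_right]]
          linarith⟩)
        (fun n => isClosed_le continuous_const (betaExt_continuous g))
        (U := U) ?_
      · exact this
      · intro p hp
        have hpK : p ∈ K := by
          simp only [mem_iInter, mem_setOf_eq] at hp
          simp only [hK, mem_setOf_eq]
          by_contra hneg
          push_neg at hneg
          obtain ⟨n, hn⟩ := exists_nat_one_div_lt (ε := -betaExt g p) (by linarith)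
          have := hp n
          linarith
        exact hUopen.mem_nhds (hKU hpK)
    obtain ⟨n, hδU⟩ := hVn
    set δ : ℝ := 1 / (n + 1 : ℝ) with hδdef
    have hδpos : 0 < δ := by positivity
    -- define the functions
    set φ : BoundedContinuousFunction X ℝ :=
      f ⊓ (g + BoundedContinuousFunction.const X (δ + ε)) with hφ
    set ρ : BoundedContinuousFunction X ℝ :=
      ((g + BoundedContinuousFunction.const X δ) ⊓ BoundedContinuousFunction.const X ε)
        ⊔ BoundedContinuousFunction.const X 0 with hρ
    have hμρ : μ ρ = min δ ε := by
      rw [hρ, hWMax, hMin, hWA, hg]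
      rw [mu_const hN hWA]
      rw [zero_add, max_eq_left (le_min hδpos.le hεpos.le)]
    have hμφ : μ φ = 0 := by
      rw [hφ, hMin, hWA, hg, hf]
      simp only [zero_add]
      exact min_eq_left (by linarith)
    have hμφ0 : μ (φ ⊔ BoundedContinuousFunction.const X 0) = 0 := by
      rw [hWMax, hμφ]; simp
    have hle : ρ ≤ φ ⊔ BoundedContinuousFunction.const X 0 := by
      intro x
      simp only [hρ, hφ, BoundedContinuousFunction.coe_sup, BoundedContinuousFunction.coe_inf,
        BoundedContinuousFunction.coe_add, BoundedContinuousFunction.const_apply,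
        Pi.sup_apply, Pi.inf_apply, Pi.add_apply]
      by_cases hx : g x + δ < 0
      · have : min (g x + δ) ε ≤ 0 := le_trans (min_le_left _ _) hx.le
        exact le_trans (max_le this le_rfl) (le_max_right _ _)
      · push_neg at hx
        have hgx : -δ ≤ betaExt g (stoneCechUnit x) := by rw [betaExt_unit]; linarith
        have hfx : ε < betaExt f (stoneCechUnit x) := hδU hgx
        rw [betaExt_unit] at hfx
        have h1 : ε ≤ min (f x) (g x + (δ + ε)) := le_min hfx.le (by linarith)
        have h2 : max (min (g x + δ) ε) 0 ≤ ε :=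
          max_le (le_trans (min_le_right _ _) le_rfl) hεpos.le
        exact le_trans h2 (le_trans h1 (le_max_left _ _))
    have := mu_mono hMin hle
    rw [hμρ, hμφ0] at this
    have : 0 < min δ ε := lt_min hδpos hεpos
    linarith [mu_mono hMin hle, hμρ, hμφ0]
  done

end Mu

/-- The set `Â(μ) ⊆ βX` of points dominating `μ`. -/
def Ahat (μ : BoundedContinuousFunction X ℝ → ℝ) : Set (StoneCech X) :=
  {p | ∀ f : BoundedContinuousFunction X ℝ, μ f ≤ betaExt f p}

lemma Ahat_closed (μ : BoundedContinuousFunction X ℝ → ℝ) : IsClosed (Ahat μ) := by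
  have : Ahat μ = ⋂ f : BoundedContinuousFunction X ℝ, {p | μ f ≤ betaExt f p} := by
    ext p; simp [Ahat, mem_iInter]
  rw [this]
  exact isClosed_iInter fun f => isClosed_le continuous_const (betaExt_continuous f)

section Mu2

variable {μ : BoundedContinuousFunction X ℝ → ℝ}
variable (hN : μ 1 = 1)
variable (hWA : ∀ (f : BoundedContinuousFunction X ℝ) (c : ℝ),
    μ (f + BoundedContinuousFunction.const X c) = μ f + c)
variable (hMin : ∀ f g : BoundedContinuousFunction X ℝ, μ (f ⊓ g) = min (μ f) (μ g))
variable (hWMax : ∀ (f : BoundedContinuousFunction X ℝ) (c : ℝ),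
    μ (f ⊔ BoundedContinuousFunction.const X c) = max (μ f) c)

include hN hWA hMin hWMax in
lemma mu_crux (f' f₀ : BoundedContinuousFunction X ℝ) :
    ∃ p, μ f' ≤ betaExt f' p ∧ betaExt f₀ p ≤ μ f₀ := by
  set g : BoundedContinuousFunction X ℝ := f' + BoundedContinuousFunction.const X (-(μ f'))
  set f : BoundedContinuousFunction X ℝ := f₀ + BoundedContinuousFunction.const X (-(μ f₀))
  have hg : μ g = 0 := by rw [hWA]; ring
  have hf : μ f = 0 := by rw [hWA]; ring
  by_contra hcon
  push_neg at hcon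
  apply mu_crux_aux hN hWA hMin hWMax hf hg
  intro p hp
  have hgp : betaExt g p = betaExt f' p - μ f' := by
    rw [betaExt_add_const]; ring
  have hfp : betaExt f p = betaExt f₀ p - μ f₀ := by
    rw [betaExt_add_const]; ring
  rw [hgp] at hp
  have := hcon p (by linarith)
  rw [hfp]
  linarith

include hN hWA hMin hWMax in
lemma Ahat_inter_nonempty (f₀ : BoundedContinuousFunction X ℝ) :
    ∃ p ∈ Ahat μ, betaExt f₀ p ≤ μ f₀ := by
  set t : BoundedContinuousFunction X ℝ → Set (StoneCech X) :=
    fun f => {p | μ f ≤ betaExt f p} ∩ {p | betaExt f₀ p ≤ μ f₀} with ht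
  have htne : ∀ f, (t f).Nonempty := by
    intro f
    obtain ⟨p, h1, h2⟩ := mu_crux hN hWA hMin hWMax f f₀
    exact ⟨p, h1, h2⟩
  have htclosed : ∀ f, IsClosed (t f) :=
    fun f => ((isClosed_le continuous_const (betaExt_continuous f)).inter
      (isClosed_le (betaExt_continuous f₀) continuous_const))
  have htdir : Directed (· ⊇ ·) t := by
    intro f g
    refine ⟨(f + BoundedContinuousFunction.const X (-(μ f))) ⊓
      (g + BoundedContinuousFunction.const X (-(μ g))), ?_, ?_⟩
    · rintro p ⟨h1, h2⟩
      refine ⟨?_, h2⟩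
      simp only [mem_setOf_eq] at h1 ⊢
      rw [hMin, hWA, hWA] at h1
      rw [betaExt_inf, betaExt_add_const, betaExt_add_const] at h1
      have h1' : (0:ℝ) ≤ min (betaExt f p + -(μ f)) (betaExt g p + -(μ g)) := by
        have h3 : min (μ f + -μ f) (μ g + -μ g) = 0 := by simp
        rw [h3] at h1
        simpa using h1
      have := (le_min_iff.mp h1').1
      linarith
    · rintro p ⟨h1, h2⟩
      refine ⟨?_, h2⟩
      simp only [mem_setOf_eq] at h1 ⊢
      rw [hMin, hWA, hWA] at h1
      rw [betaExt_inf, betaExt_add_const, betaExt_add_const] at h1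
      have h1' : (0:ℝ) ≤ min (betaExt f p + -(μ f)) (betaExt g p + -(μ g)) := by
        have h3 : min (μ f + -μ f) (μ g + -μ g) = 0 := by simp
        rw [h3] at h1
        simpa using h1
      have := (le_min_iff.mp h1').2
      linarith
  have := IsCompact.nonempty_iInter_of_directed_nonempty_isCompact_isClosed t htdir htne
    (fun f => (htclosed f).isCompact) htclosed
  obtain ⟨p, hp⟩ := this
  simp only [mem_iInter, ht, mem_inter_iff, mem_setOf_eq] at hp
  exact ⟨p, fun f => (hp f).1, (hp 0).2⟩

include hN hWA hMin hWMax in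
lemma Ahat_nonempty : (Ahat μ).Nonempty := by
  obtain ⟨p, hp, -⟩ := Ahat_inter_nonempty hN hWA hMin hWMax 0
  exact ⟨p, hp⟩

include hN hWA in
lemma Ahat_subset_betaSupport : Ahat μ ⊆ betaSupport μ := by
  intro p hp O hO hpO
  obtain ⟨h, h0, h1, hmem⟩ := exists_continuous_zero_one_of_isClosed
    (X := StoneCech X) hO.isClosed_compl isClosed_singleton
    (disjoint_singleton_right.mpr (fun hc => hc hpO))
  refine ⟨0, bPull (-h), ?_, ?_⟩
  · intro q hq
    rw [betaExt_zero, betaExt_bPull]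
    simp only [ContinuousMap.coe_neg, Pi.neg_apply]
    rw [h0 hq]
    simp
  · have h1p : betaExt (bPull (-h)) p = -1 := by
      rw [betaExt_bPull]
      simp only [ContinuousMap.coe_neg, Pi.neg_apply]
      rw [h1 rfl]
      simp
    have := hp (bPull (-h))
    rw [h1p] at this
    rw [mu_zero hN hWA]
    intro hc
    rw [← hc] at this
    linarith

end Mu2

section Topo

lemma completelyRegular_subtype {Y : Type*} [TopologicalSpace Y] [CompletelyRegularSpace Y]
    (s : Set Y) : CompletelyRegularSpace s := by
  constructor
  intro x K hK hxK
  obtain ⟨K', hK', hKeq⟩ := isClosed_induced_iff.mp hK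
  have hx' : (x : Y) ∉ K' := by
    intro hc
    exact hxK (by rw [← hKeq]; exact hc)
  obtain ⟨f, hf, hf0, hf1⟩ := CompletelyRegularSpace.completely_regular (x : Y) K' hK' hx'
  exact ⟨f ∘ Subtype.val, hf.comp continuous_subtype_val, hf0,
    fun k hk => hf1 (by rw [← hKeq] at hk; exact hk)⟩

lemma t35_subtype {Y : Type*} [TopologicalSpace Y] [T35Space Y] (s : Set Y) :
    T35Space s :=
  @T35Space.mk s _ _ (completelyRegular_subtype s)

variable {Z : Type*} [TopologicalSpace Z] [T35Space Z]

/-- Around a point of an open set, an open set in `βZ` whose preimage is inside `U`. -/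
lemma exists_open_unit_mem {U : Set Z} (hU : IsOpen U) {x : Z} (hx : x ∈ U) :
    ∃ V : Set (StoneCech Z), IsOpen V ∧ stoneCechUnit x ∈ V ∧ stoneCechUnit ⁻¹' V ⊆ U := by
  obtain ⟨f, hf, hf0, hf1⟩ := CompletelyRegularSpace.completely_regular x Uᶜ
    hU.isClosed_compl (fun hc => hc hx)
  set g : BoundedContinuousFunction Z ℝ :=
    ⟨⟨fun z => (f z : ℝ), (continuous_subtype_val.comp hf)⟩, 2, by
      intro a b
      have ha := (f a).2
      have hb := (f b).2
      rw [Real.dist_eq]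
      rw [Set.mem_Icc] at ha hb
      rw [abs_le]
      constructor <;> simp only [ContinuousMap.coe_mk] <;> linarith⟩ with hg
  refine ⟨{p | betaExt g p < 1/2}, isOpen_lt (betaExt_continuous g) continuous_const, ?_, ?_⟩
  · simp only [mem_setOf_eq, betaExt_unit]
    have : g x = (f x : ℝ) := rfl
    rw [this, hf0]
    norm_num
  · intro z hz
    simp only [mem_preimage, mem_setOf_eq, betaExt_unit] at hz
    by_contra hzU
    have h1 : f z = 1 := hf1 hzU
    have hgz : g z = (f z : ℝ) := rfl
    rw [hgz, h1] at hz
    norm_num at hz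

lemma isInducing_stoneCechUnit' : Topology.IsInducing (stoneCechUnit : Z → StoneCech Z) := by
  refine ⟨le_antisymm (continuous_iff_le_induced.mp continuous_stoneCechUnit) ?_⟩
  rw [TopologicalSpace.le_def]
  intro U hU
  rw [isOpen_induced_iff]
  have h := fun x : U => exists_open_unit_mem hU x.2
  choose V hVopen hVmem hVsub using h
  refine ⟨⋃ x : U, V x, isOpen_iUnion hVopen, ?_⟩
  ext z
  simp only [mem_preimage, mem_iUnion]
  constructor
  · rintro ⟨x, hx⟩
    exact hVsub x hx
  · intro hz
    exact ⟨⟨z, hz⟩, hVmem _⟩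

lemma isEmbedding_stoneCechUnit' : Topology.IsEmbedding (stoneCechUnit : Z → StoneCech Z) :=
  ⟨isInducing_stoneCechUnit', injective_stoneCechUnit_of_t35Space⟩

end Topo

section Main

open BoundedContinuousFunction in
/-- separation of two points by a bounded continuous function. -/
lemma exists_bcf_sep {Z : Type*} [TopologicalSpace Z] [T35Space Z] {a b : Z} (hab : a ≠ b) :
    ∃ f : BoundedContinuousFunction Z ℝ, f a = 0 ∧ f b = 1 := by
  obtain ⟨f, hf, hf0, hf1⟩ := CompletelyRegularSpace.completely_regular a {b}
    isClosed_singleton (by simpa using hab)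
  refine ⟨⟨⟨fun z => (f z : ℝ), (continuous_subtype_val.comp hf)⟩, 2, ?_⟩, ?_, ?_⟩
  · intro x y
    have hx := (f x).2
    have hy := (f y).2
    rw [Set.mem_Icc] at hx hy
    rw [Real.dist_eq, abs_le]
    constructor <;> simp only [ContinuousMap.coe_mk] <;> linarith
  · show (f a : ℝ) = 0
    rw [hf0]; rfl
  · show (f b : ℝ) = 1
    rw [hf1 rfl]; rfl

variable {Y : Type*} [TopologicalSpace Y] [T35Space Y] {X : Set Y}

lemma forwardMin {r : Y → Set X}
    (h1 : ∀ y, (r y).Nonempty ∧ IsCompact (r y))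
    (h2 : ∀ U : Set X, IsOpen U → IsOpen {y | (r y ∩ U).Nonempty})
    (h3 : ∀ U : Set X, IsOpen U → IsOpen {y | r y ⊆ U})
    (h4 : ∀ x : X, r x = {x}) :
    ∃ u : BoundedContinuousFunction X ℝ → BoundedContinuousFunction Y ℝ,
      (∀ (f : BoundedContinuousFunction X ℝ) (x : X), u f x = f x) ∧
      u 1 = 1 ∧
      (∀ (f : BoundedContinuousFunction X ℝ) (c : ℝ),
        u (f + BoundedContinuousFunction.const X c) =
          u f + BoundedContinuousFunction.const Y c) ∧
      (∀ f g : BoundedContinuousFunction X ℝ, u (f ⊓ g) = u f ⊓ u g) ∧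
      (∀ (f : BoundedContinuousFunction X ℝ) (c : ℝ),
        u (f ⊔ BoundedContinuousFunction.const X c) =
          u f ⊔ BoundedContinuousFunction.const Y c) ∧
      (∀ y : Y, (betaSupport fun f : BoundedContinuousFunction X ℝ => u f y).Nonempty ∧
        (betaSupport fun f : BoundedContinuousFunction X ℝ => u f y) ⊆
          Set.range (stoneCechUnit : X → StoneCech X)) := by
  haveI : T35Space X := t35_subtype X
  -- basic facts about images
  have imne : ∀ (f : BoundedContinuousFunction X ℝ) (y : Y), (f '' r y).Nonempty :=
    fun f y => (h1 y).1.image f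
  have imcomp : ∀ (f : BoundedContinuousFunction X ℝ) (y : Y), IsCompact (f '' r y) :=
    fun f y => (h1 y).2.image f.continuous
  have imbdd : ∀ (f : BoundedContinuousFunction X ℝ) (y : Y), BddBelow (f '' r y) :=
    fun f y => (imcomp f y).bddBelow
  set uf : BoundedContinuousFunction X ℝ → Y → ℝ := fun f y => sInf (f '' r y) with huf
  have hmem : ∀ (f : BoundedContinuousFunction X ℝ) (y : Y), uf f y ∈ f '' r y := fun f y => (imcomp f y).sInf_mem (imne f y)
  have hlb : ∀ (f : BoundedContinuousFunction X ℝ) (y : Y), ∀ x ∈ r y, uf f y ≤ f x :=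
    fun f y x hx => csInf_le (imbdd f y) (mem_image_of_mem f hx)
  have hglb : ∀ (f : BoundedContinuousFunction X ℝ) (y : Y) (c : ℝ), (∀ x ∈ r y, c ≤ f x) → c ≤ uf f y := by
    intro f y c hc
    apply le_csInf (imne f y)
    rintro b ⟨x, hx, rfl⟩
    exact hc x hx
  have hbound : ∀ (f : BoundedContinuousFunction X ℝ) (y : Y), |uf f y| ≤ ‖f‖ := by
    intro f y
    obtain ⟨x, -, hx⟩ := hmem f y
    rw [← hx]
    calc |f x| = ‖f x‖ := (Real.norm_eq_abs _).symm
      _ ≤ ‖f‖ := f.norm_coe_le_norm x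
  -- continuity
  have hIio : ∀ (f : BoundedContinuousFunction X ℝ) (a : ℝ), uf f ⁻¹' Set.Iio a = {y | (r y ∩ (f ⁻¹' Set.Iio a)).Nonempty} := by
    intro f a
    ext y
    simp only [mem_preimage, mem_Iio, mem_setOf_eq]
    constructor
    · intro hy
      obtain ⟨x, hx, hfx⟩ := hmem f y
      exact ⟨x, hx, by simp only [mem_preimage, mem_Iio]; rw [hfx]; exact hy⟩
    · rintro ⟨x, hx, hfx⟩
      simp only [mem_preimage, mem_Iio] at hfx
      exact lt_of_le_of_lt (hlb f y x hx) hfx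
  have hIoi : ∀ (f : BoundedContinuousFunction X ℝ) (a : ℝ), uf f ⁻¹' Set.Ioi a = {y | r y ⊆ f ⁻¹' Set.Ioi a} := by
    intro f a
    ext y
    simp only [mem_preimage, mem_Ioi, mem_setOf_eq]
    constructor
    · intro hy x hx
      simp only [mem_preimage, mem_Ioi]
      exact lt_of_lt_of_le hy (hlb f y x hx)
    · intro hy
      obtain ⟨x, hx, hfx⟩ := hmem f y
      have := hy hx
      simp only [mem_preimage, mem_Ioi] at this
      rw [← hfx]; exact this
  have hcont : ∀ (f : BoundedContinuousFunction X ℝ), Continuous (uf f) := by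
    intro f
    rw [continuous_def]
    intro s hs
    rw [isOpen_iff_generate_intervals] at hs
    induction hs with
    | basic w hw =>
      rcases hw with ⟨a, rfl | rfl⟩
      · rw [hIoi f a]; exact h3 _ (f.continuous.isOpen_preimage _ isOpen_Ioi)
      · rw [hIio f a]; exact h2 _ (f.continuous.isOpen_preimage _ isOpen_Iio)
    | univ => simp
    | inter w v _ _ hw hv => rw [Set.preimage_inter]; exact hw.inter hv
    | sUnion S _ hS => rw [Set.preimage_sUnion]; exact isOpen_biUnion hS
  set u : BoundedContinuousFunction X ℝ → BoundedContinuousFunction Y ℝ :=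
    fun f => ⟨⟨uf f, hcont f⟩, 2 * ‖f‖, by
      intro a b
      have ha := abs_le.mp (hbound f a)
      have hb := abs_le.mp (hbound f b)
      rw [Real.dist_eq, abs_le]
      constructor <;> simp only [ContinuousMap.coe_mk] <;> linarith⟩
    with hu
  refine ⟨u, ?_, ?_, ?_, ?_, ?_, ?_⟩
  · -- extender
    intro f x
    show uf f ↑x = f x
    simp only [huf]
    rw [h4 x, Set.image_singleton, csInf_singleton]
  · -- normed
    ext y
    simp only [BoundedContinuousFunction.coe_one, Pi.one_apply]
    show uf 1 y = 1
    simp only [huf]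
    have : ⇑(1 : BoundedContinuousFunction X ℝ) '' r y = {1} := by
      rw [show ⇑(1 : BoundedContinuousFunction X ℝ) = fun _ => (1:ℝ) from rfl]
      exact (h1 y).1.image_const 1
    rw [this, csInf_singleton]
  · -- weakly additive
    intro f c
    ext y
    simp only [BoundedContinuousFunction.coe_add, BoundedContinuousFunction.const_apply,
      Pi.add_apply]
    show uf (f + BoundedContinuousFunction.const X c) y = uf f y + c
    apply le_antisymm
    · obtain ⟨x, hx, hfx⟩ := hmem f y
      calc uf (f + BoundedContinuousFunction.const X c) y
          ≤ (f + BoundedContinuousFunction.const X c) x := hlb _ y x hx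
        _ = f x + c := by
            simp only [BoundedContinuousFunction.coe_add,
              BoundedContinuousFunction.const_apply, Pi.add_apply]
        _ = uf f y + c := by rw [hfx]
    · apply hglb _ y
      intro x hx
      have := hlb f y x hx
      simp only [BoundedContinuousFunction.coe_add, BoundedContinuousFunction.const_apply,
        Pi.add_apply]
      linarith
  · -- preserves min
    intro f g
    ext y
    simp only [BoundedContinuousFunction.coe_inf, Pi.inf_apply]
    show uf (f ⊓ g) y = min (uf f y) (uf g y)
    apply le_antisymm
    · apply le_min
      · obtain ⟨x, hx, hfx⟩ := hmem f y
        calc uf (f ⊓ g) y ≤ (f ⊓ g) x := hlb _ y x hx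
          _ ≤ f x := by
              simp only [BoundedContinuousFunction.coe_inf, Pi.inf_apply]
              exact min_le_left _ _
          _ = uf f y := hfx
      · obtain ⟨x, hx, hfx⟩ := hmem g y
        calc uf (f ⊓ g) y ≤ (f ⊓ g) x := hlb _ y x hx
          _ ≤ g x := by
              simp only [BoundedContinuousFunction.coe_inf, Pi.inf_apply]
              exact min_le_right _ _
          _ = uf g y := hfx
    · apply hglb _ y
      intro x hx
      simp only [BoundedContinuousFunction.coe_inf, Pi.inf_apply]
      exact min_le_min (hlb f y x hx) (hlb g y x hx)
  · -- weakly preserves max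
    intro f c
    ext y
    simp only [BoundedContinuousFunction.coe_sup, BoundedContinuousFunction.const_apply,
      Pi.sup_apply]
    show uf (f ⊔ BoundedContinuousFunction.const X c) y = max (uf f y) c
    apply le_antisymm
    · obtain ⟨x, hx, hfx⟩ := hmem f y
      calc uf (f ⊔ BoundedContinuousFunction.const X c) y
          ≤ (f ⊔ BoundedContinuousFunction.const X c) x := hlb _ y x hx
        _ = max (f x) c := by
            simp only [BoundedContinuousFunction.coe_sup,
              BoundedContinuousFunction.const_apply, Pi.sup_apply]
        _ = max (uf f y) c := by rw [hfx]
    · apply hglb _ y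
      intro x hx
      simp only [BoundedContinuousFunction.coe_sup, BoundedContinuousFunction.const_apply,
        Pi.sup_apply]
      exact max_le_max (hlb f y x hx) le_rfl
  · -- supports
    intro y
    set μ : BoundedContinuousFunction X ℝ → ℝ := fun f => u f y with hμ
    have hNy : μ 1 = 1 := by
      show uf 1 y = 1
      simp only [huf]
      have : ⇑(1 : BoundedContinuousFunction X ℝ) '' r y = {1} := by
        rw [show ⇑(1 : BoundedContinuousFunction X ℝ) = fun _ => (1:ℝ) from rfl]
        exact (h1 y).1.image_const 1
      rw [this, csInf_singleton]
    have hWAy : ∀ f c, μ (f + BoundedContinuousFunction.const X c) = μ f + c := by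
      intro f c
      show uf (f + BoundedContinuousFunction.const X c) y = uf f y + c
      apply le_antisymm
      · obtain ⟨x, hx, hfx⟩ := hmem f y
        calc uf (f + BoundedContinuousFunction.const X c) y
            ≤ (f + BoundedContinuousFunction.const X c) x := hlb _ y x hx
          _ = f x + c := by
              simp only [BoundedContinuousFunction.coe_add,
                BoundedContinuousFunction.const_apply, Pi.add_apply]
          _ = uf f y + c := by rw [hfx]
      · apply hglb _ y
        intro x hx
        have := hlb f y x hx
        simp only [BoundedContinuousFunction.coe_add, BoundedContinuousFunction.const_apply,
          Pi.add_apply]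
        linarith
    constructor
    · -- nonempty support
      obtain ⟨x₀, hx₀⟩ := (h1 y).1
      have hmemA : stoneCechUnit x₀ ∈ Ahat μ := by
        intro f
        rw [betaExt_unit]
        exact hlb f y x₀ hx₀
      exact ⟨stoneCechUnit x₀, Ahat_subset_betaSupport hNy hWAy hmemA⟩
    · -- support inside the image of X
      have hsub : (betaSupport fun f : BoundedContinuousFunction X ℝ => u f y) ⊆
          stoneCechUnit '' (r y) := by
        intro p hp
        by_contra hpC
        set C : Set (StoneCech X) := stoneCechUnit '' (r y) with hC
        have hCcomp : IsCompact C := (h1 y).2.image continuous_stoneCechUnit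
        have hO : IsOpen Cᶜ := hCcomp.isClosed.isOpen_compl
        obtain ⟨f, g, hfg, hne⟩ := hp Cᶜ hO hpC
        apply hne
        have heq : ∀ x ∈ r y, f x = g x := by
          intro x hx
          have hq : stoneCechUnit x ∉ Cᶜ := fun hc => hc (mem_image_of_mem _ hx)
          have := hfg _ hq
          rwa [betaExt_unit, betaExt_unit] at this
        have himg : ⇑f '' r y = ⇑g '' r y := Set.image_congr heq
        show uf f y = uf g y
        simp only [huf]
        rw [himg]
      exact hsub.trans (Set.image_subset_range _ _)


lemma backwardMin {u : BoundedContinuousFunction X ℝ → BoundedContinuousFunction Y ℝ}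
    (hExt : ∀ (f : BoundedContinuousFunction X ℝ) (x : X), u f x = f x)
    (hN : u 1 = 1)
    (hWA : ∀ (f : BoundedContinuousFunction X ℝ) (c : ℝ),
      u (f + BoundedContinuousFunction.const X c) = u f + BoundedContinuousFunction.const Y c)
    (hMin : ∀ f g : BoundedContinuousFunction X ℝ, u (f ⊓ g) = u f ⊓ u g)
    (hWMax : ∀ (f : BoundedContinuousFunction X ℝ) (c : ℝ),
      u (f ⊔ BoundedContinuousFunction.const X c) = u f ⊔ BoundedContinuousFunction.const Y c)
    (hSupp : ∀ y : Y, (betaSupport fun f : BoundedContinuousFunction X ℝ => u f y).Nonempty ∧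
      (betaSupport fun f : BoundedContinuousFunction X ℝ => u f y) ⊆
        Set.range (stoneCechUnit : X → StoneCech X)) :
    ∃ r : Y → Set X,
      (∀ y, (r y).Nonempty ∧ IsCompact (r y)) ∧
      (∀ U : Set X, IsOpen U → IsOpen {y | (r y ∩ U).Nonempty}) ∧
      (∀ U : Set X, IsOpen U → IsOpen {y | r y ⊆ U}) ∧
      (∀ x : X, r x = {x}) := by
  haveI : T35Space X := t35_subtype X
  set μ : Y → BoundedContinuousFunction X ℝ → ℝ := fun y f => u f y with hμ
  have hNy : ∀ y, μ y 1 = 1 := by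
    intro y
    show u 1 y = 1
    rw [hN]
    simp
  have hWAy : ∀ y f c, μ y (f + BoundedContinuousFunction.const X c) = μ y f + c := by
    intro y f c
    show u (f + BoundedContinuousFunction.const X c) y = u f y + c
    rw [hWA]
    simp
  have hMiny : ∀ y f g, μ y (f ⊓ g) = min (μ y f) (μ y g) := by
    intro y f g
    show u (f ⊓ g) y = min (u f y) (u g y)
    rw [hMin]
    simp [BoundedContinuousFunction.coe_inf]
  have hWMaxy : ∀ y f c, μ y (f ⊔ BoundedContinuousFunction.const X c) = max (μ y f) c := by
    intro y f c
    show u (f ⊔ BoundedContinuousFunction.const X c) y = max (u f y) c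
    rw [hWMax]
    simp [BoundedContinuousFunction.coe_sup]
  set A : Y → Set (StoneCech X) := fun y => Ahat (μ y) with hA
  have hArange : ∀ y, A y ⊆ Set.range (stoneCechUnit : X → StoneCech X) := by
    intro y
    exact (Ahat_subset_betaSupport (hNy y) (hWAy y)).trans (hSupp y).2
  have hAcomp : ∀ y, IsCompact (A y) := fun y => (Ahat_closed (μ y)).isCompact
  have hAne : ∀ y, (A y).Nonempty := fun y =>
    Ahat_nonempty (hNy y) (hWAy y) (hMiny y) (hWMaxy y)
  set r : Y → Set X := fun y => stoneCechUnit ⁻¹' (A y) with hr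
  have hmemr : ∀ y (x : X), x ∈ r y ↔ stoneCechUnit x ∈ A y := fun y x => Iff.rfl
  refine ⟨r, ?_, ?_, ?_, ?_⟩
  · -- nonempty and compact
    intro y
    constructor
    · obtain ⟨p, hp⟩ := hAne y
      obtain ⟨x, rfl⟩ := hArange y hp
      exact ⟨x, hp⟩
    · exact (isInducing_stoneCechUnit'.isCompact_preimage_iff (hArange y)).mpr (hAcomp y)
  · -- lower semicontinuity
    intro U hU
    rw [isOpen_iff_forall_mem_open]
    intro y₀ hy₀
    obtain ⟨x, hxr, hxU⟩ := hy₀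
    obtain ⟨V, hVopen, hVmem, hVsub⟩ := exists_open_unit_mem hU hxU
    obtain ⟨h, h0, h1, hmem01⟩ := exists_continuous_zero_one_of_isClosed
      (X := StoneCech X) isClosed_singleton hVopen.isClosed_compl
      (by
        rw [Set.disjoint_left]
        rintro q rfl
        exact fun hc => hc hVmem)
    set f : BoundedContinuousFunction X ℝ := bPull h with hf
    refine ⟨(u f) ⁻¹' Set.Iio 1, ?_, ?_, ?_⟩
    · intro y hy
      simp only [mem_preimage, mem_Iio] at hy
      obtain ⟨p, hpA, hple⟩ := Ahat_inter_nonempty (hNy y) (hWAy y) (hMiny y) (hWMaxy y) f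
      have hpV : p ∈ V := by
        by_contra hpV
        have : betaExt f p = 1 := by
          rw [hf, betaExt_bPull]
          exact h1 hpV
        rw [this] at hple
        have : u f y < 1 := hy
        show False
        have : μ y f = u f y := rfl
        linarith [hple]
      obtain ⟨x', rfl⟩ := hArange y hpA
      exact ⟨x', hpA, hVsub hpV⟩
    · exact (u f).continuous.isOpen_preimage _ isOpen_Iio
    · simp only [mem_preimage, mem_Iio]
      have hle : μ y₀ f ≤ betaExt f (stoneCechUnit x) := hxr f
      have : betaExt f (stoneCechUnit x) = 0 := by
        rw [hf, betaExt_bPull]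
        exact h0 rfl
      show u f y₀ < 1
      have hμf : μ y₀ f = u f y₀ := rfl
      rw [this] at hle
      linarith
  · -- upper semicontinuity
    intro U hU
    rw [isOpen_iff_forall_mem_open]
    intro y₀ hy₀
    simp only [mem_setOf_eq] at hy₀
    -- cover A y₀ by finitely many good open sets
    have hchoice : ∀ p : A y₀, ∃ V : Set (StoneCech X),
        IsOpen V ∧ (p : StoneCech X) ∈ V ∧ stoneCechUnit ⁻¹' V ⊆ U := by
      rintro ⟨p, hp⟩
      obtain ⟨x, rfl⟩ := hArange y₀ hp
      have hxU : x ∈ U := hy₀ hp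
      exact exists_open_unit_mem hU hxU
    choose V hVopen hVmem hVsub using hchoice
    obtain ⟨t, ht⟩ := (hAcomp y₀).elim_finite_subcover V hVopen
      (fun p hp => mem_iUnion.mpr ⟨⟨p, hp⟩, hVmem _⟩)
    set W : Set (StoneCech X) := ⋃ i ∈ t, V i with hW
    have hWopen : IsOpen W := isOpen_biUnion (fun i _ => hVopen i)
    have hAW : A y₀ ⊆ W := by
      intro p hp
      obtain ⟨i, hi, hpi⟩ := mem_iUnion₂.mp (by
        have := ht hp
        rw [mem_iUnion₂] at this ⊢
        obtain ⟨i, hi1, hi2⟩ := this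
        exact ⟨i, hi1, hi2⟩)
      exact mem_biUnion hi hpi
    have hWU : stoneCechUnit ⁻¹' W ⊆ U := by
      intro x hx
      simp only [hW, mem_preimage, mem_iUnion] at hx
      obtain ⟨i, _, hxi⟩ := hx
      exact hVsub i hxi
    obtain ⟨h, h0, h1, hmem01⟩ := exists_continuous_zero_one_of_isClosed
      (X := StoneCech X) hWopen.isClosed_compl ((Ahat_closed (μ y₀)))
      (by
        rw [Set.disjoint_left]
        intro q hq hqA
        exact hq (hAW hqA))
    set f : BoundedContinuousFunction X ℝ := bPull h with hf
    refine ⟨(u f) ⁻¹' Set.Ioi 0, ?_, ?_, ?_⟩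
    · intro y hy
      simp only [mem_preimage, mem_Ioi] at hy
      simp only [mem_setOf_eq]
      intro x hx
      have hle : μ y f ≤ betaExt f (stoneCechUnit x) := hx f
      have hμf : μ y f = u f y := rfl
      have hβ : betaExt f (stoneCechUnit x) = h (stoneCechUnit x) := by
        rw [hf, betaExt_bPull]
      have hpos : 0 < h (stoneCechUnit x) := by
        rw [← hβ]
        linarith [hle]
      have hxW : stoneCechUnit x ∈ W := by
        by_contra hc
        rw [h0 hc] at hpos
        simp at hpos
      exact hWU hxW
    · exact (u f).continuous.isOpen_preimage _ isOpen_Ioi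
    · simp only [mem_preimage, mem_Ioi]
      obtain ⟨p, hpA, hple⟩ := Ahat_inter_nonempty (hNy y₀) (hWAy y₀) (hMiny y₀) (hWMaxy y₀) f
      have : betaExt f p = 1 := by
        rw [hf, betaExt_bPull]
        exact h1 hpA
      rw [this] at hple
      show (0:ℝ) < u f y₀
      have : μ y₀ f = u f y₀ := rfl
      linarith
  · -- retraction property
    intro x
    ext x'
    simp only [mem_singleton_iff]
    constructor
    · intro hx'
      have hx'A : stoneCechUnit x' ∈ Ahat (μ (x : Y)) := hx'
      by_contra hne
      obtain ⟨f, hf0, hf1⟩ := exists_bcf_sep (a := x) (b := x') (fun hc => hne (by rw [hc]))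
      have h1 := hx'A f
      have h2p := hx'A (-f)
      rw [betaExt_unit] at h1
      have h2 : μ (x:Y) (-f) ≤ -(betaExt f (stoneCechUnit x')) := by
        rw [betaExt_neg] at h2p
        exact h2p
      rw [betaExt_unit] at h2
      have hμf : μ (x:Y) f = f x := by
        show u f (x:Y) = f x
        exact hExt f x
      have hμnf : μ (x:Y) (-f) = -(f x) := by
        show u (-f) (x:Y) = -(f x)
        rw [hExt (-f) x]
        simp
      rw [hμnf] at h2
      rw [hf0, hf1] at h2
      norm_num at h2
    · rintro rfl
      intro f
      rw [betaExt_unit]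
      have : μ (x':Y) f = f x' := hExt f x'
      rw [this]


lemma neg_min_real (a b : ℝ) : -(min a b) = max (-a) (-b) := by
  rcases le_total a b with h | h
  · rw [min_eq_left h, max_eq_left (neg_le_neg h)]
  · rw [min_eq_right h, max_eq_right (neg_le_neg h)]

lemma neg_max_real (a b : ℝ) : -(max a b) = min (-a) (-b) := by
  rcases le_total a b with h | h
  · rw [max_eq_right h, min_eq_right (neg_le_neg h)]
  · rw [max_eq_left h, min_eq_left (neg_le_neg h)]

lemma betaSupport_neg {Z : Type*} [TopologicalSpace Z]
    (ν : BoundedContinuousFunction Z ℝ → ℝ) :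
    betaSupport (fun f => -(ν (-f))) = betaSupport ν := by
  have key : ∀ (ν' : BoundedContinuousFunction Z ℝ → ℝ) p,
      p ∈ betaSupport ν' → p ∈ betaSupport (fun f => -(ν' (-f))) := by
    intro ν' p hp O hO hpO
    obtain ⟨f, g, hfg, hne⟩ := hp O hO hpO
    refine ⟨-f, -g, ?_, ?_⟩
    · intro q hq
      have h1 : betaExt (-f) q = -(betaExt f q) := by rw [betaExt_neg]
      have h2 : betaExt (-g) q = -(betaExt g q) := by rw [betaExt_neg]
      rw [h1, h2, hfg q hq]
    · simp only [neg_neg]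
      intro hc
      exact hne (by rw [← neg_neg (ν' f), hc, neg_neg])
  ext p
  constructor
  · intro hp
    have := key _ p hp
    simp only [neg_neg] at this
    intro O hO hpO
    obtain ⟨f, g, hfg, hne⟩ := this O hO hpO
    exact ⟨f, g, hfg, hne⟩
  · exact key ν p

lemma bcf_neg_add_const {Z : Type*} [TopologicalSpace Z]
    (f : BoundedContinuousFunction Z ℝ) (c : ℝ) :
    -(f + BoundedContinuousFunction.const Z c) = -f + BoundedContinuousFunction.const Z (-c) := by
  ext x; simp; ring

lemma bcf_neg_inf {Z : Type*} [TopologicalSpace Z] (f g : BoundedContinuousFunction Z ℝ) :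
    -(f ⊓ g) = (-f) ⊔ (-g) := by
  ext x
  simp only [BoundedContinuousFunction.coe_neg, BoundedContinuousFunction.coe_sup,
    BoundedContinuousFunction.coe_inf, Pi.neg_apply, Pi.sup_apply, Pi.inf_apply]
  exact neg_min_real _ _

lemma bcf_neg_sup {Z : Type*} [TopologicalSpace Z] (f g : BoundedContinuousFunction Z ℝ) :
    -(f ⊔ g) = (-f) ⊓ (-g) := by
  ext x
  simp only [BoundedContinuousFunction.coe_neg, BoundedContinuousFunction.coe_sup,
    BoundedContinuousFunction.coe_inf, Pi.neg_apply, Pi.sup_apply, Pi.inf_apply]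
  exact neg_max_real _ _

lemma bcf_neg_const {Z : Type*} [TopologicalSpace Z] (c : ℝ) :
    -(BoundedContinuousFunction.const Z c) = BoundedContinuousFunction.const Z (-c) := by
  ext x; simp

section Conv

variable {Y : Type*} [TopologicalSpace Y] {X : Set Y}

/-- conversion between max-type and min-type extenders. -/
lemma convMaxToMin {u : BoundedContinuousFunction X ℝ → BoundedContinuousFunction Y ℝ}
    (hExt : ∀ (f : BoundedContinuousFunction X ℝ) (x : X), u f x = f x)
    (hN : u 1 = 1)
    (hWA : ∀ (f : BoundedContinuousFunction X ℝ) (c : ℝ),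
      u (f + BoundedContinuousFunction.const X c) = u f + BoundedContinuousFunction.const Y c)
    (hMax : ∀ f g : BoundedContinuousFunction X ℝ, u (f ⊔ g) = u f ⊔ u g)
    (hWMin : ∀ (f : BoundedContinuousFunction X ℝ) (c : ℝ),
      u (f ⊓ BoundedContinuousFunction.const X c) = u f ⊓ BoundedContinuousFunction.const Y c)
    (hSupp : ∀ y : Y, (betaSupport fun f : BoundedContinuousFunction X ℝ => u f y).Nonempty ∧
      (betaSupport fun f : BoundedContinuousFunction X ℝ => u f y) ⊆
        Set.range (stoneCechUnit : X → StoneCech X)) :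
    ∀ v : BoundedContinuousFunction X ℝ → BoundedContinuousFunction Y ℝ,
      v = (fun f => -(u (-f))) →
      (∀ (f : BoundedContinuousFunction X ℝ) (x : X), v f x = f x) ∧
      v 1 = 1 ∧
      (∀ (f : BoundedContinuousFunction X ℝ) (c : ℝ),
        v (f + BoundedContinuousFunction.const X c) =
          v f + BoundedContinuousFunction.const Y c) ∧
      (∀ f g : BoundedContinuousFunction X ℝ, v (f ⊓ g) = v f ⊓ v g) ∧
      (∀ (f : BoundedContinuousFunction X ℝ) (c : ℝ),
        v (f ⊔ BoundedContinuousFunction.const X c) =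
          v f ⊔ BoundedContinuousFunction.const Y c) ∧
      (∀ y : Y, (betaSupport fun f : BoundedContinuousFunction X ℝ => v f y).Nonempty ∧
        (betaSupport fun f : BoundedContinuousFunction X ℝ => v f y) ⊆
          Set.range (stoneCechUnit : X → StoneCech X)) := by
  rintro v rfl
  have hu0 : u 0 = 0 := by
    have h1 : (1 : BoundedContinuousFunction X ℝ) + BoundedContinuousFunction.const X (-1) = 0 := by
      ext x; simp
    have h2 : (1 : BoundedContinuousFunction Y ℝ) + BoundedContinuousFunction.const Y (-1) = 0 := by
      ext y; simp
    have := hWA 1 (-1)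
    rw [h1, hN, h2] at this
    exact this
  have huneg1 : u (-1) = -1 := by
    have h1 : (-1 : BoundedContinuousFunction X ℝ) =
        0 + BoundedContinuousFunction.const X (-1) := by ext x; simp
    have h2 : (0 : BoundedContinuousFunction Y ℝ) + BoundedContinuousFunction.const Y (-1) =
        -1 := by ext y; simp
    rw [h1, hWA, hu0, h2]
  refine ⟨?_, ?_, ?_, ?_, ?_, ?_⟩
  · intro f x
    have : (-(u (-f))) x = -((u (-f)) x) := by simp
    rw [this, hExt (-f) x]
    simp
  · simp only
    rw [huneg1]
    simp
  · intro f c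
    simp only
    rw [bcf_neg_add_const, hWA]
    ext y
    simp
    ring
  · intro f g
    simp only
    rw [bcf_neg_inf, hMax, bcf_neg_sup (u (-f)) (u (-g))]
  · intro f c
    simp only
    rw [show -(f ⊔ BoundedContinuousFunction.const X c) =
      (-f) ⊓ BoundedContinuousFunction.const X (-c) by rw [bcf_neg_sup, bcf_neg_const]]
    rw [hWMin]
    rw [show -((u (-f)) ⊓ BoundedContinuousFunction.const Y (-c)) =
      (-(u (-f))) ⊔ BoundedContinuousFunction.const Y c by rw [bcf_neg_inf, bcf_neg_const, neg_neg]]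
  · intro y
    set ν : BoundedContinuousFunction X ℝ → ℝ := fun g => u g y with hν
    have hfun : (fun f : BoundedContinuousFunction X ℝ => (-(u (-f))) y) =
        fun f : BoundedContinuousFunction X ℝ => -(ν (-f)) := by
      funext f
      simp [hν]
    rw [hfun, betaSupport_neg]
    exact hSupp y



/-- conversion from min-type to max-type extenders. -/
lemma convMinToMax {u : BoundedContinuousFunction X ℝ → BoundedContinuousFunction Y ℝ}
    (hExt : ∀ (f : BoundedContinuousFunction X ℝ) (x : X), u f x = f x)
    (hN : u 1 = 1)
    (hWA : ∀ (f : BoundedContinuousFunction X ℝ) (c : ℝ),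
      u (f + BoundedContinuousFunction.const X c) = u f + BoundedContinuousFunction.const Y c)
    (hMin : ∀ f g : BoundedContinuousFunction X ℝ, u (f ⊓ g) = u f ⊓ u g)
    (hWMax : ∀ (f : BoundedContinuousFunction X ℝ) (c : ℝ),
      u (f ⊔ BoundedContinuousFunction.const X c) = u f ⊔ BoundedContinuousFunction.const Y c)
    (hSupp : ∀ y : Y, (betaSupport fun f : BoundedContinuousFunction X ℝ => u f y).Nonempty ∧
      (betaSupport fun f : BoundedContinuousFunction X ℝ => u f y) ⊆
        Set.range (stoneCechUnit : X → StoneCech X)) :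
    ∀ v : BoundedContinuousFunction X ℝ → BoundedContinuousFunction Y ℝ,
      v = (fun f => -(u (-f))) →
      (∀ (f : BoundedContinuousFunction X ℝ) (x : X), v f x = f x) ∧
      v 1 = 1 ∧
      (∀ (f : BoundedContinuousFunction X ℝ) (c : ℝ),
        v (f + BoundedContinuousFunction.const X c) =
          v f + BoundedContinuousFunction.const Y c) ∧
      (∀ f g : BoundedContinuousFunction X ℝ, v (f ⊔ g) = v f ⊔ v g) ∧
      (∀ (f : BoundedContinuousFunction X ℝ) (c : ℝ),
        v (f ⊓ BoundedContinuousFunction.const X c) =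
          v f ⊓ BoundedContinuousFunction.const Y c) ∧
      (∀ y : Y, (betaSupport fun f : BoundedContinuousFunction X ℝ => v f y).Nonempty ∧
        (betaSupport fun f : BoundedContinuousFunction X ℝ => v f y) ⊆
          Set.range (stoneCechUnit : X → StoneCech X)) := by
  rintro v rfl
  have hu0 : u 0 = 0 := by
    have h1 : (1 : BoundedContinuousFunction X ℝ) + BoundedContinuousFunction.const X (-1) = 0 := by
      ext x; simp
    have h2 : (1 : BoundedContinuousFunction Y ℝ) + BoundedContinuousFunction.const Y (-1) = 0 := by
      ext y; simp
    have := hWA 1 (-1)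
    rw [h1, hN, h2] at this
    exact this
  have huneg1 : u (-1) = -1 := by
    have h1 : (-1 : BoundedContinuousFunction X ℝ) =
        0 + BoundedContinuousFunction.const X (-1) := by ext x; simp
    have h2 : (0 : BoundedContinuousFunction Y ℝ) + BoundedContinuousFunction.const Y (-1) =
        -1 := by ext y; simp
    rw [h1, hWA, hu0, h2]
  refine ⟨?_, ?_, ?_, ?_, ?_, ?_⟩
  · intro f x
    have : (-(u (-f))) x = -((u (-f)) x) := by simp
    rw [this, hExt (-f) x]
    simp
  · simp only
    rw [huneg1]
    simp
  · intro f c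
    simp only
    rw [bcf_neg_add_const, hWA]
    ext y
    simp
    ring
  · intro f g
    simp only
    rw [bcf_neg_sup, hMin, bcf_neg_inf (u (-f)) (u (-g))]
  · intro f c
    simp only
    rw [show -(f ⊓ BoundedContinuousFunction.const X c) =
      (-f) ⊔ BoundedContinuousFunction.const X (-c) by rw [bcf_neg_inf, bcf_neg_const]]
    rw [hWMax]
    rw [show -((u (-f)) ⊔ BoundedContinuousFunction.const Y (-c)) =
      (-(u (-f))) ⊓ BoundedContinuousFunction.const Y c by rw [bcf_neg_sup, bcf_neg_const, neg_neg]]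
  · intro y
    set ν : BoundedContinuousFunction X ℝ → ℝ := fun g => u g y with hν
    have hfun : (fun f : BoundedContinuousFunction X ℝ => (-(u (-f))) y) =
        fun f : BoundedContinuousFunction X ℝ => -(ν (-f)) := by
      funext f
      simp [hν]
    rw [hfun, betaSupport_neg]
    exact hSupp y

end Conv

theorem statement15' {Y : Type*} [TopologicalSpace Y] [T35Space Y] (X : Set Y) :
    ((∃ r : Y → Set X,
        (∀ y, (r y).Nonempty ∧ IsCompact (r y)) ∧
        (∀ U : Set X, IsOpen U → IsOpen {y | (r y ∩ U).Nonempty}) ∧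
        (∀ U : Set X, IsOpen U → IsOpen {y | r y ⊆ U}) ∧
        (∀ x : X, r x = {x})) ↔
      (∃ u : BoundedContinuousFunction X ℝ → BoundedContinuousFunction Y ℝ,
        (∀ (f : BoundedContinuousFunction X ℝ) (x : X), u f x = f x) ∧
        u 1 = 1 ∧
        (∀ (f : BoundedContinuousFunction X ℝ) (c : ℝ),
          u (f + BoundedContinuousFunction.const X c) =
            u f + BoundedContinuousFunction.const Y c) ∧
        (∀ f g : BoundedContinuousFunction X ℝ, u (f ⊓ g) = u f ⊓ u g) ∧
        (∀ (f : BoundedContinuousFunction X ℝ) (c : ℝ),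
          u (f ⊔ BoundedContinuousFunction.const X c) =
            u f ⊔ BoundedContinuousFunction.const Y c) ∧
        (∀ y : Y, (betaSupport fun f : BoundedContinuousFunction X ℝ => u f y).Nonempty ∧
          (betaSupport fun f : BoundedContinuousFunction X ℝ => u f y) ⊆
            Set.range (stoneCechUnit : X → StoneCech X)))) ∧
    ((∃ r : Y → Set X,
        (∀ y, (r y).Nonempty ∧ IsCompact (r y)) ∧
        (∀ U : Set X, IsOpen U → IsOpen {y | (r y ∩ U).Nonempty}) ∧
        (∀ U : Set X, IsOpen U → IsOpen {y | r y ⊆ U}) ∧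
        (∀ x : X, r x = {x})) ↔
      (∃ u : BoundedContinuousFunction X ℝ → BoundedContinuousFunction Y ℝ,
        (∀ (f : BoundedContinuousFunction X ℝ) (x : X), u f x = f x) ∧
        u 1 = 1 ∧
        (∀ (f : BoundedContinuousFunction X ℝ) (c : ℝ),
          u (f + BoundedContinuousFunction.const X c) =
            u f + BoundedContinuousFunction.const Y c) ∧
        (∀ f g : BoundedContinuousFunction X ℝ, u (f ⊔ g) = u f ⊔ u g) ∧
        (∀ (f : BoundedContinuousFunction X ℝ) (c : ℝ),
          u (f ⊓ BoundedContinuousFunction.const X c) =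
            u f ⊓ BoundedContinuousFunction.const Y c) ∧
        (∀ y : Y, (betaSupport fun f : BoundedContinuousFunction X ℝ => u f y).Nonempty ∧
          (betaSupport fun f : BoundedContinuousFunction X ℝ => u f y) ⊆
            Set.range (stoneCechUnit : X → StoneCech X)))) := by
  constructor
  · constructor
    · rintro ⟨r, h1, h2, h3, h4⟩
      exact forwardMin h1 h2 h3 h4
    · rintro ⟨u, hExt, hN, hWA, hMin, hWMax, hSupp⟩
      exact backwardMin hExt hN hWA hMin hWMax hSupp
  · constructor
    · rintro ⟨r, h1, h2, h3, h4⟩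
      obtain ⟨u, hExt, hN, hWA, hMin, hWMax, hSupp⟩ := forwardMin h1 h2 h3 h4
      exact ⟨fun f => -(u (-f)), convMinToMax hExt hN hWA hMin hWMax hSupp _ rfl⟩
    · rintro ⟨u, hExt, hN, hWA, hMax, hWMin, hSupp⟩
      obtain ⟨hExt', hN', hWA', hMin', hWMax', hSupp'⟩ :=
        convMaxToMin hExt hN hWA hMax hWMin hSupp (fun f => -(u (-f))) rfl
      exact backwardMin hExt' hN' hWA' hMin' hWMax' hSupp'

end Main

/-- for a subspace `X ⊆ Y`, there is a continuous compact-valued retraction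
`r : Y → X` (nonempty compact values in `X`, `r x = {x}` for `x ∈ X`) iff there is a normed,
weakly additive extender `u : C*(X) → C*(Y)` with compact supports preserving min and weakly
preserving max, iff there is such an extender preserving max and weakly preserving min. -/
theorem statement15 {Y : Type*} [TopologicalSpace Y] [T35Space Y] (X : Set Y) :
    ((∃ r : Y → Set X,
        (∀ y, (r y).Nonempty ∧ IsCompact (r y)) ∧
        (∀ U : Set X, IsOpen U → IsOpen {y | (r y ∩ U).Nonempty}) ∧
        (∀ U : Set X, IsOpen U → IsOpen {y | r y ⊆ U}) ∧
        (∀ x : X, r x = {x})) ↔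
      (∃ u : BoundedContinuousFunction X ℝ → BoundedContinuousFunction Y ℝ,
        (∀ (f : BoundedContinuousFunction X ℝ) (x : X), u f x = f x) ∧
        u 1 = 1 ∧
        (∀ (f : BoundedContinuousFunction X ℝ) (c : ℝ),
          u (f + BoundedContinuousFunction.const X c) =
            u f + BoundedContinuousFunction.const Y c) ∧
        (∀ f g : BoundedContinuousFunction X ℝ, u (f ⊓ g) = u f ⊓ u g) ∧
        (∀ (f : BoundedContinuousFunction X ℝ) (c : ℝ),
          u (f ⊔ BoundedContinuousFunction.const X c) =
            u f ⊔ BoundedContinuousFunction.const Y c) ∧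
        (∀ y : Y, (betaSupport fun f : BoundedContinuousFunction X ℝ => u f y).Nonempty ∧
          (betaSupport fun f : BoundedContinuousFunction X ℝ => u f y) ⊆
            Set.range (stoneCechUnit : X → StoneCech X)))) ∧
    ((∃ r : Y → Set X,
        (∀ y, (r y).Nonempty ∧ IsCompact (r y)) ∧
        (∀ U : Set X, IsOpen U → IsOpen {y | (r y ∩ U).Nonempty}) ∧
        (∀ U : Set X, IsOpen U → IsOpen {y | r y ⊆ U}) ∧
        (∀ x : X, r x = {x})) ↔
      (∃ u : BoundedContinuousFunction X ℝ → BoundedContinuousFunction Y ℝ,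
        (∀ (f : BoundedContinuousFunction X ℝ) (x : X), u f x = f x) ∧
        u 1 = 1 ∧
        (∀ (f : BoundedContinuousFunction X ℝ) (c : ℝ),
          u (f + BoundedContinuousFunction.const X c) =
            u f + BoundedContinuousFunction.const Y c) ∧
        (∀ f g : BoundedContinuousFunction X ℝ, u (f ⊔ g) = u f ⊔ u g) ∧
        (∀ (f : BoundedContinuousFunction X ℝ) (c : ℝ),
          u (f ⊓ BoundedContinuousFunction.const X c) =
            u f ⊓ BoundedContinuousFunction.const Y c) ∧
        (∀ y : Y, (betaSupport fun f : BoundedContinuousFunction X ℝ => u f y).Nonempty ∧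
          (betaSupport fun f : BoundedContinuousFunction X ℝ => u f y) ⊆
            Set.range (stoneCechUnit : X → StoneCech X)))) := by
  exact statement15' X
end

section
/- Let Y be a Tychonoff space and X ⊆ Y a subspace. The following are equivalent: (i) there exists an upper semicontinuous compact-valued set-valued map r : Y → βX with r(x) = {η(x)} for all x ∈ X; (ii) there exists an extender u : C*(X) → C*_lsc(Y) which is normed, weakly additive, preserves min and weakly preserves max; (iii) there exists an extender u : C*(X) → C*_usc(Y) which is normed, weakly additive, preserves max and weakly preserves min. -/
open Set BoundedContinuousFunction

namespace S16
variable {Z : Type*} [TopologicalSpace Z]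


def bmap (f : BoundedContinuousFunction Z ℝ) (x : Z) : Icc (-‖f‖) ‖f‖ :=
  ⟨f x, by
    have := abs_le.1 (f.norm_coe_le_norm x)
    exact ⟨this.1, this.2⟩⟩

lemma bmap_cont (f : BoundedContinuousFunction Z ℝ) : Continuous (bmap f) :=
  f.continuous.subtype_mk _

noncomputable def bext (f : BoundedContinuousFunction Z ℝ) : StoneCech Z → ℝ :=
  fun p => Subtype.val (stoneCechExtend (bmap_cont f) p)

lemma bext_continuous (f : BoundedContinuousFunction Z ℝ) : Continuous (bext f) :=
  continuous_subtype_val.comp (continuous_stoneCechExtend _)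

lemma bext_unit (f : BoundedContinuousFunction Z ℝ) (x : Z) :
    bext f (stoneCechUnit x) = f x :=
  congrArg Subtype.val (congrFun (stoneCechExtend_extends (bmap_cont f)) x)

lemma bext_bound (f : BoundedContinuousFunction Z ℝ) (p : StoneCech Z) :
    |bext f p| ≤ ‖f‖ := by
  have h := (stoneCechExtend (bmap_cont f) p).2
  rw [abs_le]; exact ⟨h.1, h.2⟩

lemma bext_eq_of {f : BoundedContinuousFunction Z ℝ} {H : StoneCech Z → ℝ}
    (hH : Continuous H) (h : ∀ x, H (stoneCechUnit x) = f x) : H = bext f := by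
  apply stoneCech_hom_ext hH (bext_continuous f)
  funext x
  simp [h x, bext_unit]

lemma bext_one : bext (1 : BoundedContinuousFunction Z ℝ) = fun _ => 1 :=
  (bext_eq_of continuous_const (fun x => by simp)).symm

lemma bext_add_const (f : BoundedContinuousFunction Z ℝ) (c : ℝ) :
    bext (f + const Z c) = fun p => bext f p + c :=
  (bext_eq_of ((bext_continuous f).add continuous_const)
    (fun x => by simp [bext_unit])).symm

lemma bext_inf (f g : BoundedContinuousFunction Z ℝ) :
    bext (f ⊓ g) = fun p => min (bext f p) (bext g p) :=
  (bext_eq_of ((bext_continuous f).min (bext_continuous g))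
    (fun x => by simp [bext_unit])).symm

lemma bext_sup_const (f : BoundedContinuousFunction Z ℝ) (c : ℝ) :
    bext (f ⊔ const Z c) = fun p => max (bext f p) c :=
  (bext_eq_of ((bext_continuous f).max continuous_const)
    (fun x => by simp [bext_unit])).symm

lemma bext_mono {f g : BoundedContinuousFunction Z ℝ} (h : f ≤ g) (p : StoneCech Z) :
    bext f p ≤ bext g p := by
  have : f ⊓ g = f := inf_eq_left.2 h
  have h2 := congrFun (bext_inf f g) p
  rw [this] at h2
  rw [h2]; exact min_le_right _ _



lemma exists_min {K : Set (StoneCech Z)} (hne : K.Nonempty) (hK : IsCompact K)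
    {F : StoneCech Z → ℝ} (hF : Continuous F) :
    ∃ p ∈ K, sInf (F '' K) = F p ∧ ∀ q ∈ K, F p ≤ F q := by
  obtain ⟨p, hp, hmin⟩ := hK.exists_isMinOn hne hF.continuousOn
  refine ⟨p, hp, ?_, fun q hq => hmin hq⟩
  refine le_antisymm (csInf_le (hK.image hF).bddBelow ⟨p, hp, rfl⟩) ?_
  exact le_csInf (hne.image F) (by rintro _ ⟨q, hq, rfl⟩; exact hmin hq)


variable {Y : Type*} [TopologicalSpace Y] {X : Set Y}

/-- (i) → (ii) -/
lemma dir12 (X : Set Y)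
    (h : ∃ r : Y → Set (StoneCech X),
        (∀ y, (r y).Nonempty ∧ IsCompact (r y)) ∧
        (∀ U : Set (StoneCech X), IsOpen U → IsOpen {y | r y ⊆ U}) ∧
        (∀ x : X, r x = {stoneCechUnit x})) :
    (∃ u : BoundedContinuousFunction X ℝ → Y → ℝ,
        (∀ f, LowerSemicontinuous (u f)) ∧
        (∀ f, ∃ M : ℝ, ∀ y, |u f y| ≤ M) ∧
        (∀ (f : BoundedContinuousFunction X ℝ) (x : X), u f x = f x) ∧
        (∀ y, u 1 y = 1) ∧
        (∀ (f : BoundedContinuousFunction X ℝ) (c : ℝ) (y : Y),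
          u (f + BoundedContinuousFunction.const X c) y = u f y + c) ∧
        (∀ (f g : BoundedContinuousFunction X ℝ) (y : Y),
          u (f ⊓ g) y = min (u f y) (u g y)) ∧
        (∀ (f : BoundedContinuousFunction X ℝ) (c : ℝ) (y : Y),
          u (f ⊔ BoundedContinuousFunction.const X c) y = max (u f y) c)) := by
  obtain ⟨r, hrc, husc, hrx⟩ := h
  refine ⟨fun f y => sInf (bext f '' r y), ?_, ?_, ?_, ?_, ?_, ?_, ?_⟩
  · -- lower semicontinuous
    intro f y t ht
    dsimp only at ht ⊢
    obtain ⟨p, hp, heq, hmin⟩ := exists_min (hrc y).1 (hrc y).2 (bext_continuous f)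
    rw [heq] at ht
    have hsub : r y ⊆ bext f ⁻¹' Ioi t := fun q hq => lt_of_lt_of_le ht (hmin q hq)
    have hopen := husc (bext f ⁻¹' Ioi t) ((isOpen_Ioi (a := t)).preimage (bext_continuous f))
    filter_upwards [hopen.mem_nhds hsub] with y' hy'
    obtain ⟨p', hp', heq', _⟩ := exists_min (hrc y').1 (hrc y').2 (bext_continuous f)
    rw [heq']
    exact hy' hp'
  · -- bounded
    intro f
    refine ⟨‖f‖, fun y => ?_⟩
    dsimp only
    obtain ⟨p, hp, heq, _⟩ := exists_min (hrc y).1 (hrc y).2 (bext_continuous f)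
    rw [heq]; exact bext_bound f p
  · -- extender
    intro f x
    dsimp only
    rw [hrx x, image_singleton, csInf_singleton, bext_unit]
  · -- normed
    intro y
    dsimp only
    obtain ⟨p, hp, heq, _⟩ := exists_min (hrc y).1 (hrc y).2
      (bext_continuous (1 : BoundedContinuousFunction X ℝ))
    rw [heq, bext_one]
  · -- weakly additive
    intro f c y
    dsimp only
    obtain ⟨p, hp, heq, hmin⟩ := exists_min (hrc y).1 (hrc y).2 (bext_continuous f)
    obtain ⟨q, hq, heq', hmin'⟩ := exists_min (hrc y).1 (hrc y).2
      (bext_continuous (f + const X c))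
    rw [heq, heq', bext_add_const]
    have h1 : bext f q + c ≤ bext f p + c := by
      have := hmin' p hp; rw [bext_add_const] at this; simpa using this
    have h2 : bext f p ≤ bext f q := hmin q hq
    dsimp only; linarith
  · -- min
    intro f g y
    show sInf (bext (f ⊓ g) '' r y) = min (sInf (bext f '' r y)) (sInf (bext g '' r y))
    obtain ⟨p, hp, heqf, hminf⟩ := exists_min (hrc y).1 (hrc y).2 (bext_continuous f)
    obtain ⟨q, hq, heqg, hming⟩ := exists_min (hrc y).1 (hrc y).2 (bext_continuous g)
    obtain ⟨s, hs, heqi, hmini⟩ := exists_min (hrc y).1 (hrc y).2 (bext_continuous (f ⊓ g))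
    rw [heqf, heqg, heqi]
    have hio : ∀ t, bext (f ⊓ g) t = min (bext f t) (bext g t) :=
      fun t => congrFun (bext_inf f g) t
    have h1 := hmini p hp
    have h2 := hmini q hq
    have h3 := hminf s hs
    have h4 := hming s hs
    rw [hio, hio] at h1
    rw [hio, hio] at h2
    rw [hio]
    apply le_antisymm
    · exact le_min (h1.trans (min_le_left _ _)) (h2.trans (min_le_right _ _))
    · exact min_le_min h3 h4
  · -- weak max
    intro f c y
    show sInf (bext (f ⊔ const X c) '' r y) = max (sInf (bext f '' r y)) c
    obtain ⟨p, hp, heqf, hminf⟩ := exists_min (hrc y).1 (hrc y).2 (bext_continuous f)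
    obtain ⟨s, hs, heqi, hmini⟩ := exists_min (hrc y).1 (hrc y).2
      (bext_continuous (f ⊔ const X c))
    rw [heqf, heqi]
    have hio : ∀ t, bext (f ⊔ const X c) t = max (bext f t) c :=
      fun t => congrFun (bext_sup_const f c) t
    have h1 := hmini p hp
    have h3 := hminf s hs
    rw [hio, hio] at h1
    rw [hio]
    exact le_antisymm (h1.trans (max_le_max le_rfl le_rfl)) (max_le_max h3 le_rfl)


lemma v_inf' {Z : Type*} [TopologicalSpace Z] (v : BoundedContinuousFunction Z ℝ → ℝ)
    (hv : ∀ f g, v (f ⊓ g) = min (v f) (v g)) {ι : Type*} {T : Finset ι} (hT : T.Nonempty)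
    (F : ι → BoundedContinuousFunction Z ℝ) :
    v (T.inf' hT F) = T.inf' hT fun i => v (F i) := by
  induction hT using Finset.Nonempty.cons_induction with
  | singleton a => simp
  | cons a s ha hs ih => rw [Finset.inf'_cons hs, Finset.inf'_cons hs, hv, ih]

/-- (ii) → (i) -/
lemma dir21 (X : Set Y)
    (h : ∃ u : BoundedContinuousFunction X ℝ → Y → ℝ,
        (∀ f, LowerSemicontinuous (u f)) ∧
        (∀ f, ∃ M : ℝ, ∀ y, |u f y| ≤ M) ∧
        (∀ (f : BoundedContinuousFunction X ℝ) (x : X), u f x = f x) ∧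
        (∀ y, u 1 y = 1) ∧
        (∀ (f : BoundedContinuousFunction X ℝ) (c : ℝ) (y : Y),
          u (f + BoundedContinuousFunction.const X c) y = u f y + c) ∧
        (∀ (f g : BoundedContinuousFunction X ℝ) (y : Y),
          u (f ⊓ g) y = min (u f y) (u g y)) ∧
        (∀ (f : BoundedContinuousFunction X ℝ) (c : ℝ) (y : Y),
          u (f ⊔ BoundedContinuousFunction.const X c) y = max (u f y) c)) :
    (∃ r : Y → Set (StoneCech X),
        (∀ y, (r y).Nonempty ∧ IsCompact (r y)) ∧
        (∀ U : Set (StoneCech X), IsOpen U → IsOpen {y | r y ⊆ U}) ∧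
        (∀ x : X, r x = {stoneCechUnit x})) := by
  obtain ⟨u, hlsc, _hbd, hext, hone, hadd, hinf, hsup⟩ := h
  have hconst : ∀ (c : ℝ) (y : Y), u (const X c) y = c := by
    intro c y
    have hc : (const X c : BoundedContinuousFunction X ℝ) = 1 + const X (c - 1) := by
      ext x; simp
    rw [hc, hadd, hone]; ring
  set r : Y → Set (StoneCech X) := fun y => {p | ∀ f, u f y ≤ bext f p} with hr
  have hclosed : ∀ y, IsClosed (r y) := by
    intro y
    have : r y = ⋂ f, {p | u f y ≤ bext f p} := by
      ext p; simp [hr, mem_iInter]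
    rw [this]
    exact isClosed_iInter fun f => isClosed_le continuous_const (bext_continuous f)
  have hne : ∀ y, (r y).Nonempty := by
    intro y
    by_contra hcon
    rw [not_nonempty_iff_eq_empty] at hcon
    rcases isEmpty_or_nonempty X with hX | hX
    · have h1 : (1 : BoundedContinuousFunction X ℝ) = 1 + const X 1 := by
        ext x; exact hX.elim x
      have h2 := hadd 1 1 y
      rw [← h1, hone] at h2
      linarith
    · have hSCne : Nonempty (StoneCech X) := ⟨stoneCechUnit hX.some⟩
      have hcover : (univ : Set (StoneCech X)) ⊆
          ⋃ f : BoundedContinuousFunction X ℝ, {p | bext f p < u f y} := by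
        intro p _
        by_contra hp2
        simp only [mem_iUnion, mem_setOf_eq, not_exists, not_lt] at hp2
        have : p ∈ r y := hp2
        rw [hcon] at this
        exact this
      obtain ⟨T, hT⟩ := isCompact_univ.elim_finite_subcover _
        (fun f : BoundedContinuousFunction X ℝ =>
          isOpen_lt (bext_continuous f) continuous_const) hcover
      have hTne : T.Nonempty := by
        obtain ⟨p⟩ := hSCne
        have hp := hT (mem_univ p)
        simp only [mem_iUnion, exists_prop] at hp
        obtain ⟨f, hf, _⟩ := hp
        exact ⟨f, hf⟩
      set g := T.inf' hTne (fun f => f + const X (-(u f y))) with hg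
      have hug : u g y = 0 := by
        rw [hg, v_inf' (fun f => u f y) (fun f g => hinf f g y)]
        have : ∀ f ∈ T, u (f + const X (-(u f y))) y = 0 := by
          intro f _; rw [hadd]; ring
        rw [Finset.inf'_congr hTne rfl this]
        exact Finset.inf'_const hTne 0
      have hgneg : ∀ p, bext g p < 0 := by
        intro p
        have hp := hT (mem_univ p)
        simp only [mem_iUnion, exists_prop] at hp
        obtain ⟨f, hfT, hf⟩ := hp
        have h1 : g ≤ f + const X (-(u f y)) := Finset.inf'_le _ hfT
        have h2 := bext_mono h1 p
        rw [bext_add_const] at h2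
        dsimp only at h2
        simp only [mem_setOf_eq] at hf
        linarith
      obtain ⟨p1, _, hmax⟩ := isCompact_univ.exists_isMaxOn univ_nonempty
        (bext_continuous g).continuousOn
      set ε := -(bext g p1) with hε
      have hεpos : 0 < ε := by have := hgneg p1; linarith
      have hgle : ∀ x : X, g x ≤ -ε := by
        intro x
        have h1 : bext g (stoneCechUnit x) ≤ bext g p1 := hmax (mem_univ _)
        rw [bext_unit] at h1
        linarith
      have hgsup : g ⊔ const X (-ε) = const X (-ε) := by
        ext x
        simp only [BoundedContinuousFunction.coe_sup, Pi.sup_apply, const_apply]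
        exact sup_eq_right.2 (hgle x)
      have h3 := hsup g (-ε) y
      rw [hgsup, hconst, hug] at h3
      rw [max_eq_left (by linarith)] at h3
      linarith
  have husc : ∀ U : Set (StoneCech X), IsOpen U → IsOpen {y | r y ⊆ U} := by
    intro U hU
    rw [isOpen_iff_mem_nhds]
    intro y hy
    have hKc : IsCompact Uᶜ := hU.isClosed_compl.isCompact
    have hchoice : ∀ p : (Uᶜ : Set (StoneCech X)),
        ∃ fc : BoundedContinuousFunction X ℝ × ℝ,
          bext fc.1 p.1 < fc.2 ∧ fc.2 < u fc.1 y := by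
      rintro ⟨p, hp⟩
      have hpr : p ∉ r y := fun hmem => hp (hy hmem)
      simp only [hr, mem_setOf_eq, not_forall, not_le] at hpr
      obtain ⟨f, hf⟩ := hpr
      exact ⟨(f, (bext f p + u f y) / 2), by dsimp only; linarith, by dsimp only; linarith⟩
    choose fc hfc1 hfc2 using hchoice
    obtain ⟨T, hT⟩ := hKc.elim_finite_subcover
      (fun p : (Uᶜ : Set (StoneCech X)) => {q | bext (fc p).1 q < (fc p).2})
      (fun p => isOpen_lt (bext_continuous _) continuous_const)
      (fun q hq => mem_iUnion.2 ⟨⟨q, hq⟩, hfc1 ⟨q, hq⟩⟩)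
    have hN : ∀ p ∈ T, {y' | (fc p).2 < u (fc p).1 y'} ∈ nhds y :=
      fun p _ => hlsc (fc p).1 y (fc p).2 (hfc2 p)
    have hmem := (Filter.biInter_finset_mem T).2 hN
    apply Filter.mem_of_superset hmem
    intro y' hy'
    intro q hq
    by_contra hqU
    have hqT := hT hqU
    simp only [mem_iUnion, exists_prop, mem_setOf_eq] at hqT
    obtain ⟨p, hpT, hpW⟩ := hqT
    have h1 : u (fc p).1 y' ≤ bext (fc p).1 q := hq (fc p).1
    have h2 : (fc p).2 < u (fc p).1 y' := by
      have := mem_iInter₂.1 hy' p hpT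
      exact this
    linarith
  have hx : ∀ x : X, r x = {stoneCechUnit x} := by
    intro x
    apply le_antisymm
    · intro p hp
      by_contra hpx
      simp only [mem_singleton_iff] at hpx
      obtain ⟨g0, hg0p, hg0x, hgicc⟩ : ∃ g0 : C(StoneCech X, ℝ),
          g0 p = 0 ∧ g0 (stoneCechUnit x) = 1 ∧ ∀ t, g0 t ∈ Icc (0:ℝ) 1 := by
        obtain ⟨g0, h0, h1, hicc⟩ := exists_continuous_zero_one_of_isClosed
          (isClosed_singleton (x := p)) (isClosed_singleton (x := stoneCechUnit x))
          (by simpa [Set.disjoint_singleton] using hpx)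
        exact ⟨g0, by simpa using h0 rfl, by simpa using h1 rfl, hicc⟩
      set f : BoundedContinuousFunction X ℝ :=
        BoundedContinuousFunction.mkOfBound
          ⟨fun z => g0 (stoneCechUnit z), (g0.continuous.comp continuous_stoneCechUnit)⟩ 1
          (by
            intro a b
            have ha := hgicc (stoneCechUnit a)
            have hb := hgicc (stoneCechUnit b)
            rw [Real.dist_eq, abs_le]
            constructor <;> simp only [ContinuousMap.coe_mk] <;>
              [linarith [ha.1, ha.2, hb.1, hb.2]; linarith [ha.1, ha.2, hb.1, hb.2]]) with hf
      have hbf : bext f = fun q => g0 q :=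
        (bext_eq_of g0.continuous (fun z => rfl)).symm
      have h1 : u f x ≤ bext f p := hp f
      rw [hbf] at h1
      rw [hext f x] at h1
      have h2 : (f : X → ℝ) x = 1 := by
        simp only [hf]
        exact hg0x
      rw [h2] at h1
      dsimp only at h1
      rw [hg0p] at h1
      linarith
    · intro p hp
      simp only [mem_singleton_iff] at hp
      subst hp
      intro f
      rw [hext f x, bext_unit]
  exact ⟨r, fun y => ⟨hne y, (hclosed y).isCompact⟩, husc, hx⟩



/-- transfer from lsc package to usc package via negation -/
lemma lsc_to_usc (X : Set Y)
    (h : ∃ u : BoundedContinuousFunction X ℝ → Y → ℝ,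
        (∀ f, LowerSemicontinuous (u f)) ∧
        (∀ f, ∃ M : ℝ, ∀ y, |u f y| ≤ M) ∧
        (∀ (f : BoundedContinuousFunction X ℝ) (x : X), u f x = f x) ∧
        (∀ y, u 1 y = 1) ∧
        (∀ (f : BoundedContinuousFunction X ℝ) (c : ℝ) (y : Y),
          u (f + BoundedContinuousFunction.const X c) y = u f y + c) ∧
        (∀ (f g : BoundedContinuousFunction X ℝ) (y : Y),
          u (f ⊓ g) y = min (u f y) (u g y)) ∧
        (∀ (f : BoundedContinuousFunction X ℝ) (c : ℝ) (y : Y),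
          u (f ⊔ BoundedContinuousFunction.const X c) y = max (u f y) c)) :
    (∃ u : BoundedContinuousFunction X ℝ → Y → ℝ,
        (∀ f, UpperSemicontinuous (u f)) ∧
        (∀ f, ∃ M : ℝ, ∀ y, |u f y| ≤ M) ∧
        (∀ (f : BoundedContinuousFunction X ℝ) (x : X), u f x = f x) ∧
        (∀ y, u 1 y = 1) ∧
        (∀ (f : BoundedContinuousFunction X ℝ) (c : ℝ) (y : Y),
          u (f + BoundedContinuousFunction.const X c) y = u f y + c) ∧
        (∀ (f g : BoundedContinuousFunction X ℝ) (y : Y),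
          u (f ⊔ g) y = max (u f y) (u g y)) ∧
        (∀ (f : BoundedContinuousFunction X ℝ) (c : ℝ) (y : Y),
          u (f ⊓ BoundedContinuousFunction.const X c) y = min (u f y) c)) := by
  obtain ⟨u, hlsc, hbd, hext, hone, hadd, hinf, hsup⟩ := h
  have hneg1 : (-1 : BoundedContinuousFunction X ℝ) = 1 + const X (-2) := by
    ext x; simp; ring
  have hnegadd : ∀ (f : BoundedContinuousFunction X ℝ) (c : ℝ),
      -(f + const X c) = -f + const X (-c) := by
    intro f c; ext x; simp; ring
  have hnegsup : ∀ f g : BoundedContinuousFunction X ℝ, -(f ⊔ g) = (-f) ⊓ (-g) := by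
    intro f g; ext x
    simp only [BoundedContinuousFunction.coe_neg, BoundedContinuousFunction.coe_sup,
      BoundedContinuousFunction.coe_inf, Pi.neg_apply, Pi.sup_apply, Pi.inf_apply]
    exact (min_neg_neg _ _).symm
  have hneginf : ∀ f g : BoundedContinuousFunction X ℝ, -(f ⊓ g) = (-f) ⊔ (-g) := by
    intro f g; ext x
    simp only [BoundedContinuousFunction.coe_neg, BoundedContinuousFunction.coe_sup,
      BoundedContinuousFunction.coe_inf, Pi.neg_apply, Pi.sup_apply, Pi.inf_apply]
    exact (max_neg_neg _ _).symm
  refine ⟨fun f y => -(u (-f) y), ?_, ?_, ?_, ?_, ?_, ?_, ?_⟩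
  · intro f z t ht
    dsimp only at ht ⊢
    have h2 : -t < u (-f) z := by linarith
    filter_upwards [hlsc (-f) z (-t) h2] with z' hz'
    linarith
  · intro f
    obtain ⟨M, hM⟩ := hbd (-f)
    exact ⟨M, fun y => by rw [abs_neg]; exact hM y⟩
  · intro f x
    dsimp only
    rw [hext (-f) x]
    simp
  · intro y
    show -u (-1) y = 1
    rw [hneg1, hadd, hone]
    ring
  · intro f c y
    show -u (-(f + const X c)) y = -u (-f) y + c
    rw [hnegadd, hadd]
    ring
  · intro f g y
    show -u (-(f ⊔ g)) y = max (-u (-f) y) (-u (-g) y)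
    rw [hnegsup, hinf]
    exact (max_neg_neg _ _).symm
  · intro f c y
    show -u (-(f ⊓ const X c)) y = min (-u (-f) y) c
    have : -(f ⊓ const X c) = (-f) ⊔ const X (-c) := by
      ext x
      simp only [BoundedContinuousFunction.coe_neg, BoundedContinuousFunction.coe_sup,
        BoundedContinuousFunction.coe_inf, Pi.neg_apply, Pi.sup_apply, Pi.inf_apply,
        const_apply]
      exact (max_neg_neg _ _).symm
    rw [this, hsup]
    have h4 := min_neg_neg (u (-f) y) (-c)
    rw [neg_neg] at h4
    exact h4.symm


/-- transfer from usc package to lsc package via negation -/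
lemma usc_to_lsc (X : Set Y)
    (h : ∃ u : BoundedContinuousFunction X ℝ → Y → ℝ,
        (∀ f, UpperSemicontinuous (u f)) ∧
        (∀ f, ∃ M : ℝ, ∀ y, |u f y| ≤ M) ∧
        (∀ (f : BoundedContinuousFunction X ℝ) (x : X), u f x = f x) ∧
        (∀ y, u 1 y = 1) ∧
        (∀ (f : BoundedContinuousFunction X ℝ) (c : ℝ) (y : Y),
          u (f + BoundedContinuousFunction.const X c) y = u f y + c) ∧
        (∀ (f g : BoundedContinuousFunction X ℝ) (y : Y),
          u (f ⊔ g) y = max (u f y) (u g y)) ∧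
        (∀ (f : BoundedContinuousFunction X ℝ) (c : ℝ) (y : Y),
          u (f ⊓ BoundedContinuousFunction.const X c) y = min (u f y) c)) :
    (∃ u : BoundedContinuousFunction X ℝ → Y → ℝ,
        (∀ f, LowerSemicontinuous (u f)) ∧
        (∀ f, ∃ M : ℝ, ∀ y, |u f y| ≤ M) ∧
        (∀ (f : BoundedContinuousFunction X ℝ) (x : X), u f x = f x) ∧
        (∀ y, u 1 y = 1) ∧
        (∀ (f : BoundedContinuousFunction X ℝ) (c : ℝ) (y : Y),
          u (f + BoundedContinuousFunction.const X c) y = u f y + c) ∧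
        (∀ (f g : BoundedContinuousFunction X ℝ) (y : Y),
          u (f ⊓ g) y = min (u f y) (u g y)) ∧
        (∀ (f : BoundedContinuousFunction X ℝ) (c : ℝ) (y : Y),
          u (f ⊔ BoundedContinuousFunction.const X c) y = max (u f y) c)) := by
  obtain ⟨u, husc, hbd, hext, hone, hadd, hsup, hinf⟩ := h
  have hneg1 : (-1 : BoundedContinuousFunction X ℝ) = 1 + const X (-2) := by
    ext x; simp; ring
  have hnegadd : ∀ (f : BoundedContinuousFunction X ℝ) (c : ℝ),
      -(f + const X c) = -f + const X (-c) := by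
    intro f c; ext x; simp; ring
  have hneginf : ∀ f g : BoundedContinuousFunction X ℝ, -(f ⊓ g) = (-f) ⊔ (-g) := by
    intro f g; ext x
    simp only [BoundedContinuousFunction.coe_neg, BoundedContinuousFunction.coe_sup,
      BoundedContinuousFunction.coe_inf, Pi.neg_apply, Pi.sup_apply, Pi.inf_apply]
    exact (max_neg_neg _ _).symm
  refine ⟨fun f y => -(u (-f) y), ?_, ?_, ?_, ?_, ?_, ?_, ?_⟩
  · intro f z t ht
    dsimp only at ht ⊢
    have h2 : u (-f) z < -t := by linarith
    filter_upwards [husc (-f) z (-t) h2] with z' hz'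
    linarith
  · intro f
    obtain ⟨M, hM⟩ := hbd (-f)
    exact ⟨M, fun y => by rw [abs_neg]; exact hM y⟩
  · intro f x
    dsimp only
    rw [hext (-f) x]
    simp
  · intro y
    show -u (-1) y = 1
    rw [hneg1, hadd, hone]
    ring
  · intro f c y
    show -u (-(f + const X c)) y = -u (-f) y + c
    rw [hnegadd, hadd]
    ring
  · intro f g y
    show -u (-(f ⊓ g)) y = min (-u (-f) y) (-u (-g) y)
    rw [hneginf, hsup]
    exact (min_neg_neg _ _).symm
  · intro f c y
    show -u (-(f ⊔ const X c)) y = max (-u (-f) y) c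
    have : -(f ⊔ const X c) = (-f) ⊓ const X (-c) := by
      ext x
      simp only [BoundedContinuousFunction.coe_neg, BoundedContinuousFunction.coe_sup,
        BoundedContinuousFunction.coe_inf, Pi.neg_apply, Pi.sup_apply, Pi.inf_apply,
        const_apply]
      exact (min_neg_neg _ _).symm
    rw [this, hinf]
    have h4 := max_neg_neg (u (-f) y) (-c)
    rw [neg_neg] at h4
    exact h4.symm

end S16

/-- for a subspace `X ⊆ Y`, the following are equivalent: (i) there is an upper
semicontinuous compact-valued map `r : Y → βX` with `r x = {η x}` for `x ∈ X`; (ii) there is a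
normed, weakly additive extender `u : C*(X) → C*_lsc(Y)` preserving min and weakly preserving
max; (iii) there is a normed, weakly additive extender `u : C*(X) → C*_usc(Y)` preserving max
and weakly preserving min. -/
theorem statement16 {Y : Type*} [TopologicalSpace Y] [T35Space Y] (X : Set Y) :
    ((∃ r : Y → Set (StoneCech X),
        (∀ y, (r y).Nonempty ∧ IsCompact (r y)) ∧
        (∀ U : Set (StoneCech X), IsOpen U → IsOpen {y | r y ⊆ U}) ∧
        (∀ x : X, r x = {stoneCechUnit x})) ↔
      (∃ u : BoundedContinuousFunction X ℝ → Y → ℝ,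
        (∀ f, LowerSemicontinuous (u f)) ∧
        (∀ f, ∃ M : ℝ, ∀ y, |u f y| ≤ M) ∧
        (∀ (f : BoundedContinuousFunction X ℝ) (x : X), u f x = f x) ∧
        (∀ y, u 1 y = 1) ∧
        (∀ (f : BoundedContinuousFunction X ℝ) (c : ℝ) (y : Y),
          u (f + BoundedContinuousFunction.const X c) y = u f y + c) ∧
        (∀ (f g : BoundedContinuousFunction X ℝ) (y : Y),
          u (f ⊓ g) y = min (u f y) (u g y)) ∧
        (∀ (f : BoundedContinuousFunction X ℝ) (c : ℝ) (y : Y),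
          u (f ⊔ BoundedContinuousFunction.const X c) y = max (u f y) c))) ∧
    ((∃ r : Y → Set (StoneCech X),
        (∀ y, (r y).Nonempty ∧ IsCompact (r y)) ∧
        (∀ U : Set (StoneCech X), IsOpen U → IsOpen {y | r y ⊆ U}) ∧
        (∀ x : X, r x = {stoneCechUnit x})) ↔
      (∃ u : BoundedContinuousFunction X ℝ → Y → ℝ,
        (∀ f, UpperSemicontinuous (u f)) ∧
        (∀ f, ∃ M : ℝ, ∀ y, |u f y| ≤ M) ∧
        (∀ (f : BoundedContinuousFunction X ℝ) (x : X), u f x = f x) ∧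
        (∀ y, u 1 y = 1) ∧
        (∀ (f : BoundedContinuousFunction X ℝ) (c : ℝ) (y : Y),
          u (f + BoundedContinuousFunction.const X c) y = u f y + c) ∧
        (∀ (f g : BoundedContinuousFunction X ℝ) (y : Y),
          u (f ⊔ g) y = max (u f y) (u g y)) ∧
        (∀ (f : BoundedContinuousFunction X ℝ) (c : ℝ) (y : Y),
          u (f ⊓ BoundedContinuousFunction.const X c) y = min (u f y) c))) := by
  constructor
  · exact ⟨S16.dir12 X, S16.dir21 X⟩
  · exact ⟨fun h => S16.lsc_to_usc X (S16.dir12 X h),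
      fun h => S16.dir21 X (S16.usc_to_lsc X h)⟩
end

section
/- Let Y be a Tychonoff space and X ⊆ Y a subspace. The following are equivalent: (i) there exists a lower semicontinuous compact-valued set-valued map r : Y → βX with r(x) = {η(x)} for all x ∈ X; (ii) there exists an extender u : C*(X) → C*_usc(Y) which is normed, weakly additive, preserves min and weakly preserves max; (iii) there exists an extender u : C*(X) → C*_lsc(Y) which is normed, weakly additive, preserves max and weakly preserves min. -/
open Set BoundedContinuousFunction

section Aux
variable {α : Type*} [TopologicalSpace α]

theorem mem_icc_extF (f : BoundedContinuousFunction α ℝ) (x : α) : f x ∈ Icc (-‖f‖) ‖f‖ := by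
  have := f.norm_coe_le_norm x
  rw [Real.norm_eq_abs, abs_le] at this
  exact this

noncomputable def extF₀ (f : BoundedContinuousFunction α ℝ) : StoneCech α → Icc (-‖f‖) ‖f‖ :=
  stoneCechExtend (g := fun x => (⟨f x, mem_icc_extF f x⟩ : Icc (-‖f‖) ‖f‖))
    (Continuous.subtype_mk f.continuous _)

noncomputable def extF (f : BoundedContinuousFunction α ℝ) : StoneCech α → ℝ :=
  fun p => (extF₀ f p : ℝ)

@[fun_prop]
theorem extF_continuous (f : BoundedContinuousFunction α ℝ) : Continuous (extF f) :=
  continuous_subtype_val.comp (continuous_stoneCechExtend _)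

theorem extF_unit (f : BoundedContinuousFunction α ℝ) (x : α) :
    extF f (stoneCechUnit x) = f x := by
  have h := congrFun (stoneCechExtend_extends (g := fun x => (⟨f x, mem_icc_extF f x⟩ : Icc (-‖f‖) ‖f‖)) (Continuous.subtype_mk f.continuous _)) x
  simpa [extF, extF₀] using congrArg Subtype.val h

theorem extF_mem (f : BoundedContinuousFunction α ℝ) (p : StoneCech α) :
    extF f p ∈ Icc (-‖f‖) ‖f‖ := (extF₀ f p).2

theorem extF_eq_of_agree (f : BoundedContinuousFunction α ℝ) (G : StoneCech α → ℝ)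
    (hG : Continuous G) (h : ∀ x, G (stoneCechUnit x) = f x) : G = extF f := by
  apply Continuous.ext_on denseRange_stoneCechUnit hG (extF_continuous f)
  rintro _ ⟨x, rfl⟩
  rw [h x, extF_unit]

theorem extF_add_const (f : BoundedContinuousFunction α ℝ) (c : ℝ) :
    extF (f + const α c) = fun p => extF f p + c := by
  refine (extF_eq_of_agree _ _ (by fun_prop) fun x => ?_).symm
  simp [extF_unit]

theorem extF_inf (f g : BoundedContinuousFunction α ℝ) :
    extF (f ⊓ g) = fun p => min (extF f p) (extF g p) := by
  refine (extF_eq_of_agree _ _ (by fun_prop) fun x => ?_).symm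
  simp [extF_unit]

theorem extF_sup_const (f : BoundedContinuousFunction α ℝ) (c : ℝ) :
    extF (f ⊔ const α c) = fun p => max (extF f p) c := by
  refine (extF_eq_of_agree _ _ (by fun_prop) fun x => ?_).symm
  simp [extF_unit]

end Aux

section DirA
variable {Y : Type*} [TopologicalSpace Y] {X : Set Y}

theorem dirA
    (h : ∃ r : Y → Set (StoneCech X),
        (∀ y, (r y).Nonempty ∧ IsCompact (r y)) ∧
        (∀ U : Set (StoneCech X), IsOpen U → IsOpen {y | (r y ∩ U).Nonempty}) ∧
        (∀ x : X, r x = {stoneCechUnit x})) :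
    (∃ u : BoundedContinuousFunction X ℝ → Y → ℝ,
        (∀ f, UpperSemicontinuous (u f)) ∧
        (∀ f, ∃ M : ℝ, ∀ y, |u f y| ≤ M) ∧
        (∀ (f : BoundedContinuousFunction X ℝ) (x : X), u f x = f x) ∧
        (∀ y, u 1 y = 1) ∧
        (∀ (f : BoundedContinuousFunction X ℝ) (c : ℝ) (y : Y),
          u (f + BoundedContinuousFunction.const X c) y = u f y + c) ∧
        (∀ (f g : BoundedContinuousFunction X ℝ) (y : Y),
          u (f ⊓ g) y = min (u f y) (u g y)) ∧
        (∀ (f : BoundedContinuousFunction X ℝ) (c : ℝ) (y : Y),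
          u (f ⊔ BoundedContinuousFunction.const X c) y = max (u f y) c)) := by
  obtain ⟨r, hr, hlsc, hx⟩ := h
  set u : BoundedContinuousFunction X ℝ → Y → ℝ :=
    fun f y => sInf (extF f '' r y) with hu
  have himg : ∀ (f : BoundedContinuousFunction X ℝ) (y : Y),
      IsCompact (extF f '' r y) ∧ (extF f '' r y).Nonempty :=
    fun f y => ⟨(hr y).2.image (extF_continuous f), (hr y).1.image _⟩
  have hmem : ∀ (f : BoundedContinuousFunction X ℝ) (y : Y),
      ∃ p ∈ r y, extF f p = u f y := by
    intro f y
    have := (himg f y).1.sInf_mem (himg f y).2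
    obtain ⟨p, hp, hpe⟩ := this
    exact ⟨p, hp, hpe⟩
  have hle : ∀ (f : BoundedContinuousFunction X ℝ) (y : Y) (p : StoneCech X),
      p ∈ r y → u f y ≤ extF f p := by
    intro f y p hp
    exact csInf_le (himg f y).1.bddBelow ⟨p, hp, rfl⟩
  refine ⟨u, ?_, ?_, ?_, ?_, ?_, ?_, ?_⟩
  · -- usc
    intro f y₀ c hc
    obtain ⟨p₀, hp₀, hpe⟩ := hmem f y₀
    have hU : IsOpen {p | extF f p < c} := isOpen_lt (extF_continuous f) continuous_const
    have hO : IsOpen {y | (r y ∩ {p | extF f p < c}).Nonempty} := hlsc _ hU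
    have hy₀ : y₀ ∈ {y | (r y ∩ {p | extF f p < c}).Nonempty} :=
      ⟨p₀, hp₀, by simpa [hpe] using hc⟩
    filter_upwards [hO.mem_nhds hy₀] with y hy
    obtain ⟨q, hq, hqc⟩ := hy
    exact lt_of_le_of_lt (hle f y q hq) hqc
  · -- bounded
    intro f
    refine ⟨‖f‖, fun y => ?_⟩
    obtain ⟨p, hp, hpe⟩ := hmem f y
    have := extF_mem f p
    rw [← hpe]
    rw [abs_le]
    exact ⟨this.1, this.2⟩
  · -- extender
    intro f x
    have : r x = {stoneCechUnit x} := hx x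
    simp only [hu, this, image_singleton, csInf_singleton, extF_unit]
  · -- normed
    intro y
    have h1 : extF (1 : BoundedContinuousFunction X ℝ) = fun _ => 1 := by
      refine (extF_eq_of_agree _ _ continuous_const fun x => ?_).symm
      simp
    simp only [hu, h1]
    rw [(hr y).1.image_const, csInf_singleton]
  · -- weakly additive
    intro f c y
    simp only [hu, extF_add_const]
    refine le_antisymm ?_ ?_
    · obtain ⟨p₀, hp₀, hpe⟩ := hmem f y
      calc sInf ((fun p => extF f p + c) '' r y) ≤ extF f p₀ + c :=
            csInf_le ((hr y).2.image (by fun_prop)).bddBelow ⟨p₀, hp₀, rfl⟩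
        _ = u f y + c := by rw [hpe]
    · refine le_csInf ((hr y).1.image _) ?_
      rintro _ ⟨p, hp, rfl⟩
      exact add_le_add_left (hle f y p hp) c
  · -- preserves min
    intro f g y
    simp only [hu, extF_inf]
    refine le_antisymm ?_ ?_
    · refine le_min ?_ ?_
      · obtain ⟨p₀, hp₀, hpe⟩ := hmem f y
        calc sInf ((fun p => min (extF f p) (extF g p)) '' r y)
            ≤ min (extF f p₀) (extF g p₀) :=
              csInf_le (((hr y).2.image (by fun_prop))).bddBelow ⟨p₀, hp₀, rfl⟩
          _ ≤ extF f p₀ := min_le_left _ _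
          _ = u f y := hpe
      · obtain ⟨p₀, hp₀, hpe⟩ := hmem g y
        calc sInf ((fun p => min (extF f p) (extF g p)) '' r y)
            ≤ min (extF f p₀) (extF g p₀) :=
              csInf_le (((hr y).2.image (by fun_prop))).bddBelow ⟨p₀, hp₀, rfl⟩
          _ ≤ extF g p₀ := min_le_right _ _
          _ = u g y := hpe
    · refine le_csInf ((hr y).1.image _) ?_
      rintro _ ⟨p, hp, rfl⟩
      exact min_le_min (hle f y p hp) (hle g y p hp)
  · -- weakly preserves max
    intro f c y
    simp only [hu, extF_sup_const]
    refine le_antisymm ?_ ?_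
    · obtain ⟨p₀, hp₀, hpe⟩ := hmem f y
      calc sInf ((fun p => max (extF f p) c) '' r y) ≤ max (extF f p₀) c :=
            csInf_le ((hr y).2.image (by fun_prop)).bddBelow ⟨p₀, hp₀, rfl⟩
        _ = max (u f y) c := by rw [hpe]
    · refine le_csInf ((hr y).1.image _) ?_
      rintro _ ⟨p, hp, rfl⟩
      exact max_le_max (hle f y p hp) le_rfl
end DirA

section DirB
variable {Y : Type*} [TopologicalSpace Y] {X : Set Y}

theorem dirB
    (h : ∃ u : BoundedContinuousFunction X ℝ → Y → ℝ,
        (∀ f, UpperSemicontinuous (u f)) ∧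
        (∀ f, ∃ M : ℝ, ∀ y, |u f y| ≤ M) ∧
        (∀ (f : BoundedContinuousFunction X ℝ) (x : X), u f x = f x) ∧
        (∀ y, u 1 y = 1) ∧
        (∀ (f : BoundedContinuousFunction X ℝ) (c : ℝ) (y : Y),
          u (f + BoundedContinuousFunction.const X c) y = u f y + c) ∧
        (∀ (f g : BoundedContinuousFunction X ℝ) (y : Y),
          u (f ⊓ g) y = min (u f y) (u g y)) ∧
        (∀ (f : BoundedContinuousFunction X ℝ) (c : ℝ) (y : Y),
          u (f ⊔ BoundedContinuousFunction.const X c) y = max (u f y) c)) :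
    (∃ r : Y → Set (StoneCech X),
        (∀ y, (r y).Nonempty ∧ IsCompact (r y)) ∧
        (∀ U : Set (StoneCech X), IsOpen U → IsOpen {y | (r y ∩ U).Nonempty}) ∧
        (∀ x : X, r x = {stoneCechUnit x})) := by
  classical
  obtain ⟨u, husc, -, hext, hnorm, hadd, hinf, hsupc⟩ := h
  have hconst : ∀ (c : ℝ) (y : Y), u (const X c) y = c := by
    intro c y
    have h1 : (const X c : BoundedContinuousFunction X ℝ) = 1 + const X (c - 1) := by
      ext z
      simp
    rw [h1, hadd, hnorm]
    ring
  have hmono : ∀ (f g : BoundedContinuousFunction X ℝ), f ≤ g → ∀ y, u f y ≤ u g y := by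
    intro f g hfg y
    have h2 := hinf f g y
    rw [inf_eq_left.mpr hfg] at h2
    rw [h2]
    exact min_le_right _ _
  -- the key combinatorial lemma
  have hstar : ∀ (f g : BoundedContinuousFunction X ℝ) (y : Y) (ε ε' : ℝ), 0 < ε' → ε' ≤ ε →
      u f y = 0 → u g y = 0 → ∃ z : X, f z ≤ ε ∧ -ε' ≤ g z := by
    intro f g y ε ε' hε' hee hf hg
    by_contra hcon
    push_neg at hcon
    set g'' : BoundedContinuousFunction X ℝ :=
      (g ⊔ const X (-ε')) ⊓ const X 0 + const X ε' with hg''def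
    set v : BoundedContinuousFunction X ℝ :=
      (((f ⊔ const X 0) + const X (ε' - ε)) ⊓ const X ε') ⊔ const X 0 with hvdef
    have hLg'' : u g'' y = ε' := by
      rw [hg''def, hadd, hinf, hsupc, hconst, hg,
        max_eq_left (by linarith : -ε' ≤ (0:ℝ)), min_self, zero_add]
    have hLv : u v y = 0 := by
      rw [hvdef, hsupc, hinf, hadd, hsupc, hconst, hf,
        max_self, zero_add, min_eq_left (by linarith : ε' - ε ≤ ε'),
        max_eq_right (by linarith : ε' - ε ≤ (0:ℝ))]
    have hlev : g'' ≤ v := by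
      rw [hg''def, hvdef]
      intro z
      show ((g ⊔ const X (-ε')) ⊓ const X 0 + const X ε') z ≤
        ((((f ⊔ const X 0) + const X (ε' - ε)) ⊓ const X ε') ⊔ const X 0) z
      simp only [coe_add, coe_inf, coe_sup, Pi.add_apply, Pi.inf_apply,
        Pi.sup_apply, const_apply]
      rcases le_or_gt (f z) ε with hfz | hfz
      · have hgz := hcon z hfz
        rw [max_eq_right hgz.le, min_eq_left (by linarith : -ε' ≤ (0:ℝ))]
        have h0 : (0:ℝ) ≤ max (min (max (f z) 0 + (ε' - ε)) ε') 0 := le_max_right _ _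
        linarith
      · have l1 : max (f z) 0 = f z := max_eq_left (by linarith)
        have l2 : min (f z + (ε' - ε)) ε' = ε' := min_eq_right (by linarith)
        rw [l1, l2]
        have h1 : min (max (g z) (-ε')) 0 ≤ 0 := min_le_right _ _
        have h2 : ε' ≤ max ε' 0 := le_max_left _ _
        linarith
    have hfin := hmono _ _ hlev y
    rw [hLg'', hLv] at hfin
    linarith
  -- generalization to arbitrary values
  have hstar' : ∀ (f g : BoundedContinuousFunction X ℝ) (y : Y) (ε ε' : ℝ), 0 < ε' → ε' ≤ ε →
      ∃ z : X, f z ≤ u f y + ε ∧ u g y - ε' ≤ g z := by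
    intro f g y ε ε' hε' hee
    have h1 : u (f + const X (-(u f y))) y = 0 := by rw [hadd]; ring
    have h2 : u (g + const X (-(u g y))) y = 0 := by rw [hadd]; ring
    obtain ⟨z, hz1, hz2⟩ := hstar _ _ y ε ε' hε' hee h1 h2
    simp only [coe_add, Pi.add_apply, const_apply] at hz1 hz2
    exact ⟨z, by linarith, by linarith⟩
  -- the key existence lemma
  have hkey : ∀ (y : Y) (f : BoundedContinuousFunction X ℝ) (c : ℝ), u f y < c →
      ∃ p : StoneCech X, (∀ g, u g y ≤ extF g p) ∧ extF f p ≤ c := by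
    intro y f c hc
    set ι := BoundedContinuousFunction X ℝ × {e : ℝ // 0 < e} with hι
    set C : ι → Set (StoneCech X) :=
      fun i => {p | u i.1 y - i.2.1 ≤ extF i.1 p ∧ extF f p ≤ c} with hC
    have hclosed : ∀ i, IsClosed (C i) := by
      intro i
      exact (isClosed_le continuous_const (extF_continuous i.1)).inter
        (isClosed_le (extF_continuous f) continuous_const)
    have hne : ∀ i, (C i).Nonempty := by
      rintro ⟨g, e, he⟩
      obtain ⟨z, hz1, hz2⟩ := hstar' f g y (c - u f y) (min e (c - u f y))
        (lt_min he (by linarith)) (min_le_right _ _)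
      refine ⟨stoneCechUnit z, ?_, ?_⟩
      · rw [extF_unit]
        have := min_le_left e (c - u f y)
        linarith
      · rw [extF_unit]
        linarith
    have hdir : Directed (· ⊇ ·) C := by
      rintro ⟨g₁, e₁, he₁⟩ ⟨g₂, e₂, he₂⟩
      refine ⟨⟨(g₁ + const X (-(u g₁ y))) ⊓ (g₂ + const X (-(u g₂ y))),
        ⟨min e₁ e₂, lt_min he₁ he₂⟩⟩, ?_, ?_⟩ <;>
      · rintro p ⟨hp1, hp2⟩
        refine ⟨?_, hp2⟩
        simp only [hinf, hadd, extF_inf, extF_add_const] at hp1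
        have hm1 := min_le_left e₁ e₂
        have hm2 := min_le_right e₁ e₂
        have hi1 := le_trans hp1 (min_le_left (extF g₁ p + -u g₁ y) (extF g₂ p + -u g₂ y))
        have hi2 := le_trans hp1 (min_le_right (extF g₁ p + -u g₁ y) (extF g₂ p + -u g₂ y))
        have hz : min (u g₁ y + -u g₁ y) (u g₂ y + -u g₂ y) = 0 := by
          simp
        rw [hz] at hi1 hi2
        linarith
    have hcomp : ∀ i, IsCompact (C i) := fun i => (hclosed i).isCompact
    have hnemp : (⋂ i, C i).Nonempty := by
      have : Nonempty ι := ⟨⟨0, ⟨1, one_pos⟩⟩⟩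
      exact IsCompact.nonempty_iInter_of_directed_nonempty_isCompact_isClosed
        C hdir hne hcomp hclosed
    obtain ⟨p, hp⟩ := hnemp
    simp only [mem_iInter] at hp
    refine ⟨p, ?_, (hp ⟨0, ⟨1, one_pos⟩⟩).2⟩
    intro g
    refine le_of_forall_pos_le_add ?_
    intro ε hε
    have := (hp ⟨g, ⟨ε, hε⟩⟩).1
    linarith
  -- the retraction
  refine ⟨fun y => {p | ∀ g, u g y ≤ extF g p}, ?_, ?_, ?_⟩
  · intro y
    constructor
    · have h0 : u (const X 0) y < 1 := by rw [hconst]; norm_num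
      obtain ⟨p, hp, -⟩ := hkey y (const X 0) 1 h0
      exact ⟨p, hp⟩
    · refine IsClosed.isCompact ?_
      show IsClosed {p : StoneCech X | ∀ g, u g y ≤ extF g p}
      have : {p : StoneCech X | ∀ g, u g y ≤ extF g p} =
          ⋂ g, {p | u g y ≤ extF g p} := by
        ext p; simp [mem_iInter]
      rw [this]
      exact isClosed_iInter fun g => isClosed_le continuous_const (extF_continuous g)
  · -- lower semicontinuity
    intro U hU
    rw [isOpen_iff_mem_nhds]
    rintro y₀ ⟨p, hpr, hpU⟩
    obtain ⟨G, hG0, hG1, hGmem⟩ := exists_continuous_zero_one_of_isClosed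
      (isClosed_singleton (x := p)) hU.isClosed_compl
      (disjoint_singleton_left.mpr (by simpa using hpU))
    set fG : BoundedContinuousFunction X ℝ :=
      BoundedContinuousFunction.mkOfBound ⟨fun z => G (stoneCechUnit z),
        G.continuous.comp continuous_stoneCechUnit⟩ 1
      (fun a b => by
        rw [Real.dist_eq, abs_sub_le_iff]
        constructor <;>
        · have h1 := hGmem (stoneCechUnit a)
          have h2 := hGmem (stoneCechUnit b)
          simp only [Set.mem_Icc] at h1 h2
          dsimp
          linarith) with hfGdef
    have hGext : ⇑G = extF fG := by
      refine extF_eq_of_agree fG G G.continuous fun z => rfl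
    have hufy₀ : u fG y₀ < 2⁻¹ := by
      have h1 : u fG y₀ ≤ extF fG p := hpr fG
      rw [← hGext] at h1
      rw [hG0 rfl] at h1
      simp only [Pi.zero_apply] at h1
      linarith
    have hev := husc fG y₀ 2⁻¹ hufy₀
    refine Filter.mem_of_superset hev ?_
    intro y hy
    obtain ⟨p', hp'r, hp'le⟩ := hkey y fG 2⁻¹ hy
    refine ⟨p', hp'r, ?_⟩
    by_contra hp'U
    have h1 : G p' = 1 := hG1 hp'U
    have h2 : extF fG p' = 1 := by rw [← hGext]; exact h1
    rw [h2] at hp'le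
    norm_num at hp'le
  · -- r x = {η x}
    intro x
    apply Subset.antisymm
    · intro p hp
      simp only [mem_singleton_iff]
      by_contra hne
      obtain ⟨G, hG0, hG1, hGmem⟩ := exists_continuous_zero_one_of_isClosed
        (isClosed_singleton (x := p)) (isClosed_singleton (x := stoneCechUnit x))
        (by simp [hne])
      set fG : BoundedContinuousFunction X ℝ :=
        BoundedContinuousFunction.mkOfBound ⟨fun z => G (stoneCechUnit z),
          G.continuous.comp continuous_stoneCechUnit⟩ 1
        (fun a b => by
          rw [Real.dist_eq, abs_sub_le_iff]
          constructor <;>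
          · have h1 := hGmem (stoneCechUnit a)
            have h2 := hGmem (stoneCechUnit b)
            simp only [Set.mem_Icc] at h1 h2
            dsimp
            linarith) with hfGdef
      have hGext : ⇑G = extF fG :=
        extF_eq_of_agree fG G G.continuous fun z => rfl
      have h1 : u fG x = fG x := hext fG x
      have h2 : fG x = G (stoneCechUnit x) := rfl
      have h3 : G (stoneCechUnit x) = 1 := by
        have := hG1 (mem_singleton _)
        simpa using this
      have h4 : u fG x ≤ extF fG p := hp fG
      have h5 : extF fG p = G p := by rw [hGext]
      have h6 : G p = 0 := by
        have := hG0 (mem_singleton _)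
        simpa using this
      rw [h1, h2, h3, h5, h6] at h4
      norm_num at h4
    · intro q hq
      simp only [mem_singleton_iff] at hq
      subst hq
      intro g
      rw [extF_unit, hext]
end DirB

section Transform
variable {Y : Type*} [TopologicalSpace Y] {X : Set Y}

theorem neg_usc {v : Y → ℝ} (h : LowerSemicontinuous v) :
    UpperSemicontinuous (fun y => -(v y)) := by
  intro x c hc
  have hc' : -c < v x := by
    have h2 : -v x < c := hc
    linarith
  exact (h x (-c) hc').mono fun y hy => show -(v y) < c by linarith

theorem neg_lsc {v : Y → ℝ} (h : UpperSemicontinuous v) :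
    LowerSemicontinuous (fun y => -(v y)) := by
  intro x c hc
  have hc' : v x < -c := by
    have h2 : c < -v x := hc
    linarith
  exact (h x (-c) hc').mono fun y hy => show c < -(v y) by linarith

theorem packBtoC
    (h : ∃ u : BoundedContinuousFunction X ℝ → Y → ℝ,
        (∀ f, UpperSemicontinuous (u f)) ∧
        (∀ f, ∃ M : ℝ, ∀ y, |u f y| ≤ M) ∧
        (∀ (f : BoundedContinuousFunction X ℝ) (x : X), u f x = f x) ∧
        (∀ y, u 1 y = 1) ∧
        (∀ (f : BoundedContinuousFunction X ℝ) (c : ℝ) (y : Y),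
          u (f + BoundedContinuousFunction.const X c) y = u f y + c) ∧
        (∀ (f g : BoundedContinuousFunction X ℝ) (y : Y),
          u (f ⊓ g) y = min (u f y) (u g y)) ∧
        (∀ (f : BoundedContinuousFunction X ℝ) (c : ℝ) (y : Y),
          u (f ⊔ BoundedContinuousFunction.const X c) y = max (u f y) c)) :
    (∃ u : BoundedContinuousFunction X ℝ → Y → ℝ,
        (∀ f, LowerSemicontinuous (u f)) ∧
        (∀ f, ∃ M : ℝ, ∀ y, |u f y| ≤ M) ∧
        (∀ (f : BoundedContinuousFunction X ℝ) (x : X), u f x = f x) ∧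
        (∀ y, u 1 y = 1) ∧
        (∀ (f : BoundedContinuousFunction X ℝ) (c : ℝ) (y : Y),
          u (f + BoundedContinuousFunction.const X c) y = u f y + c) ∧
        (∀ (f g : BoundedContinuousFunction X ℝ) (y : Y),
          u (f ⊔ g) y = max (u f y) (u g y)) ∧
        (∀ (f : BoundedContinuousFunction X ℝ) (c : ℝ) (y : Y),
          u (f ⊓ BoundedContinuousFunction.const X c) y = min (u f y) c)) := by
  obtain ⟨u, husc, hbd, hext, hnorm, hadd, hinf, hsupc⟩ := h
  refine ⟨fun f y => -(u (-f) y), fun f => neg_lsc (husc (-f)), ?_, ?_, ?_, ?_, ?_, ?_⟩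
  · intro f
    obtain ⟨M, hM⟩ := hbd (-f)
    exact ⟨M, fun y => by rw [abs_neg]; exact hM y⟩
  · intro f x
    dsimp only
    rw [hext]
    simp
  · intro y
    dsimp only
    have h1 : (-(1 : BoundedContinuousFunction X ℝ)) = 1 + const X (-2) := by
      ext z
      simp
      norm_num
    rw [h1, hadd, hnorm]
    norm_num
  · intro f c y
    dsimp only
    have h1 : (-(f + const X c)) = -f + const X (-c) := by
      ext z
      simp
      ring
    rw [h1, hadd]
    ring
  · intro f g y
    dsimp only
    have h1 : (-(f ⊔ g)) = (-f) ⊓ (-g) := by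
      ext z
      simp only [coe_neg, coe_sup, coe_inf, Pi.neg_apply, Pi.sup_apply, Pi.inf_apply]
      exact neg_sup _ _
    rw [h1, hinf]
    rw [neg_inf]
  · intro f c y
    dsimp only
    have h1 : (-(f ⊓ const X c)) = (-f) ⊔ const X (-c) := by
      ext z
      simp only [coe_neg, coe_inf, coe_sup, Pi.neg_apply, Pi.inf_apply, Pi.sup_apply,
        const_apply]
      exact neg_inf _ _
    rw [h1, hsupc]
    rw [neg_sup, neg_neg]

theorem packCtoB
    (h : ∃ u : BoundedContinuousFunction X ℝ → Y → ℝ,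
        (∀ f, LowerSemicontinuous (u f)) ∧
        (∀ f, ∃ M : ℝ, ∀ y, |u f y| ≤ M) ∧
        (∀ (f : BoundedContinuousFunction X ℝ) (x : X), u f x = f x) ∧
        (∀ y, u 1 y = 1) ∧
        (∀ (f : BoundedContinuousFunction X ℝ) (c : ℝ) (y : Y),
          u (f + BoundedContinuousFunction.const X c) y = u f y + c) ∧
        (∀ (f g : BoundedContinuousFunction X ℝ) (y : Y),
          u (f ⊔ g) y = max (u f y) (u g y)) ∧
        (∀ (f : BoundedContinuousFunction X ℝ) (c : ℝ) (y : Y),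
          u (f ⊓ BoundedContinuousFunction.const X c) y = min (u f y) c)) :
    (∃ u : BoundedContinuousFunction X ℝ → Y → ℝ,
        (∀ f, UpperSemicontinuous (u f)) ∧
        (∀ f, ∃ M : ℝ, ∀ y, |u f y| ≤ M) ∧
        (∀ (f : BoundedContinuousFunction X ℝ) (x : X), u f x = f x) ∧
        (∀ y, u 1 y = 1) ∧
        (∀ (f : BoundedContinuousFunction X ℝ) (c : ℝ) (y : Y),
          u (f + BoundedContinuousFunction.const X c) y = u f y + c) ∧
        (∀ (f g : BoundedContinuousFunction X ℝ) (y : Y),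
          u (f ⊓ g) y = min (u f y) (u g y)) ∧
        (∀ (f : BoundedContinuousFunction X ℝ) (c : ℝ) (y : Y),
          u (f ⊔ BoundedContinuousFunction.const X c) y = max (u f y) c)) := by
  obtain ⟨u, hlsc, hbd, hext, hnorm, hadd, hsup, hinfc⟩ := h
  refine ⟨fun f y => -(u (-f) y), fun f => neg_usc (hlsc (-f)), ?_, ?_, ?_, ?_, ?_, ?_⟩
  · intro f
    obtain ⟨M, hM⟩ := hbd (-f)
    exact ⟨M, fun y => by rw [abs_neg]; exact hM y⟩
  · intro f x
    dsimp only
    rw [hext]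
    simp
  · intro y
    dsimp only
    have h1 : (-(1 : BoundedContinuousFunction X ℝ)) = 1 + const X (-2) := by
      ext z
      simp
      norm_num
    rw [h1, hadd, hnorm]
    norm_num
  · intro f c y
    dsimp only
    have h1 : (-(f + const X c)) = -f + const X (-c) := by
      ext z
      simp
      ring
    rw [h1, hadd]
    ring
  · intro f g y
    dsimp only
    have h1 : (-(f ⊓ g)) = (-f) ⊔ (-g) := by
      ext z
      simp only [coe_neg, coe_sup, coe_inf, Pi.neg_apply, Pi.sup_apply, Pi.inf_apply]
      exact neg_inf _ _
    rw [h1, hsup]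
    rw [neg_sup]
  · intro f c y
    dsimp only
    have h1 : (-(f ⊔ const X c)) = (-f) ⊓ const X (-c) := by
      ext z
      simp only [coe_neg, coe_inf, coe_sup, Pi.neg_apply, Pi.inf_apply, Pi.sup_apply,
        const_apply]
      exact neg_sup _ _
    rw [h1, hinfc]
    rw [neg_inf, neg_neg]
end Transform

/-- for a subspace `X ⊆ Y`, the following are equivalent: (i) there is a lower
semicontinuous compact-valued map `r : Y → βX` with `r x = {η x}` for `x ∈ X`; (ii) there is a
normed, weakly additive extender `u : C*(X) → C*_usc(Y)` preserving min and weakly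
preserving max; (iii) there is a normed, weakly additive extender `u : C*(X) → C*_lsc(Y)`
preserving max and weakly preserving min. -/
theorem statement18 {Y : Type*} [TopologicalSpace Y] [T35Space Y] (X : Set Y) :
    ((∃ r : Y → Set (StoneCech X),
        (∀ y, (r y).Nonempty ∧ IsCompact (r y)) ∧
        (∀ U : Set (StoneCech X), IsOpen U → IsOpen {y | (r y ∩ U).Nonempty}) ∧
        (∀ x : X, r x = {stoneCechUnit x})) ↔
      (∃ u : BoundedContinuousFunction X ℝ → Y → ℝ,
        (∀ f, UpperSemicontinuous (u f)) ∧
        (∀ f, ∃ M : ℝ, ∀ y, |u f y| ≤ M) ∧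
        (∀ (f : BoundedContinuousFunction X ℝ) (x : X), u f x = f x) ∧
        (∀ y, u 1 y = 1) ∧
        (∀ (f : BoundedContinuousFunction X ℝ) (c : ℝ) (y : Y),
          u (f + BoundedContinuousFunction.const X c) y = u f y + c) ∧
        (∀ (f g : BoundedContinuousFunction X ℝ) (y : Y),
          u (f ⊓ g) y = min (u f y) (u g y)) ∧
        (∀ (f : BoundedContinuousFunction X ℝ) (c : ℝ) (y : Y),
          u (f ⊔ BoundedContinuousFunction.const X c) y = max (u f y) c))) ∧
    ((∃ r : Y → Set (StoneCech X),
        (∀ y, (r y).Nonempty ∧ IsCompact (r y)) ∧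
        (∀ U : Set (StoneCech X), IsOpen U → IsOpen {y | (r y ∩ U).Nonempty}) ∧
        (∀ x : X, r x = {stoneCechUnit x})) ↔
      (∃ u : BoundedContinuousFunction X ℝ → Y → ℝ,
        (∀ f, LowerSemicontinuous (u f)) ∧
        (∀ f, ∃ M : ℝ, ∀ y, |u f y| ≤ M) ∧
        (∀ (f : BoundedContinuousFunction X ℝ) (x : X), u f x = f x) ∧
        (∀ y, u 1 y = 1) ∧
        (∀ (f : BoundedContinuousFunction X ℝ) (c : ℝ) (y : Y),
          u (f + BoundedContinuousFunction.const X c) y = u f y + c) ∧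
        (∀ (f g : BoundedContinuousFunction X ℝ) (y : Y),
          u (f ⊔ g) y = max (u f y) (u g y)) ∧
        (∀ (f : BoundedContinuousFunction X ℝ) (c : ℝ) (y : Y),
          u (f ⊓ BoundedContinuousFunction.const X c) y = min (u f y) c))) := by
  constructor
  · exact ⟨fun h => dirA h, fun h => dirB h⟩
  · exact ⟨fun h => packBtoC (dirA h), fun h => dirB (packCtoB h)⟩
end

section
/- Let Y be a Tychonoff space and X ⊆ Y a nonempty compact connected subspace. Suppose there exists an extender u : C*(X) → C*_lsc(Y) with u(1_X) = 1_Y preserving both max and min, or an extender u : C*(X) → C*_usc(Y) with u(1_X) = 1_Y preserving both max and min. Then there exists an upper semicontinuous set-valued map r : Y → X whose values are nonempty compact connected subsets of X and such that r(x) = {x} for all x ∈ X. -/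
open Set

namespace Statement19Aux

open BoundedContinuousFunction

variable {Y : Type*} [TopologicalSpace Y] [T35Space Y]

/-- The key construction: given a "lattice-preserving" extender `u` for which the sets
`{y | 1 < u g y}` are open, the set-valued map
`r y = {x | ∀ g, 1 < u g y → 1 ≤ g x}` does the job. -/
lemma key (X : Set Y) (hXcp : IsCompact X) (hXcn : IsConnected X)
    (u : BoundedContinuousFunction X ℝ → Y → ℝ)
    (hopen : ∀ f, IsOpen {y | 1 < u f y})
    (hext : ∀ (f : BoundedContinuousFunction X ℝ) (x : X), u f x = f x)
    (hone : ∀ y, u 1 y = 1)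
    (hmax : ∀ (f g : BoundedContinuousFunction X ℝ) (y : Y),
      u (f ⊔ g) y = max (u f y) (u g y))
    (hmin : ∀ (f g : BoundedContinuousFunction X ℝ) (y : Y),
      u (f ⊓ g) y = min (u f y) (u g y)) :
    ∃ r : Y → Set X,
      (∀ y, (r y).Nonempty ∧ IsCompact (r y) ∧ IsConnected (r y)) ∧
      (∀ U : Set X, IsOpen U → IsOpen {y | r y ⊆ U}) ∧
      (∀ x : X, r x = {x}) := by
  haveI : CompactSpace X := isCompact_iff_compactSpace.mp hXcp
  haveI : ConnectedSpace X := Subtype.connectedSpace hXcn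
  haveI : Nonempty X := hXcn.nonempty.to_subtype
  set r : Y → Set X :=
    fun y => {x | ∀ g : BoundedContinuousFunction X ℝ, 1 < u g y → 1 ≤ g x} with hr
  -- each value is closed
  have hclosed : ∀ y, IsClosed (r y) := by
    intro y
    have : r y = ⋂ (g : BoundedContinuousFunction X ℝ) (_ : 1 < u g y), {x : X | 1 ≤ g x} := by
      ext x
      simp [hr]
    rw [this]
    exact isClosed_iInter fun g => isClosed_iInter fun _ =>
      isClosed_le continuous_const g.continuous
  -- each active constraint set is nonempty
  have hFne : ∀ (y : Y) (g : BoundedContinuousFunction X ℝ), 1 < u g y →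
      {x : X | 1 ≤ g x}.Nonempty := by
    intro y g hg
    by_contra hcon
    rw [Set.not_nonempty_iff_eq_empty] at hcon
    have hgx : ∀ x : X, g x < 1 := by
      intro x
      by_contra hx
      exact absurd (eq_empty_iff_forall_notMem.mp hcon x) (by simpa using not_lt.mp hx)
    have hgi : g ⊓ 1 = g := by
      ext x
      simp only [BoundedContinuousFunction.coe_inf, Pi.inf_apply,
        BoundedContinuousFunction.coe_one, Pi.one_apply]
      exact inf_eq_left.mpr (hgx x).le
    have h1 := hmin g 1 y
    rw [hgi, hone] at h1
    have : u g y ≤ 1 := by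
      rw [h1]
      exact min_le_right _ _
    linarith
  -- nonemptiness of the values
  have hne : ∀ y, (r y).Nonempty := by
    intro y
    by_cases hS : ∃ g : BoundedContinuousFunction X ℝ, 1 < u g y
    · haveI : Nonempty {g : BoundedContinuousFunction X ℝ // 1 < u g y} :=
        ⟨⟨hS.choose, hS.choose_spec⟩⟩
      have hreq : r y =
          ⋂ (i : {g : BoundedContinuousFunction X ℝ // 1 < u g y}), {x : X | 1 ≤ i.1 x} := by
        ext x
        constructor
        · intro hx
          exact mem_iInter.mpr fun i => hx i.1 i.2
        · intro hx g hg
          exact mem_iInter.mp hx ⟨g, hg⟩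
      rw [hreq]
      apply IsCompact.nonempty_iInter_of_directed_nonempty_isCompact_isClosed
      · rintro ⟨g₁, h₁⟩ ⟨g₂, h₂⟩
        refine ⟨⟨g₁ ⊓ g₂, by rw [hmin]; exact lt_min h₁ h₂⟩, ?_, ?_⟩
        · intro x hx
          simp only [mem_setOf_eq, BoundedContinuousFunction.coe_inf, Pi.inf_apply] at hx ⊢
          exact le_trans hx inf_le_left
        · intro x hx
          simp only [mem_setOf_eq, BoundedContinuousFunction.coe_inf, Pi.inf_apply] at hx ⊢
          exact le_trans hx inf_le_right
      · exact fun i => hFne y i.1 i.2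
      · exact fun i => (isClosed_le continuous_const i.1.continuous).isCompact
      · exact fun i => isClosed_le continuous_const i.1.continuous
    · push_neg at hS
      have : r y = univ := eq_univ_of_forall fun x g hg => absurd hg (not_lt.mpr (hS g))
      rw [this]
      exact univ_nonempty
  -- values on X are singletons
  have hpoint : ∀ x : X, r (x : Y) = {x} := by
    intro x
    apply Subset.antisymm
    · intro x' hx'
      by_contra hne'
      have hxx : x' ≠ x := by simpa using hne'
      obtain ⟨q, hq0, hq1, hq01⟩ := exists_continuous_zero_one_of_isClosed
        (isClosed_singleton (x := x')) (isClosed_singleton (x := x))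
        (disjoint_singleton.mpr hxx)
      set g : BoundedContinuousFunction X ℝ := (2 : ℝ) • mkOfCompact q with hgdef
      have hact : 1 < u g (x : Y) := by
        rw [hext g x]
        have : g x = 2 * q x := by
          simp [hgdef]
        rw [this, hq1 (mem_singleton x)]
        norm_num
      have h1 := hx' g hact
      have : g x' = 0 := by
        have : g x' = 2 * q x' := by simp [hgdef]
        rw [this, hq0 (mem_singleton x')]
        norm_num
      rw [this] at h1
      linarith
    · intro x'' hx''
      rw [mem_singleton_iff] at hx''
      subst hx''
      intro g hg
      rw [hext g x''] at hg
      exact hg.le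
  -- upper semicontinuity
  have husc : ∀ U : Set X, IsOpen U → IsOpen {y | r y ⊆ U} := by
    intro U hU
    rw [isOpen_iff_forall_mem_open]
    intro y₀ hy₀
    have hKc : IsCompact Uᶜ := hU.isClosed_compl.isCompact
    have hcover : Uᶜ ⊆
        ⋃ (i : {g : BoundedContinuousFunction X ℝ // 1 < u g y₀}), {x : X | i.1 x < 1} := by
      intro x hx
      have hxr : x ∉ r y₀ := fun h => hx (hy₀ h)
      simp only [hr, mem_setOf_eq, not_forall] at hxr
      obtain ⟨g, hg, hgx⟩ := hxr
      exact mem_iUnion.mpr ⟨⟨g, hg⟩, not_le.mp hgx⟩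
    obtain ⟨t, ht⟩ := hKc.elim_finite_subcover _
      (fun i => isOpen_lt i.1.continuous continuous_const) hcover
    refine ⟨⋂ i ∈ t, {y | 1 < u i.1 y}, ?_, isOpen_biInter_finset fun i _ => hopen i.1, ?_⟩
    · intro y hy x hx
      by_contra hxU
      have hmem := ht hxU
      simp only [mem_iUnion] at hmem
      obtain ⟨i, hit, hxi⟩ := hmem
      have hact : 1 < u i.1 y := mem_iInter₂.mp hy i hit
      exact absurd (hx i.1 hact) (not_le.mpr hxi)
    · exact mem_iInter₂.mpr fun i hi => i.2
  -- connectedness of the values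
  have hconn : ∀ y, IsConnected (r y) := by
    intro y
    refine ⟨hne y, ?_⟩
    by_cases hS : ∃ g : BoundedContinuousFunction X ℝ, 1 < u g y
    · obtain ⟨g, hg⟩ := hS
      rw [isPreconnected_iff_subset_of_fully_disjoint_closed (hclosed y)]
      intro A B hA hB hcov hdisj
      by_contra hcon
      push_neg at hcon
      obtain ⟨hnA, hnB⟩ := hcon
      obtain ⟨a, ha, haA⟩ := not_subset.mp hnA
      obtain ⟨b, hb, hbB⟩ := not_subset.mp hnB
      have haB : a ∈ B := (hcov ha).resolve_left haA
      have hbA : b ∈ A := (hcov hb).resolve_right hbB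
      obtain ⟨q, hqA, hqB, hq01⟩ := exists_continuous_zero_one_of_isClosed hA hB hdisj
      set c : ℝ := ‖g‖ + 1 with hcdef
      have hc : ∀ x : X, g x ≤ c := by
        intro x
        have := g.norm_coe_le_norm x
        have h2 : g x ≤ |g x| := le_abs_self _
        rw [Real.norm_eq_abs] at this
        linarith
      set h₁ : BoundedContinuousFunction X ℝ :=
        mkOfCompact ⟨fun x => c * min (2 * (1 - q x)) 1, by fun_prop⟩ with h1def
      set h₂ : BoundedContinuousFunction X ℝ :=
        mkOfCompact ⟨fun x => c * min (2 * q x) 1, by fun_prop⟩ with h2def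
      have h₁app : ∀ x : X, h₁ x = c * min (2 * (1 - q x)) 1 := fun x => rfl
      have h₂app : ∀ x : X, h₂ x = c * min (2 * q x) 1 := fun x => rfl
      have hkey : (g ⊓ h₁) ⊔ (g ⊓ h₂) = g := by
        ext x
        simp only [BoundedContinuousFunction.coe_sup, BoundedContinuousFunction.coe_inf,
          Pi.sup_apply, Pi.inf_apply]
        have hx01 := hq01 x
        rcases le_total (q x) 2⁻¹ with hq | hq
        · have hmin1 : (1 : ℝ) ≤ 2 * (1 - q x) := by linarith
          have h1x : h₁ x = c := by
            rw [h₁app x, min_eq_right hmin1, mul_one]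
          refine le_antisymm (sup_le inf_le_left inf_le_left) ?_
          calc g x = g x ⊓ h₁ x := (inf_eq_left.mpr (by rw [h1x]; exact hc x)).symm
            _ ≤ _ := le_sup_left
        · have hmin1 : (1 : ℝ) ≤ 2 * q x := by linarith
          have h2x : h₂ x = c := by
            rw [h₂app x, min_eq_right hmin1, mul_one]
          refine le_antisymm (sup_le inf_le_left inf_le_left) ?_
          calc g x = g x ⊓ h₂ x := (inf_eq_left.mpr (by rw [h2x]; exact hc x)).symm
            _ ≤ _ := le_sup_right
      have hsplit : 1 < max (u (g ⊓ h₁) y) (u (g ⊓ h₂) y) := by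
        rw [← hmax, hkey]
        exact hg
      rcases lt_max_iff.mp hsplit with hcase | hcase
      · -- then `r y ⊆ {x | 1 ≤ (g ⊓ h₁) x}`, contradicting `a ∈ B`
        have h1a := ha (g ⊓ h₁) hcase
        have hq1a : q a = 1 := hqB haB
        have : (g ⊓ h₁) a ≤ h₁ a := by
          simp only [BoundedContinuousFunction.coe_inf, Pi.inf_apply]
          exact inf_le_right
        have hh1a : h₁ a = 0 := by
          rw [h₁app a, hq1a]
          norm_num
        rw [hh1a] at this
        linarith
      · have h2b := hb (g ⊓ h₂) hcase
        have hq0b : q b = 0 := hqA hbA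
        have : (g ⊓ h₂) b ≤ h₂ b := by
          simp only [BoundedContinuousFunction.coe_inf, Pi.inf_apply]
          exact inf_le_right
        have hh2b : h₂ b = 0 := by
          rw [h₂app b, hq0b]
          norm_num
        rw [hh2b] at this
        linarith
    · push_neg at hS
      have : r y = univ := eq_univ_of_forall fun x g hg => absurd hg (not_lt.mpr (hS g))
      rw [this]
      exact isPreconnected_univ
  exact ⟨r, fun y => ⟨hne y, (hclosed y).isCompact, hconn y⟩, husc, hpoint⟩

end Statement19Aux

/-- let `X ⊆ Y` be a nonempty compact connected subspace. If there is an
extender `u : C*(X) → C*_lsc(Y)` with `u 1 = 1` preserving both max and min, or an extender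
`u : C*(X) → C*_usc(Y)` with `u 1 = 1` preserving both max and min, then there is an upper
semicontinuous map `r : Y → X` with nonempty compact connected values and `r x = {x}` for
all `x ∈ X`. -/
theorem statement19 {Y : Type*} [TopologicalSpace Y] [T35Space Y] (X : Set Y)
    (hXcp : IsCompact X) (hXcn : IsConnected X)
    (hu : (∃ u : BoundedContinuousFunction X ℝ → Y → ℝ,
        (∀ f, LowerSemicontinuous (u f)) ∧
        (∀ f, ∃ M : ℝ, ∀ y, |u f y| ≤ M) ∧
        (∀ (f : BoundedContinuousFunction X ℝ) (x : X), u f x = f x) ∧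
        (∀ y, u 1 y = 1) ∧
        (∀ (f g : BoundedContinuousFunction X ℝ) (y : Y),
          u (f ⊔ g) y = max (u f y) (u g y)) ∧
        (∀ (f g : BoundedContinuousFunction X ℝ) (y : Y),
          u (f ⊓ g) y = min (u f y) (u g y))) ∨
      (∃ u : BoundedContinuousFunction X ℝ → Y → ℝ,
        (∀ f, UpperSemicontinuous (u f)) ∧
        (∀ f, ∃ M : ℝ, ∀ y, |u f y| ≤ M) ∧
        (∀ (f : BoundedContinuousFunction X ℝ) (x : X), u f x = f x) ∧
        (∀ y, u 1 y = 1) ∧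
        (∀ (f g : BoundedContinuousFunction X ℝ) (y : Y),
          u (f ⊔ g) y = max (u f y) (u g y)) ∧
        (∀ (f g : BoundedContinuousFunction X ℝ) (y : Y),
          u (f ⊓ g) y = min (u f y) (u g y)))) :
    ∃ r : Y → Set X,
      (∀ y, (r y).Nonempty ∧ IsCompact (r y) ∧ IsConnected (r y)) ∧
      (∀ U : Set X, IsOpen U → IsOpen {y | r y ⊆ U}) ∧
      (∀ x : X, r x = {x}) := by
  rcases hu with ⟨u, hlsc, _, hext, hone, hmax, hmin⟩ | ⟨u, husc, _, hext, hone, hmax, hmin⟩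
  · apply Statement19Aux.key X hXcp hXcn u ?_ hext hone hmax hmin
    intro f
    have : {y | 1 < u f y} = u f ⁻¹' Ioi 1 := rfl
    rw [this]
    exact (hlsc f).isOpen_preimage 1
  · -- reduce the usc case to the "open superlevel" case via `f ↦ 2 - f`
    set c2 : BoundedContinuousFunction X ℝ := BoundedContinuousFunction.const X (2 : ℝ) with hc2
    have hc2app : ∀ x : X, c2 x = 2 := fun x => rfl
    set u' : BoundedContinuousFunction X ℝ → Y → ℝ := fun f y => 2 - u (c2 - f) y with hu'
    have hflip : ∀ f g : BoundedContinuousFunction X ℝ, c2 - (f ⊔ g) = (c2 - f) ⊓ (c2 - g) := by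
      intro f g
      ext x
      simp only [BoundedContinuousFunction.coe_sub, BoundedContinuousFunction.coe_sup,
        BoundedContinuousFunction.coe_inf, Pi.sub_apply, Pi.sup_apply, Pi.inf_apply, hc2app]
      rcases le_total (f x) (g x) with h | h
      · rw [sup_eq_right.mpr h, inf_eq_right.mpr (by linarith)]
      · rw [sup_eq_left.mpr h, inf_eq_left.mpr (by linarith)]
    have hflip' : ∀ f g : BoundedContinuousFunction X ℝ, c2 - (f ⊓ g) = (c2 - f) ⊔ (c2 - g) := by
      intro f g
      ext x
      simp only [BoundedContinuousFunction.coe_sub, BoundedContinuousFunction.coe_sup,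
        BoundedContinuousFunction.coe_inf, Pi.sub_apply, Pi.sup_apply, Pi.inf_apply, hc2app]
      rcases le_total (f x) (g x) with h | h
      · rw [inf_eq_left.mpr h, sup_eq_left.mpr (by linarith)]
      · rw [inf_eq_right.mpr h, sup_eq_right.mpr (by linarith)]
    apply Statement19Aux.key X hXcp hXcn u'
    · intro f
      have : {y | 1 < u' f y} = u (c2 - f) ⁻¹' Iio 1 := by
        ext y
        simp only [hu', mem_setOf_eq, mem_preimage, mem_Iio]
        constructor <;> intro h <;> linarith
      rw [this]
      exact (husc (c2 - f)).isOpen_preimage 1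
    · intro f x
      have : (c2 - f) x = 2 - f x := by
        simp [BoundedContinuousFunction.coe_sub, hc2app]
      rw [hu']
      simp only
      rw [hext (c2 - f) x, this]
      ring
    · intro y
      have h21 : c2 - 1 = (1 : BoundedContinuousFunction X ℝ) := by
        ext x
        simp only [BoundedContinuousFunction.coe_sub, Pi.sub_apply,
          BoundedContinuousFunction.coe_one, Pi.one_apply, hc2app]
        norm_num
      rw [hu']
      simp only
      rw [h21, hone y]
      norm_num
    · intro f g y
      rw [hu']
      simp only
      rw [hflip, hmin]
      rcases le_total (u (c2 - f) y) (u (c2 - g) y) with h | h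
      · rw [min_eq_left h, max_eq_left (by linarith)]
      · rw [min_eq_right h, max_eq_right (by linarith)]
    · intro f g y
      rw [hu']
      simp only
      rw [hflip', hmax]
      rcases le_total (u (c2 - f) y) (u (c2 - g) y) with h | h
      · rw [max_eq_right h, min_eq_right (by linarith)]
      · rw [max_eq_left h, min_eq_left (by linarith)]
end
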